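/- arXiv:1507.08140 — 4 statements merged into one kernel-verified Lean document; each statement's English description precedes it below -/
import Mathlib

section
/- Under the Erdős–Rényi model ER(p) (all p_{ij} = p, q = 1−p), the degree variance V = (1/n) Σ_i (D_i − D̄)² satisfies E[V] = (n−1)(n−2)pq/n and Var[V] = 2(n−1)(n−2)² p q (1 + (n−6)pq)/n³. -/
open MeasureTheory ProbabilityTheory Finset

section Generic
variable {Ω ι : Type*} [MeasurableSpace Ω] {μ : Measure Ω} [IsProbabilityMeasure μ]
  [Fintype ι] {X : ι → Ω → ℝ}

lemma bdd_integrable {f : Ω → ℝ} (hm : AEStronglyMeasurable f μ) {C : ℝ}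
    (h : ∀ ω, |f ω| ≤ C) : Integrable f μ :=
  (integrable_const C).mono' hm (Filter.Eventually.of_forall fun ω => by
    simpa [Real.norm_eq_abs] using h ω)

variable (hind : iIndepFun X μ)
  (hXm : ∀ e, Measurable (X e)) (hXb : ∀ e ω, |X e ω| ≤ 1)

include hXm hXb in
lemma X_int (e : ι) (k : ℕ) : Integrable (fun ω => (X e ω) ^ k) μ :=
  bdd_integrable ((hXm e).pow_const k).aestronglyMeasurable
    (fun ω => by rw [abs_pow]; exact pow_le_one₀ (abs_nonneg _) (hXb e ω))

include hind hXm hXb in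
lemma pair_int (e f : ι) (k l : ℕ) (hef : e ≠ f) :
    ∫ ω, (X e ω) ^ k * (X f ω) ^ l ∂μ
      = (∫ ω, (X e ω) ^ k ∂μ) * ∫ ω, (X f ω) ^ l ∂μ := by
  have hi : IndepFun (fun ω => (X e ω) ^ k) (fun ω => (X f ω) ^ l) μ :=
    (hind.indepFun hef).comp (measurable_id.pow_const k) (measurable_id.pow_const l)
  exact hi.integral_mul_eq_mul_integral (X_int hXm hXb e k).aestronglyMeasurable (X_int hXm hXb f l).aestronglyMeasurable

include hind hXm hXb in
lemma single_zero (h1 : ∀ e, ∫ ω, X e ω ∂μ = 0) (x a b c : ι)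
    (hxa : x ≠ a) (hxb : x ≠ b) (hxc : x ≠ c) :
    ∫ ω, X x ω * (X a ω * X b ω * X c ω) ∂μ = 0 := by
  classical
  have hdisj : Disjoint ({x} : Finset ι) {a, b, c} := by
    simp only [Finset.disjoint_left, Finset.mem_singleton, Finset.mem_insert]
    rintro y rfl
    simp [hxa, hxb, hxc]
  have hbase := hind.indepFun_finset {x} {a, b, c} hdisj hXm
  have hma : a ∈ ({a, b, c} : Finset ι) := by simp
  have hmb : b ∈ ({a, b, c} : Finset ι) := by simp
  have hmc : c ∈ ({a, b, c} : Finset ι) := by simp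
  have hi : IndepFun (X x) (fun ω => X a ω * X b ω * X c ω) μ := by
    have := hbase.comp (φ := fun v : (({x} : Finset ι) → ℝ) => v ⟨x, by simp⟩)
      (ψ := fun v : (({a, b, c} : Finset ι) → ℝ) => v ⟨a, hma⟩ * v ⟨b, hmb⟩ * v ⟨c, hmc⟩)
      (measurable_pi_apply (X := fun _ : ({x} : Finset ι) => ℝ) _)
      (by fun_prop)
    exact this
  have hint1 : Integrable (X x) μ := by
    simpa using X_int (μ := μ) hXm hXb x 1
  have hint3 : Integrable (fun ω => X a ω * X b ω * X c ω) μ := by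
    refine bdd_integrable (((hXm a).mul (hXm b)).mul (hXm c)).aestronglyMeasurable
      (C := 1) fun ω => ?_
    rw [abs_mul, abs_mul]
    exact mul_le_one₀ (mul_le_one₀ (hXb a ω) (abs_nonneg _) (hXb b ω))
      (abs_nonneg _) (hXb c ω)
  have h2 := hi.integral_mul_eq_mul_integral hint1.aestronglyMeasurable hint3.aestronglyMeasurable
  rw [show (fun ω => X x ω * (X a ω * X b ω * X c ω))
      = (X x * fun ω => X a ω * X b ω * X c ω) from rfl, h2, h1 x, zero_mul]

include hind hXm hXb in
lemma four_point [DecidableEq ι] {s m4 : ℝ} (h1 : ∀ e, ∫ ω, X e ω ∂μ = 0)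
    (h2 : ∀ e, ∫ ω, (X e ω) ^ 2 ∂μ = s)
    (h4 : ∀ e, ∫ ω, (X e ω) ^ 4 ∂μ = m4) (e f g h : ι) :
    ∫ ω, X e ω * X f ω * X g ω * X h ω ∂μ =
      (if e = f ∧ g = h ∧ e = g then m4 - 3 * s ^ 2 else 0)
      + s ^ 2 * ((if e = f ∧ g = h then 1 else 0) + (if e = g ∧ f = h then 1 else 0)
          + (if e = h ∧ f = g then 1 else 0)) := by
  by_cases hef : e = f
  · subst hef
    by_cases hgh : g = h
    · subst hgh
      by_cases heg : e = g
      · subst heg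
        rw [show (fun ω => X e ω * X e ω * X e ω * X e ω)
            = (fun ω => (X e ω) ^ 4) from funext fun ω => by ring]
        simp [h4 e]
        ring
      · rw [show (fun ω => X e ω * X e ω * X g ω * X g ω)
            = (fun ω => (X e ω) ^ 2 * (X g ω) ^ 2) from funext fun ω => by ring,
          pair_int hind hXm hXb e g 2 2 heg, h2 e, h2 g]
        have hne : ¬ (e = g ∧ e = g) := fun hc => heg hc.1
        simp [heg, hne]
        ring
    · have hLHS : ∫ ω, X e ω * X e ω * X g ω * X h ω ∂μ = 0 := by
        by_cases hge : g = e
        · subst hge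
          rw [show (fun ω => X g ω * X g ω * X g ω * X h ω)
              = (fun ω => X h ω * (X g ω * X g ω * X g ω)) from funext fun ω => by ring]
          exact single_zero hind hXm hXb h1 h g g g (Ne.symm hgh) (Ne.symm hgh) (Ne.symm hgh)
        · rw [show (fun ω => X e ω * X e ω * X g ω * X h ω)
              = (fun ω => X g ω * (X e ω * X e ω * X h ω)) from funext fun ω => by ring]
          exact single_zero hind hXm hXb h1 g e e h hge hge hgh
      rw [hLHS]
      have c1 : ¬ (e = e ∧ g = h ∧ e = g) := fun hc => hgh hc.2.1
      have c2 : ¬ (e = e ∧ g = h) := fun hc => hgh hc.2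
      have c3 : ¬ (e = g ∧ e = h) := fun hc => hgh (hc.1 ▸ hc.2)
      have c4 : ¬ (e = h ∧ e = g) := fun hc => hgh (hc.2 ▸ hc.1)
      simp [hgh, c3, c4]
  · by_cases h3 : e = g ∧ f = h
    · obtain ⟨rfl, rfl⟩ := h3
      rw [show (fun ω => X e ω * X f ω * X e ω * X f ω)
          = (fun ω => (X e ω) ^ 2 * (X f ω) ^ 2) from funext fun ω => by ring,
        pair_int hind hXm hXb e f 2 2 hef, h2 e, h2 f]
      have c1 : ¬ (e = f ∧ e = f ∧ e = e) := fun hc => hef hc.1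
      have c2 : ¬ (e = f ∧ f = e) := fun hc => hef hc.1
      simp [c1, c2, hef]
      ring
    · by_cases h5 : e = h ∧ f = g
      · obtain ⟨rfl, rfl⟩ := h5
        rw [show (fun ω => X e ω * X f ω * X f ω * X e ω)
            = (fun ω => (X e ω) ^ 2 * (X f ω) ^ 2) from funext fun ω => by ring,
          pair_int hind hXm hXb e f 2 2 hef, h2 e, h2 f]
        have c1 : ¬ (e = f ∧ f = e ∧ e = f) := fun hc => hef hc.1
        have c2 : ¬ (e = f ∧ f = e) := fun hc => hef hc.1
        have c3 : ¬ (e = f ∧ f = f) := fun hc => hef hc.1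
        simp [c1, c2, c3, hef]
        ring
      · have hLHS : ∫ ω, X e ω * X f ω * X g ω * X h ω ∂μ = 0 := by
          by_cases heg : e = g
          · have hfh : f ≠ h := fun hc => h3 ⟨heg, hc⟩
            rw [show (fun ω => X e ω * X f ω * X g ω * X h ω)
                = (fun ω => X f ω * (X e ω * X g ω * X h ω)) from funext fun ω => by ring]
            exact single_zero hind hXm hXb h1 f e g h (Ne.symm hef) (heg ▸ Ne.symm hef) hfh
          · by_cases heh : e = h
            · have hfg : f ≠ g := fun hc => h5 ⟨heh, hc⟩
              rw [show (fun ω => X e ω * X f ω * X g ω * X h ω)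
                  = (fun ω => X f ω * (X e ω * X g ω * X h ω)) from funext fun ω => by ring]
              exact single_zero hind hXm hXb h1 f e g h (Ne.symm hef) hfg (heh ▸ Ne.symm hef)
            · rw [show (fun ω => X e ω * X f ω * X g ω * X h ω)
                  = (fun ω => X e ω * (X f ω * X g ω * X h ω)) from funext fun ω => by ring]
              exact single_zero hind hXm hXb h1 e f g h hef heg heh
        rw [hLHS]
        have c1 : ¬ (e = f ∧ g = h ∧ e = g) := fun hc => hef hc.1
        have c2 : ¬ (e = f ∧ g = h) := fun hc => hef hc.1
        simp [c1, c2, h3, h5]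

lemma comb {ι : Type*} [Fintype ι] [DecidableEq ι] (A : ι → ι → ℝ)
    (hA : ∀ e f, A e f = A f e) (c1 c2 : ℝ) :
    ∑ e, ∑ g, ∑ f, ∑ h, (A e f * A g h) *
        ((if e = f ∧ g = h ∧ e = g then c1 else 0)
          + c2 * ((if e = f ∧ g = h then 1 else 0) + (if e = g ∧ f = h then 1 else 0)
              + (if e = h ∧ f = g then 1 else 0)))
      = c1 * (∑ e, (A e e) ^ 2)
        + c2 * ((∑ e, A e e) ^ 2 + 2 * ∑ e, ∑ f, (A e f) ^ 2) := by
  have expand : ∀ e g f h : ι, (A e f * A g h) *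
        ((if e = f ∧ g = h ∧ e = g then c1 else 0)
          + c2 * ((if e = f ∧ g = h then 1 else 0) + (if e = g ∧ f = h then 1 else 0)
              + (if e = h ∧ f = g then 1 else 0)))
      = (if e = f ∧ g = h ∧ e = g then c1 * (A e f * A g h) else 0)
        + ((if e = f ∧ g = h then c2 * (A e f * A g h) else 0)
          + (if e = g ∧ f = h then c2 * (A e f * A g h) else 0)
          + (if e = h ∧ f = g then c2 * (A e f * A g h) else 0)) := by
    intro e g f h
    have hiff : (e = f ∧ g = h ∧ e = g) ↔ ((e = f ∧ g = h) ∧ (e = g ∧ f = h)) := by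
      constructor
      · rintro ⟨rfl, rfl, rfl⟩; exact ⟨⟨rfl, rfl⟩, rfl, rfl⟩
      · rintro ⟨⟨h5, h6⟩, h7, h8⟩; exact ⟨h5, h6, h7⟩
    rw [if_congr hiff rfl rfl]
    by_cases h1 : e = f <;> by_cases h2 : g = h <;> by_cases h3 : e = g <;>
      by_cases h4 : f = h <;> by_cases h5 : e = h <;> by_cases h6 : f = g <;>
      simp_all <;> ring
  simp only [expand, Finset.sum_add_distrib]
  congr 1
  · -- piece 1
    have step : ∀ e, (∑ g, ∑ f, ∑ h, if e = f ∧ g = h ∧ e = g then c1 * (A e f * A g h) else 0)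
        = c1 * (A e e) ^ 2 := by
      intro e
      have inner : ∀ g f, (∑ h, if e = f ∧ g = h ∧ e = g then c1 * (A e f * A g h) else 0)
          = if e = f ∧ e = g then c1 * (A e f * A g g) else 0 := by
        intro g f
        by_cases hc : e = f ∧ e = g
        · obtain ⟨rfl, rfl⟩ := hc
          simp
        · rw [Finset.sum_eq_zero, if_neg hc]
          intro h _
          rw [if_neg]
          rintro ⟨a, b, c⟩; exact hc ⟨a, c⟩
      simp only [inner]
      have inner2 : ∀ g, (∑ f, if e = f ∧ e = g then c1 * (A e f * A g g) else 0)
          = if e = g then c1 * (A e e * A g g) else 0 := by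
        intro g
        by_cases hc : e = g
        · subst hc; simp
        · rw [Finset.sum_eq_zero, if_neg hc]
          intro f _; rw [if_neg]; rintro ⟨a, b⟩; exact hc b
      simp only [inner2]
      simp [sq]
    simp only [step]
    rw [Finset.mul_sum]
  · -- pieces 2,3,4
    have p2 : ∀ e, (∑ g, ∑ f, ∑ h, if e = f ∧ g = h then c2 * (A e f * A g h) else 0)
        = c2 * A e e * ∑ g, A g g := by
      intro e
      have inner : ∀ g f, (∑ h, if e = f ∧ g = h then c2 * (A e f * A g h) else 0)
          = if e = f then c2 * (A e f * A g g) else 0 := by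
        intro g f
        by_cases hc : e = f
        · subst hc; simp
        · rw [Finset.sum_eq_zero, if_neg hc]
          intro h _; rw [if_neg]; rintro ⟨a, b⟩; exact hc a
      simp only [inner]
      have inner2 : ∀ g, (∑ f, if e = f then c2 * (A e f * A g g) else 0)
          = c2 * (A e e * A g g) := by
        intro g; simp
      simp only [inner2]
      calc ∑ g, c2 * (A e e * A g g) = ∑ g, c2 * A e e * A g g :=
            Finset.sum_congr rfl fun g _ => by ring
        _ = c2 * A e e * ∑ g, A g g := (Finset.mul_sum _ _ _).symm
    have p3 : ∀ e, (∑ g, ∑ f, ∑ h, if e = g ∧ f = h then c2 * (A e f * A g h) else 0)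
        = c2 * ∑ f, (A e f) ^ 2 := by
      intro e
      have inner : ∀ g f, (∑ h, if e = g ∧ f = h then c2 * (A e f * A g h) else 0)
          = if e = g then c2 * (A e f * A g f) else 0 := by
        intro g f
        by_cases hc : e = g
        · subst hc; simp
        · rw [Finset.sum_eq_zero, if_neg hc]
          intro h _; rw [if_neg]; rintro ⟨a, b⟩; exact hc a
      simp only [inner]
      have inner2 : ∀ g, (∑ f, if e = g then c2 * (A e f * A g f) else 0)
          = if e = g then ∑ f, c2 * (A e f * A g f) else 0 := by
        intro g; by_cases hc : e = g <;> simp [hc]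
      simp only [inner2]
      rw [Finset.sum_ite_eq univ e (fun g => ∑ f, c2 * (A e f * A g f))]
      simp only [Finset.mem_univ, if_true]
      rw [Finset.mul_sum]
      exact Finset.sum_congr rfl fun f _ => by ring
    have p4 : ∀ e, (∑ g, ∑ f, ∑ h, if e = h ∧ f = g then c2 * (A e f * A g h) else 0)
        = c2 * ∑ f, (A e f) ^ 2 := by
      intro e
      have inner : ∀ g f, (∑ h, if e = h ∧ f = g then c2 * (A e f * A g h) else 0)
          = if f = g then c2 * (A e f * A g e) else 0 := by
        intro g f
        by_cases hc : f = g
        · subst hc; simp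
        · rw [Finset.sum_eq_zero, if_neg hc]
          intro h _; rw [if_neg]; rintro ⟨a, b⟩; exact hc b
      simp only [inner]
      have swap : (∑ g, ∑ f, if f = g then c2 * (A e f * A g e) else 0)
          = ∑ f, ∑ g, if f = g then c2 * (A e f * A g e) else 0 := Finset.sum_comm
      rw [swap]
      have inner2 : ∀ f, (∑ g, if f = g then c2 * (A e f * A g e) else 0)
          = c2 * (A e f * A f e) := by intro f; simp
      simp only [inner2]
      rw [Finset.mul_sum]
      refine Finset.sum_congr rfl fun f _ => ?_
      rw [hA f e]; ring
    simp only [p2, p3, p4]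
    have q2 : ∑ e, (c2 * A e e * ∑ g, A g g) = c2 * ((∑ e, A e e) * ∑ g, A g g) := by
      calc ∑ e, (c2 * A e e * ∑ g, A g g) = ∑ e, c2 * (A e e * ∑ g, A g g) :=
            Finset.sum_congr rfl fun e _ => by ring
        _ = c2 * ∑ e, (A e e * ∑ g, A g g) := (Finset.mul_sum _ _ _).symm
        _ = c2 * ((∑ e, A e e) * ∑ g, A g g) := by rw [← Finset.sum_mul]
    have q3 : ∑ e, (c2 * ∑ f, (A e f) ^ 2) = c2 * ∑ e, ∑ f, (A e f) ^ 2 :=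
      (Finset.mul_sum _ _ _).symm
    rw [q2, q3]
    ring

include hind hXm hXb in
lemma qf_mean [DecidableEq ι] {s : ℝ} (h1 : ∀ e, ∫ ω, X e ω ∂μ = 0)
    (h2 : ∀ e, ∫ ω, (X e ω) ^ 2 ∂μ = s) (A : ι → ι → ℝ) :
    ∫ ω, (∑ e, ∑ f, A e f * (X e ω * X f ω)) ∂μ = s * ∑ e, A e e := by
  have hprod_int : ∀ e f : ι, Integrable (fun ω => X e ω * X f ω) μ := fun e f =>
    bdd_integrable ((hXm e).mul (hXm f)).aestronglyMeasurable (C := 1) fun ω => by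
      rw [abs_mul]; exact mul_le_one₀ (hXb e ω) (abs_nonneg _) (hXb f ω)
  have hint : ∀ e f : ι, Integrable (fun ω => A e f * (X e ω * X f ω)) μ := fun e f =>
    (hprod_int e f).const_mul _
  rw [integral_finset_sum _ fun e _ => integrable_finset_sum _ fun f _ => hint e f]
  have step : ∀ e : ι, ∫ ω, (∑ f, A e f * (X e ω * X f ω)) ∂μ = A e e * s := by
    intro e
    rw [integral_finset_sum _ fun f _ => hint e f]
    have term : ∀ f : ι, ∫ ω, A e f * (X e ω * X f ω) ∂μ
        = if e = f then A e e * s else 0 := by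
      intro f
      rw [integral_const_mul]
      by_cases hef : e = f
      · subst hef
        rw [show (fun ω => X e ω * X e ω) = fun ω => (X e ω) ^ 2 from
            funext fun ω => by ring, h2 e, if_pos rfl]
      · have hp := pair_int hind hXm hXb e f 1 1 hef
        simp only [pow_one] at hp
        rw [hp, h1 e, zero_mul, mul_zero, if_neg hef]
    simp only [term]
    simp
  simp only [step]
  rw [← Finset.sum_mul, mul_comm]

include hind hXm hXb in
lemma qf_sq [DecidableEq ι] {s m4 : ℝ} (h1 : ∀ e, ∫ ω, X e ω ∂μ = 0)
    (h2 : ∀ e, ∫ ω, (X e ω) ^ 2 ∂μ = s) (h4 : ∀ e, ∫ ω, (X e ω) ^ 4 ∂μ = m4)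
    (A : ι → ι → ℝ) (hA : ∀ e f, A e f = A f e) :
    ∫ ω, (∑ e, ∑ f, A e f * (X e ω * X f ω)) ^ 2 ∂μ
      = (m4 - 3 * s ^ 2) * (∑ e, (A e e) ^ 2)
        + s ^ 2 * ((∑ e, A e e) ^ 2 + 2 * ∑ e, ∑ f, (A e f) ^ 2) := by
  have key : (fun ω => (∑ e, ∑ f, A e f * (X e ω * X f ω)) ^ 2)
      = fun ω => ∑ e, ∑ g, ∑ f, ∑ h, (A e f * A g h)
          * (X e ω * X f ω * X g ω * X h ω) := by
    funext ω
    rw [sq, Finset.sum_mul_sum]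
    refine Finset.sum_congr rfl fun e _ => ?_
    refine Finset.sum_congr rfl fun g _ => ?_
    rw [Finset.sum_mul_sum]
    exact Finset.sum_congr rfl fun f _ => Finset.sum_congr rfl fun h _ => by ring
  rw [key]
  have hint : ∀ e f g h : ι, Integrable
      (fun ω => (A e f * A g h) * (X e ω * X f ω * X g ω * X h ω)) μ := by
    intro e f g h
    refine (bdd_integrable
      ((((hXm e).mul (hXm f)).mul (hXm g)).mul (hXm h)).aestronglyMeasurable
      (C := 1) fun ω => ?_).const_mul _
    rw [Pi.mul_apply, Pi.mul_apply, Pi.mul_apply, abs_mul, abs_mul, abs_mul]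
    exact mul_le_one₀ (mul_le_one₀ (mul_le_one₀ (hXb e ω) (abs_nonneg _) (hXb f ω))
      (abs_nonneg _) (hXb g ω)) (abs_nonneg _) (hXb h ω)
  rw [integral_finset_sum _ fun e _ => (integrable_finset_sum _ fun g _ =>
    integrable_finset_sum _ fun f _ => integrable_finset_sum _ fun h _ => hint e f g h)]
  have step : ∀ e, ∫ ω, (∑ g, ∑ f, ∑ h, (A e f * A g h)
        * (X e ω * X f ω * X g ω * X h ω)) ∂μ
      = ∑ g, ∑ f, ∑ h, (A e f * A g h) *
          ((if e = f ∧ g = h ∧ e = g then m4 - 3 * s ^ 2 else 0)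
            + s ^ 2 * ((if e = f ∧ g = h then 1 else 0) + (if e = g ∧ f = h then 1 else 0)
                + (if e = h ∧ f = g then 1 else 0))) := by
    intro e
    rw [integral_finset_sum _ fun g _ => integrable_finset_sum _ fun f _ =>
      integrable_finset_sum _ fun h _ => hint e f g h]
    refine Finset.sum_congr rfl fun g _ => ?_
    rw [integral_finset_sum _ fun f _ => integrable_finset_sum _ fun h _ => hint e f g h]
    refine Finset.sum_congr rfl fun f _ => ?_
    rw [integral_finset_sum _ fun h _ => hint e f g h]
    refine Finset.sum_congr rfl fun h _ => ?_
    rw [integral_const_mul, four_point hind hXm hXb h1 h2 h4 e f g h]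
  simp only [step]
  exact comb A hA (m4 - 3 * s ^ 2) (s ^ 2)

include hind hXm hXb in
lemma qf_var [DecidableEq ι] {s m4 : ℝ} (h1 : ∀ e, ∫ ω, X e ω ∂μ = 0)
    (h2 : ∀ e, ∫ ω, (X e ω) ^ 2 ∂μ = s) (h4 : ∀ e, ∫ ω, (X e ω) ^ 4 ∂μ = m4)
    (A : ι → ι → ℝ) (hA : ∀ e f, A e f = A f e) :
    variance (fun ω => ∑ e, ∑ f, A e f * (X e ω * X f ω)) μ
      = (m4 - 3 * s ^ 2) * (∑ e, (A e e) ^ 2)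
        + s ^ 2 * ((∑ e, A e e) ^ 2 + 2 * ∑ e, ∑ f, (A e f) ^ 2)
        - (s * ∑ e, A e e) ^ 2 := by
  have hmeasQ : Measurable (fun ω => ∑ e, ∑ f, A e f * (X e ω * X f ω)) :=
    Finset.measurable_sum _ fun e _ => Finset.measurable_sum _ fun f _ =>
      ((hXm e).mul (hXm f)).const_mul _
  have hbdd : ∀ ω, ‖∑ e, ∑ f, A e f * (X e ω * X f ω)‖ ≤ ∑ e, ∑ f, |A e f| := by
    intro ω
    rw [Real.norm_eq_abs]
    refine (Finset.abs_sum_le_sum_abs _ _).trans (Finset.sum_le_sum fun e _ => ?_)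
    refine (Finset.abs_sum_le_sum_abs _ _).trans (Finset.sum_le_sum fun f _ => ?_)
    rw [abs_mul]
    refine mul_le_of_le_one_right (abs_nonneg _) ?_
    rw [abs_mul]
    exact mul_le_one₀ (hXb e ω) (abs_nonneg _) (hXb f ω)
  have hmem : MemLp (fun ω => ∑ e, ∑ f, A e f * (X e ω * X f ω)) 2 μ :=
    (memLp_top_of_bound hmeasQ.aestronglyMeasurable _
      (Filter.Eventually.of_forall hbdd)).mono_exponent le_top
  rw [variance_eq_sub hmem]
  simp only [Pi.pow_apply]
  rw [qf_sq hind hXm hXb h1 h2 h4 A hA, qf_mean hind hXm hXb h1 h2 A]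

end Generic


lemma edge_sum_contain (i : Fin n) (h : Fin n → ℝ) :
    ∑ e : {e : Fin n × Fin n // e.1 < e.2},
        (if i = e.1.1 then h e.1.2 else if i = e.1.2 then h e.1.1 else 0)
      = ∑ j ∈ univ.filter (fun j => j ≠ i), h j := by
  classical
  have hsplit : ∀ e : {e : Fin n × Fin n // e.1 < e.2},
      (if i = e.1.1 then h e.1.2 else if i = e.1.2 then h e.1.1 else 0)
        = (if i = e.1.1 then h e.1.2 else 0) + (if i = e.1.2 then h e.1.1 else 0) := by
    intro e
    have hne : (e : Fin n × Fin n).1 ≠ (e : Fin n × Fin n).2 := ne_of_lt e.2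
    by_cases h1 : i = (e : Fin n × Fin n).1
    · have h2 : ¬ i = (e : Fin n × Fin n).2 := fun hc => hne (h1.symm.trans hc)
      rw [if_pos h1, if_pos h1, if_neg h2, add_zero]
    · rw [if_neg h1, if_neg h1, zero_add]
  simp only [hsplit, Finset.sum_add_distrib]
  have piece1 : (∑ e : {e : Fin n × Fin n // e.1 < e.2}, if i = e.1.1 then h e.1.2 else 0)
      = ∑ j ∈ univ.filter (fun j => i < j), h j := by
    rw [← Finset.sum_filter]
    refine Finset.sum_bij' (i := fun e _ => e.1.2) (j := fun j hj =>
      ⟨(i, j), by simpa using (Finset.mem_filter.mp hj).2⟩) ?_ ?_ ?_ ?_ ?_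
    · intro e he
      simp only [Finset.mem_filter, Finset.mem_univ, true_and] at he ⊢
      exact he ▸ e.2
    · intro j hj
      simp
    · intro e he
      simp only [Finset.mem_filter, Finset.mem_univ, true_and] at he
      exact Subtype.ext (Prod.ext he rfl)
    · intro j hj
      rfl
    · intro e he
      rfl
  have piece2 : (∑ e : {e : Fin n × Fin n // e.1 < e.2}, if i = e.1.2 then h e.1.1 else 0)
      = ∑ j ∈ univ.filter (fun j => j < i), h j := by
    rw [← Finset.sum_filter]
    refine Finset.sum_bij' (i := fun e _ => e.1.1) (j := fun j hj =>
      ⟨(j, i), by simpa using (Finset.mem_filter.mp hj).2⟩) ?_ ?_ ?_ ?_ ?_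
    · intro e he
      simp only [Finset.mem_filter, Finset.mem_univ, true_and] at he ⊢
      exact he ▸ e.2
    · intro j hj
      simp
    · intro e he
      simp only [Finset.mem_filter, Finset.mem_univ, true_and] at he
      exact Subtype.ext (Prod.ext rfl he)
    · intro j hj
      rfl
    · intro e he
      rfl
  rw [piece1, piece2]
  rw [← Finset.sum_filter_add_sum_filter_not (univ.filter (fun j => j ≠ i)) (fun j => i < j)]
  congr 1
  · congr 1
    ext j
    simp only [Finset.mem_filter, Finset.mem_univ, true_and, ne_eq, Fin.lt_def,
      Fin.ext_iff]
    omega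
  · congr 1
    ext j
    simp only [Finset.mem_filter, Finset.mem_univ, true_and, ne_eq, Fin.lt_def,
      Fin.ext_iff]
    omega

def rv {n : ℕ} (i : Fin n) (e : {e : Fin n × Fin n // e.1 < e.2}) : ℝ :=
  if i = e.1.1 ∨ i = e.1.2 then 1 else 0

lemma rv01 {n : ℕ} (i : Fin n) (e : {e : Fin n × Fin n // e.1 < e.2}) :
    rv i e = 0 ∨ rv i e = 1 := by unfold rv; split <;> simp

lemma rv_sq {n : ℕ} (i : Fin n) (e : {e : Fin n × Fin n // e.1 < e.2}) :
    rv i e * rv i e = rv i e := by rcases rv01 i e with h | h <;> rw [h] <;> ring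

lemma sum_rv_vert {n : ℕ} (e : {e : Fin n × Fin n // e.1 < e.2}) :
    ∑ i, rv i e = 2 := by
  have hne : (e : Fin n × Fin n).1 ≠ (e : Fin n × Fin n).2 := ne_of_lt e.2
  have hsplit : ∀ i : Fin n, rv i e
      = (if i = (e : Fin n × Fin n).1 then (1:ℝ) else 0)
        + (if i = (e : Fin n × Fin n).2 then (1:ℝ) else 0) := by
    intro i
    unfold rv
    by_cases h1 : i = (e : Fin n × Fin n).1
    · have h2 : ¬ i = (e : Fin n × Fin n).2 := fun hc => hne (h1.symm.trans hc)
      simp [h1, h2, hne]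
    · by_cases h2 : i = (e : Fin n × Fin n).2 <;> simp [h1, h2, hne, hne.symm]
  simp only [hsplit, Finset.sum_add_distrib]
  rw [Finset.sum_ite_eq' univ ((e : Fin n × Fin n).1) (fun _ => (1:ℝ)),
    Finset.sum_ite_eq' univ ((e : Fin n × Fin n).2) (fun _ => (1:ℝ))]
  norm_num

lemma sum_rv_edge {n : ℕ} (i : Fin n) :
    ∑ e : {e : Fin n × Fin n // e.1 < e.2}, rv i e = (n : ℝ) - 1 := by
  have key := edge_sum_contain i (fun _ => (1:ℝ))
  have hcong : ∀ e : {e : Fin n × Fin n // e.1 < e.2},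
      (if i = (e : Fin n × Fin n).1 then (1:ℝ) else if i = (e : Fin n × Fin n).2 then 1 else 0)
        = rv i e := by
    intro e
    unfold rv
    by_cases h1 : i = (e : Fin n × Fin n).1
    · simp [h1]
    · by_cases h2 : i = (e : Fin n × Fin n).2 <;> simp [h1, h2]
  rw [Finset.sum_congr rfl (fun e _ => hcong e)] at key
  rw [key, Finset.sum_const, nsmul_eq_mul, mul_one]
  have : (univ.filter (fun j => j ≠ i)).card = n - 1 := by
    rw [Finset.filter_ne', Finset.card_erase_of_mem (Finset.mem_univ i), Finset.card_univ,
      Fintype.card_fin]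
  rw [this, Nat.cast_sub i.pos]
  norm_num

lemma sum_rvrv {n : ℕ} (i k : Fin n) (hik : i ≠ k) :
    ∑ e : {e : Fin n × Fin n // e.1 < e.2}, rv i e * rv k e = 1 := by
  have key := edge_sum_contain i (fun j => if k = j then (1:ℝ) else 0)
  have hcong : ∀ e : {e : Fin n × Fin n // e.1 < e.2},
      (if i = (e : Fin n × Fin n).1 then (if k = (e : Fin n × Fin n).2 then (1:ℝ) else 0)
        else if i = (e : Fin n × Fin n).2 then (if k = (e : Fin n × Fin n).1 then (1:ℝ) else 0)
        else 0)
        = rv i e * rv k e := by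
    intro e
    unfold rv
    by_cases h1 : i = (e : Fin n × Fin n).1
    · have hk1 : ¬ k = (e : Fin n × Fin n).1 := fun hc => hik (h1.trans hc.symm)
      by_cases hk2 : k = (e : Fin n × Fin n).2 <;> simp [h1, hk1, hk2]
    · by_cases h2 : i = (e : Fin n × Fin n).2
      · have hk2 : ¬ k = (e : Fin n × Fin n).2 := fun hc => hik (h2.trans hc.symm)
        have hne : (e : Fin n × Fin n).1 ≠ (e : Fin n × Fin n).2 := ne_of_lt e.2
        by_cases hk1 : k = (e : Fin n × Fin n).1 <;> simp [h1, h2, hk1, hk2, hne, hne.symm]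
      · simp [h1, h2]
  rw [Finset.sum_congr rfl (fun e _ => hcong e)] at key
  rw [key, Finset.sum_ite_eq (univ.filter (fun j => j ≠ i)) k (fun _ => (1:ℝ)),
    if_pos (by simp [hik.symm])]

lemma sum_one_edge {n : ℕ} :
    ∑ _e : {e : Fin n × Fin n // e.1 < e.2}, (1:ℝ) = n * ((n : ℝ) - 1) / 2 := by
  have h1 : ∑ e : {e : Fin n × Fin n // e.1 < e.2}, ∑ i, rv i e
      = ∑ _e : {e : Fin n × Fin n // e.1 < e.2}, (2:ℝ) :=
    Finset.sum_congr rfl fun e _ => sum_rv_vert e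
  rw [Finset.sum_comm] at h1
  have h2 : ∑ i : Fin n, ∑ e : {e : Fin n × Fin n // e.1 < e.2}, rv i e
      = (n : ℝ) * ((n:ℝ) - 1) := by
    rw [Finset.sum_congr rfl (fun i _ => sum_rv_edge i), Finset.sum_const, Finset.card_univ,
      Fintype.card_fin, nsmul_eq_mul]
  rw [h2] at h1
  have h3 : ∑ _e : {e : Fin n × Fin n // e.1 < e.2}, (2:ℝ)
      = 2 * ∑ _e : {e : Fin n × Fin n // e.1 < e.2}, (1:ℝ) := by
    rw [Finset.sum_const, Finset.sum_const, nsmul_eq_mul, nsmul_eq_mul]; ring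
  rw [h3] at h1
  linarith

noncomputable def Amat {n : ℕ} (e f : {e : Fin n × Fin n // e.1 < e.2}) : ℝ :=
  (1 / (n : ℝ)) * ∑ i, (rv i e - 2 / n) * (rv i f - 2 / n)

lemma Amat_symm {n : ℕ} (e f : {e : Fin n × Fin n // e.1 < e.2}) :
    Amat e f = Amat f e := by
  unfold Amat
  exact congrArg _ (Finset.sum_congr rfl fun i _ => by ring)

lemma sum_const_edge {n : ℕ} (c : ℝ) :
    ∑ _e : {e : Fin n × Fin n // e.1 < e.2}, c = (n : ℝ) * ((n : ℝ) - 1) / 2 * c := by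
  have h := sum_one_edge (n := n)
  rw [Finset.sum_const] at h ⊢
  rw [nsmul_eq_mul] at h ⊢
  rw [mul_one] at h
  rw [h]

lemma Amat_diag {n : ℕ} (e : {e : Fin n × Fin n // e.1 < e.2}) :
    Amat e e = (1 / (n : ℝ)) * (2 * (1 - 4 / n) + n * (4 / (n : ℝ) ^ 2)) := by
  unfold Amat
  congr 1
  have hpt : ∀ i : Fin n, (rv i e - 2 / n) * (rv i e - 2 / n)
      = rv i e * (1 - 4 / n) + 4 / (n : ℝ) ^ 2 := by
    intro i
    rcases rv01 i e with h | h <;> rw [h] <;> ring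
  rw [Finset.sum_congr rfl fun i _ => hpt i, Finset.sum_add_distrib, ← Finset.sum_mul,
    sum_rv_vert e, Finset.sum_const, Finset.card_univ, Fintype.card_fin, nsmul_eq_mul]

lemma Amat_off {n : ℕ} (e f : {e : Fin n × Fin n // e.1 < e.2}) :
    Amat e f = (1 / (n : ℝ)) * ((∑ i, rv i e * rv i f) - 8 / n + (n : ℝ) * (4 / (n : ℝ) ^ 2)) := by
  unfold Amat
  congr 1
  have hpt : ∀ i : Fin n, (rv i e - 2 / n) * (rv i f - 2 / n)
      = rv i e * rv i f - (2 / n) * rv i e - (2 / n) * rv i f + 4 / (n : ℝ) ^ 2 := by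
    intro i; ring
  rw [Finset.sum_congr rfl fun i _ => hpt i]
  rw [Finset.sum_add_distrib, Finset.sum_sub_distrib, Finset.sum_sub_distrib,
    ← Finset.mul_sum, ← Finset.mul_sum, sum_rv_vert e, sum_rv_vert f,
    Finset.sum_const, Finset.card_univ, Fintype.card_fin, nsmul_eq_mul]
  ring

lemma sum_rvrv_full {n : ℕ} (i k : Fin n) :
    ∑ e : {e : Fin n × Fin n // e.1 < e.2}, rv i e * rv k e
      = if i = k then (n : ℝ) - 1 else 1 := by
  by_cases hik : i = k
  · subst hik
    rw [if_pos rfl, Finset.sum_congr rfl fun e _ => rv_sq i e]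
    exact sum_rv_edge i
  · rw [if_neg hik]
    exact sum_rvrv i k hik

lemma sum_cc {n : ℕ} :
    ∑ e : {e : Fin n × Fin n // e.1 < e.2}, ∑ f : {e : Fin n × Fin n // e.1 < e.2},
        (∑ i, rv i e * rv i f)
      = (n : ℝ) * (((n : ℝ) - 1) * ((n : ℝ) - 1)) := by
  have swap1 : ∀ e : {e : Fin n × Fin n // e.1 < e.2},
      ∑ f : {e : Fin n × Fin n // e.1 < e.2}, (∑ i, rv i e * rv i f)
        = ∑ i, ∑ f : {e : Fin n × Fin n // e.1 < e.2}, rv i e * rv i f := fun e =>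
    Finset.sum_comm
  rw [Finset.sum_congr rfl fun e _ => swap1 e, Finset.sum_comm]
  have inner : ∀ i : Fin n,
      (∑ e : {e : Fin n × Fin n // e.1 < e.2}, ∑ f : {e : Fin n × Fin n // e.1 < e.2},
        rv i e * rv i f) = ((n : ℝ) - 1) * ((n : ℝ) - 1) := by
    intro i
    rw [← Finset.sum_mul_sum, sum_rv_edge i]
  rw [Finset.sum_congr rfl fun i _ => inner i, Finset.sum_const, Finset.card_univ,
    Fintype.card_fin, nsmul_eq_mul]

lemma sum_cc_sq {n : ℕ} :
    ∑ e : {e : Fin n × Fin n // e.1 < e.2}, ∑ f : {e : Fin n × Fin n // e.1 < e.2},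
        (∑ i, rv i e * rv i f) ^ 2
      = (n : ℝ) * (((n : ℝ) - 1) * ((n : ℝ) - 1) + (((n : ℝ) - 1) * 1 - 1) + 1) := by
  have expand : ∀ (e f : {e : Fin n × Fin n // e.1 < e.2}),
      (∑ i, rv i e * rv i f) ^ 2
        = ∑ i, ∑ k, (rv i e * rv k e) * (rv i f * rv k f) := by
    intro e f
    rw [sq, Finset.sum_mul_sum]
    exact Finset.sum_congr rfl fun i _ => Finset.sum_congr rfl fun k _ => by ring
  simp only [expand]
  -- swap the e,f sums inside the i,k sums
  have swap2 : (∑ e : {e : Fin n × Fin n // e.1 < e.2},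
        ∑ f : {e : Fin n × Fin n // e.1 < e.2}, ∑ i, ∑ k,
          (rv i e * rv k e) * (rv i f * rv k f))
      = ∑ i, ∑ k, ∑ e : {e : Fin n × Fin n // e.1 < e.2},
          ∑ f : {e : Fin n × Fin n // e.1 < e.2}, (rv i e * rv k e) * (rv i f * rv k f) := by
    calc ∑ e : {e : Fin n × Fin n // e.1 < e.2}, ∑ f : {e : Fin n × Fin n // e.1 < e.2},
          ∑ i, ∑ k, (rv i e * rv k e) * (rv i f * rv k f)
        = ∑ e : {e : Fin n × Fin n // e.1 < e.2}, ∑ i,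
            ∑ f : {e : Fin n × Fin n // e.1 < e.2}, ∑ k,
              (rv i e * rv k e) * (rv i f * rv k f) :=
          Finset.sum_congr rfl fun e _ => Finset.sum_comm
      _ = ∑ i, ∑ e : {e : Fin n × Fin n // e.1 < e.2},
            ∑ f : {e : Fin n × Fin n // e.1 < e.2}, ∑ k,
              (rv i e * rv k e) * (rv i f * rv k f) := Finset.sum_comm
      _ = ∑ i, ∑ e : {e : Fin n × Fin n // e.1 < e.2}, ∑ k,
            ∑ f : {e : Fin n × Fin n // e.1 < e.2},
              (rv i e * rv k e) * (rv i f * rv k f) :=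
          Finset.sum_congr rfl fun i _ => Finset.sum_congr rfl fun e _ => Finset.sum_comm
      _ = ∑ i, ∑ k, ∑ e : {e : Fin n × Fin n // e.1 < e.2},
            ∑ f : {e : Fin n × Fin n // e.1 < e.2},
              (rv i e * rv k e) * (rv i f * rv k f) :=
          Finset.sum_congr rfl fun i _ => Finset.sum_comm
  rw [swap2]
  have inner : ∀ i k : Fin n,
      (∑ e : {e : Fin n × Fin n // e.1 < e.2}, ∑ f : {e : Fin n × Fin n // e.1 < e.2},
        (rv i e * rv k e) * (rv i f * rv k f))
      = (if i = k then (n : ℝ) - 1 else 1) ^ 2 := by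
    intro i k
    rw [← Finset.sum_mul_sum, sum_rvrv_full i k, sq]
  simp only [inner]
  have inner2 : ∀ i : Fin n, (∑ k, (if i = k then (n : ℝ) - 1 else 1) ^ 2)
      = ((n : ℝ) - 1) * ((n : ℝ) - 1) + (((n : ℝ) - 1) * 1 - 1) + 1 := by
    intro i
    have hpt : ∀ k : Fin n, (if i = k then (n : ℝ) - 1 else 1) ^ 2
        = 1 + (if i = k then ((n : ℝ) - 1) ^ 2 - 1 else 0) := by
      intro k; by_cases h : i = k <;> simp [h]
    rw [Finset.sum_congr rfl fun k _ => hpt k, Finset.sum_add_distrib,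
      Finset.sum_ite_eq univ i (fun _ => ((n : ℝ) - 1) ^ 2 - 1), if_pos (Finset.mem_univ i),
      Finset.sum_const, Finset.card_univ, Fintype.card_fin, nsmul_eq_mul, mul_one]
    have hn1 : (1 : ℝ) ≤ (n : ℝ) := by
      have := i.pos
      exact_mod_cast this
    ring
  rw [Finset.sum_congr rfl fun i _ => inner2 i, Finset.sum_const, Finset.card_univ,
    Fintype.card_fin, nsmul_eq_mul]

lemma Y_pow_int {Ω : Type*} [MeasurableSpace Ω] (μ : Measure Ω) [IsProbabilityMeasure μ]
    (Yf : Ω → ℝ) (p : ℝ) (hm : Measurable Yf) (h01 : ∀ ω, Yf ω = 0 ∨ Yf ω = 1)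
    (hmean : ∫ ω, Yf ω ∂μ = p) (k : ℕ) :
    ∫ ω, (Yf ω - p) ^ k ∂μ = ((1 - p) ^ k - (-p) ^ k) * p + (-p) ^ k := by
  have hpt : (fun ω => (Yf ω - p) ^ k)
      = fun ω => ((1 - p) ^ k - (-p) ^ k) * Yf ω + (-p) ^ k :=
    funext fun ω => by rcases h01 ω with h | h <;> rw [h] <;> ring
  have hYint : Integrable Yf μ :=
    (integrable_const (1:ℝ)).mono' hm.aestronglyMeasurable
      (Filter.Eventually.of_forall fun ω => by
        rcases h01 ω with h | h <;> simp [h, Real.norm_eq_abs])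
  rw [hpt, integral_add (hYint.const_mul _) (integrable_const _), integral_const_mul,
    hmean, integral_const]
  simp [measure_univ]

set_option maxHeartbeats 1000000 in
/-- Moments of the degree variance under the Erdős–Rényi model ER(p). -/
theorem er_degree_variance_moments
    {Ω : Type*} [MeasurableSpace Ω] (μ : Measure Ω) [IsProbabilityMeasure μ]
    (n : ℕ) (Y : Fin n → Fin n → Ω → ℝ) (p : ℝ)
    (hYsym : ∀ i j, Y i j = Y j i) (hYdiag : ∀ i, Y i i = 0)
    (hp : 0 ≤ p ∧ p ≤ 1)
    (hmeas : ∀ i j, Measurable (Y i j))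
    (h01 : ∀ i j ω, Y i j ω = 0 ∨ Y i j ω = 1)
    (hmean : ∀ i j, i ≠ j → ∫ ω, Y i j ω ∂μ = p)
    (hindep : iIndepFun
      (fun e : {e : Fin n × Fin n // e.1 < e.2} => Y e.1.1 e.1.2) μ) :
    (∫ ω, (1 / (n : ℝ)) * ∑ i,
        ((∑ j ∈ univ.filter (fun j => j ≠ i), Y i j ω)
          - (1 / (n : ℝ)) * ∑ i', ∑ j ∈ univ.filter (fun j => j ≠ i'), Y i' j ω) ^ 2 ∂μ
      = ((n : ℝ) - 1) * ((n : ℝ) - 2) * p * (1 - p) / (n : ℝ))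
    ∧ variance (fun ω => (1 / (n : ℝ)) * ∑ i,
        ((∑ j ∈ univ.filter (fun j => j ≠ i), Y i j ω)
          - (1 / (n : ℝ)) * ∑ i', ∑ j ∈ univ.filter (fun j => j ≠ i'), Y i' j ω) ^ 2) μ
      = 2 * ((n : ℝ) - 1) * ((n : ℝ) - 2) ^ 2 * p * (1 - p)
          * (1 + ((n : ℝ) - 6) * p * (1 - p)) / (n : ℝ) ^ 3 := by
  classical
  by_cases hn0 : n = 0
  · subst hn0
    have hfun : (fun ω : Ω => (1 / ((0:ℕ) : ℝ)) * ∑ i : Fin 0,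
        ((∑ j ∈ univ.filter (fun j => j ≠ i), Y i j ω)
          - (1 / ((0:ℕ) : ℝ)) * ∑ i', ∑ j ∈ univ.filter (fun j => j ≠ i'), Y i' j ω) ^ 2)
        = (0 : Ω → ℝ) := by
      funext ω; simp
    constructor
    · rw [show (∫ ω, (1 / ((0:ℕ) : ℝ)) * ∑ i : Fin 0,
        ((∑ j ∈ univ.filter (fun j => j ≠ i), Y i j ω)
          - (1 / ((0:ℕ) : ℝ)) * ∑ i', ∑ j ∈ univ.filter (fun j => j ≠ i'), Y i' j ω) ^ 2 ∂μ)
        = ∫ ω, (0 : Ω → ℝ) ω ∂μ from by rw [← hfun]]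
      simp
    · rw [hfun, variance_zero]
      simp
  have hnpos : 0 < n := Nat.pos_of_ne_zero hn0
  have hn : (n : ℝ) ≠ 0 := Nat.cast_ne_zero.mpr hn0
  set X : {e : Fin n × Fin n // e.1 < e.2} → Ω → ℝ :=
    fun e ω => Y (e : Fin n × Fin n).1 (e : Fin n × Fin n).2 ω - p with hXdef
  have hedge_ne : ∀ e : {e : Fin n × Fin n // e.1 < e.2},
      (e : Fin n × Fin n).1 ≠ (e : Fin n × Fin n).2 := fun e => ne_of_lt e.2
  have hXm : ∀ e, Measurable (X e) := fun e => (hmeas _ _).sub measurable_const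
  have hXb : ∀ e ω, |X e ω| ≤ 1 := by
    intro e ω
    rcases h01 (e : Fin n × Fin n).1 (e : Fin n × Fin n).2 ω with h | h <;>
      · rw [show X e ω = Y (e : Fin n × Fin n).1 (e : Fin n × Fin n).2 ω - p from rfl, h, abs_le]
        constructor <;> linarith [hp.1, hp.2]
  have hindX : iIndepFun X μ := by
    have h := hindep.comp (g := fun _ (t : ℝ) => t - p)
      (fun _ => measurable_id.sub_const p)
    exact h
  have h1 : ∀ e, ∫ ω, X e ω ∂μ = 0 := by
    intro e
    have h := Y_pow_int μ (Y (e : Fin n × Fin n).1 (e : Fin n × Fin n).2) p (hmeas _ _)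
      (fun ω => h01 _ _ ω) (hmean _ _ (hedge_ne e)) 1
    simp only [pow_one] at h
    rw [show (fun ω => X e ω) = fun ω => Y (e : Fin n × Fin n).1 (e : Fin n × Fin n).2 ω - p
      from rfl, h]
    ring
  set sm : ℝ := ((1 - p) ^ 2 - (-p) ^ 2) * p + (-p) ^ 2 with hsdef
  set m4 : ℝ := ((1 - p) ^ 4 - (-p) ^ 4) * p + (-p) ^ 4 with hm4def
  have h2 : ∀ e, ∫ ω, (X e ω) ^ 2 ∂μ = sm := fun e =>
    Y_pow_int μ (Y (e : Fin n × Fin n).1 (e : Fin n × Fin n).2) p (hmeas _ _)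
      (fun ω => h01 _ _ ω) (hmean _ _ (hedge_ne e)) 2
  have h4 : ∀ e, ∫ ω, (X e ω) ^ 4 ∂μ = m4 := fun e =>
    Y_pow_int μ (Y (e : Fin n × Fin n).1 (e : Fin n × Fin n).2) p (hmeas _ _)
      (fun ω => h01 _ _ ω) (hmean _ _ (hedge_ne e)) 4
  -- the pointwise representation as a quadratic form
  have hrep : (fun ω => (1 / (n : ℝ)) * ∑ i,
        ((∑ j ∈ univ.filter (fun j => j ≠ i), Y i j ω)
          - (1 / (n : ℝ)) * ∑ i', ∑ j ∈ univ.filter (fun j => j ≠ i'), Y i' j ω) ^ 2)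
      = fun ω => ∑ e, ∑ f, Amat e f * (X e ω * X f ω) := by
    funext ω
    have hTi : ∀ i, ∑ j ∈ univ.filter (fun j => j ≠ i), Y i j ω
        = (∑ e, rv i e * X e ω) + ((n : ℝ) - 1) * p := by
      intro i
      have hsplit : ∑ j ∈ univ.filter (fun j => j ≠ i), Y i j ω
          = (∑ j ∈ univ.filter (fun j => j ≠ i), (Y i j ω - p))
            + (∑ _j ∈ univ.filter (fun j => j ≠ i), p) := by
        rw [← Finset.sum_add_distrib]
        exact Finset.sum_congr rfl fun j _ => by ring
      have hxe : ∑ j ∈ univ.filter (fun j => j ≠ i), (Y i j ω - p)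
          = ∑ e, rv i e * X e ω := by
        rw [← edge_sum_contain i (fun j => Y i j ω - p)]
        refine Finset.sum_congr rfl fun e _ => ?_
        unfold rv
        by_cases hc1 : i = (e : Fin n × Fin n).1
        · rw [if_pos hc1, if_pos (Or.inl hc1), one_mul,
            show X e ω = Y (e : Fin n × Fin n).1 (e : Fin n × Fin n).2 ω - p from rfl, hc1]
        · by_cases hc2 : i = (e : Fin n × Fin n).2
          · rw [if_neg hc1, if_pos hc2, if_pos (Or.inr hc2), one_mul,
              show X e ω = Y (e : Fin n × Fin n).1 (e : Fin n × Fin n).2 ω - p from rfl,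
              hYsym (e : Fin n × Fin n).1 (e : Fin n × Fin n).2, hc2]
          · rw [if_neg hc1, if_neg hc2, if_neg (by tauto), zero_mul]
      have hcardp : (∑ _j ∈ univ.filter (fun j => j ≠ i), p) = ((n : ℝ) - 1) * p := by
        rw [Finset.sum_const, nsmul_eq_mul]
        congr 1
        rw [Finset.filter_ne', Finset.card_erase_of_mem (Finset.mem_univ i),
          Finset.card_univ, Fintype.card_fin, Nat.cast_sub hnpos]
        norm_num
      rw [hsplit, hxe, hcardp]
    have hG : ∑ i', ∑ j ∈ univ.filter (fun j => j ≠ i'), Y i' j ω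
        = 2 * (∑ e, X e ω) + (n : ℝ) * (((n : ℝ) - 1) * p) := by
      rw [Finset.sum_congr rfl fun i _ => hTi i, Finset.sum_add_distrib]
      congr 1
      · rw [Finset.sum_comm]
        have hinner : ∀ e, (∑ i, rv i e * X e ω) = 2 * X e ω := fun e => by
          rw [← Finset.sum_mul, sum_rv_vert]
        rw [Finset.sum_congr rfl fun e _ => hinner e, ← Finset.mul_sum]
      · rw [Finset.sum_const, Finset.card_univ, Fintype.card_fin, nsmul_eq_mul]
    have hDi : ∀ i, (∑ j ∈ univ.filter (fun j => j ≠ i), Y i j ω)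
          - (1 / (n : ℝ)) * ∑ i', ∑ j ∈ univ.filter (fun j => j ≠ i'), Y i' j ω
        = ∑ e, (rv i e - 2 / (n : ℝ)) * X e ω := by
      intro i
      rw [hTi i, hG]
      have hexp : ∑ e, (rv i e - 2 / (n : ℝ)) * X e ω
          = (∑ e, rv i e * X e ω) - (2 / (n : ℝ)) * ∑ e, X e ω := by
        rw [Finset.mul_sum, ← Finset.sum_sub_distrib]
        exact Finset.sum_congr rfl fun e _ => by ring
      rw [hexp]
      field_simp
      ring
    calc (1 / (n : ℝ)) * ∑ i,
        ((∑ j ∈ univ.filter (fun j => j ≠ i), Y i j ω)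
          - (1 / (n : ℝ)) * ∑ i', ∑ j ∈ univ.filter (fun j => j ≠ i'), Y i' j ω) ^ 2
        = (1 / (n : ℝ)) * ∑ i, (∑ e, (rv i e - 2 / (n : ℝ)) * X e ω) ^ 2 := by
          rw [Finset.sum_congr rfl fun i _ => by rw [hDi i]]
      _ = (1 / (n : ℝ)) * ∑ i, ∑ e, ∑ f,
            ((rv i e - 2 / (n : ℝ)) * X e ω) * ((rv i f - 2 / (n : ℝ)) * X f ω) := by
          congr 1
          exact Finset.sum_congr rfl fun i _ => by rw [sq, Finset.sum_mul_sum]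
      _ = (1 / (n : ℝ)) * ∑ e, ∑ f, ∑ i,
            ((rv i e - 2 / (n : ℝ)) * X e ω) * ((rv i f - 2 / (n : ℝ)) * X f ω) := by
          congr 1
          calc ∑ i, ∑ e, ∑ f,
              ((rv i e - 2 / (n : ℝ)) * X e ω) * ((rv i f - 2 / (n : ℝ)) * X f ω)
              = ∑ e, ∑ i, ∑ f,
                ((rv i e - 2 / (n : ℝ)) * X e ω) * ((rv i f - 2 / (n : ℝ)) * X f ω) :=
              Finset.sum_comm
            _ = ∑ e, ∑ f, ∑ i,
                ((rv i e - 2 / (n : ℝ)) * X e ω) * ((rv i f - 2 / (n : ℝ)) * X f ω) :=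
              Finset.sum_congr rfl fun e _ => Finset.sum_comm
      _ = ∑ e, ∑ f, Amat e f * (X e ω * X f ω) := by
          rw [Finset.mul_sum]
          refine Finset.sum_congr rfl fun e _ => ?_
          rw [Finset.mul_sum]
          refine Finset.sum_congr rfl fun f _ => ?_
          unfold Amat
          have hip : ∑ i, ((rv i e - 2 / (n : ℝ)) * X e ω) * ((rv i f - 2 / (n : ℝ)) * X f ω)
              = (∑ i, (rv i e - 2 / (n : ℝ)) * (rv i f - 2 / (n : ℝ))) * (X e ω * X f ω) := by
            rw [Finset.sum_mul]
            exact Finset.sum_congr rfl fun i _ => by ring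
          rw [hip]
          ring
  have hdiag : (∑ e : {e : Fin n × Fin n // e.1 < e.2}, Amat e e)
      = (n : ℝ) * ((n : ℝ) - 1) / 2
        * ((1 / (n : ℝ)) * (2 * (1 - 4 / (n : ℝ)) + (n : ℝ) * (4 / (n : ℝ) ^ 2))) := by
    rw [Finset.sum_congr rfl fun e _ => Amat_diag e]
    exact sum_const_edge _
  constructor
  · rw [hrep, qf_mean hindX hXm hXb h1 h2 Amat, hdiag, hsdef]
    field_simp
    ring
  · rw [hrep, qf_var hindX hXm hXb h1 h2 h4 Amat Amat_symm]
    have hdiag2 : (∑ e : {e : Fin n × Fin n // e.1 < e.2}, (Amat e e) ^ 2)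
        = (n : ℝ) * ((n : ℝ) - 1) / 2
          * ((1 / (n : ℝ)) * (2 * (1 - 4 / (n : ℝ)) + (n : ℝ) * (4 / (n : ℝ) ^ 2))) ^ 2 := by
      rw [Finset.sum_congr rfl fun e _ => by rw [Amat_diag e]]
      exact sum_const_edge _
    have hT2 : (∑ e : {e : Fin n × Fin n // e.1 < e.2},
          ∑ f : {e : Fin n × Fin n // e.1 < e.2}, (Amat e f) ^ 2)
        = (1 / (n : ℝ)) ^ 2 * ((n : ℝ) * (((n : ℝ) - 1) * ((n : ℝ) - 1)
              + (((n : ℝ) - 1) * 1 - 1) + 1))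
          + (2 * (- 8 / (n : ℝ) + (n : ℝ) * (4 / (n : ℝ) ^ 2)) * (1 / (n : ℝ)) ^ 2)
              * ((n : ℝ) * (((n : ℝ) - 1) * ((n : ℝ) - 1)))
          + (n : ℝ) * ((n : ℝ) - 1) / 2 * ((n : ℝ) * ((n : ℝ) - 1) / 2
              * ((1 / (n : ℝ)) ^ 2 * (- 8 / (n : ℝ) + (n : ℝ) * (4 / (n : ℝ) ^ 2)) ^ 2)) := by
      have hA2 : ∀ e f : {e : Fin n × Fin n // e.1 < e.2}, (Amat e f) ^ 2
          = (1 / (n : ℝ)) ^ 2 * (∑ i, rv i e * rv i f) ^ 2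
            + (2 * (- 8 / (n : ℝ) + (n : ℝ) * (4 / (n : ℝ) ^ 2)) * (1 / (n : ℝ)) ^ 2)
                * (∑ i, rv i e * rv i f)
            + (1 / (n : ℝ)) ^ 2 * (- 8 / (n : ℝ) + (n : ℝ) * (4 / (n : ℝ) ^ 2)) ^ 2 := by
        intro e f
        rw [Amat_off e f]
        ring
      simp only [hA2, Finset.sum_add_distrib]
      congr 1
      · congr 1
        · -- c^2 part
          have : ∀ e : {e : Fin n × Fin n // e.1 < e.2},
              (∑ f : {e : Fin n × Fin n // e.1 < e.2},
                (1 / (n : ℝ)) ^ 2 * (∑ i, rv i e * rv i f) ^ 2)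
              = (1 / (n : ℝ)) ^ 2 * ∑ f : {e : Fin n × Fin n // e.1 < e.2},
                  (∑ i, rv i e * rv i f) ^ 2 := fun e => (Finset.mul_sum _ _ _).symm
          rw [Finset.sum_congr rfl fun e _ => this e, ← Finset.mul_sum, sum_cc_sq]
        · -- c part
          have : ∀ e : {e : Fin n × Fin n // e.1 < e.2},
              (∑ f : {e : Fin n × Fin n // e.1 < e.2},
                (2 * (- 8 / (n : ℝ) + (n : ℝ) * (4 / (n : ℝ) ^ 2)) * (1 / (n : ℝ)) ^ 2)
                  * (∑ i, rv i e * rv i f))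
              = (2 * (- 8 / (n : ℝ) + (n : ℝ) * (4 / (n : ℝ) ^ 2)) * (1 / (n : ℝ)) ^ 2)
                  * ∑ f : {e : Fin n × Fin n // e.1 < e.2},
                    (∑ i, rv i e * rv i f) := fun e => (Finset.mul_sum _ _ _).symm
          rw [Finset.sum_congr rfl fun e _ => this e, ← Finset.mul_sum, sum_cc]
      · -- constant part
        have : ∀ e : {e : Fin n × Fin n // e.1 < e.2},
            (∑ _f : {e : Fin n × Fin n // e.1 < e.2},
              (1 / (n : ℝ)) ^ 2 * (- 8 / (n : ℝ) + (n : ℝ) * (4 / (n : ℝ) ^ 2)) ^ 2)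
            = (n : ℝ) * ((n : ℝ) - 1) / 2
              * ((1 / (n : ℝ)) ^ 2 * (- 8 / (n : ℝ) + (n : ℝ) * (4 / (n : ℝ) ^ 2)) ^ 2) :=
          fun e => sum_const_edge _
        rw [Finset.sum_congr rfl fun e _ => this e]
        exact sum_const_edge _
    rw [hdiag, hdiag2, hT2, hsdef, hm4def]
    field_simp
    ring
end

section
/- Let Y_{ij}, 1 ≤ i < j ≤ n, be independent Bernoulli(p_{ij}), Ỹ_{ij} = Y_{ij} − p_{ij}, and W = (1/n) Σ_i (D_i − μ⁰_i)². Then the Hoeffding projections of W satisfy: P_{{ij}}W := E[W | Y_{ij}] − E[W] = (2/n) Ỹ_{ij} (1 − 2p_{ij} + Δ_i + Δ_j), and P_{{ij,ik}}W := E[W | Y_{ij}, Y_{ik}] − E[W | Y_{ij}] − E[W | Y_{ik}] + E[W] = (2/n) Ỹ_{ij} Ỹ_{ik}, where Δ_i = Σ_{j≠i} (p_{ij} − p⁰_{ij}). -/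
open MeasureTheory ProbabilityTheory Finset

section auxdefs
variable {Ω : Type*}

private def auxS (n : ℕ) (Y : Fin n → Fin n → Ω → ℝ) (p0 : Fin n → Fin n → ℝ)
    (r : Fin n) (ω : Ω) : ℝ :=
  (∑ l ∈ univ.filter (fun l => l ≠ r), Y r l ω) - ∑ l ∈ univ.filter (fun l => l ≠ r), p0 r l

private def auxD (n : ℕ) (p p0 : Fin n → Fin n → ℝ) (r : Fin n) : ℝ :=
  ∑ l ∈ univ.filter (fun l => l ≠ r), (p r l - p0 r l)

end auxdefs

private lemma aux_int {Ω : Type*} {m0 : MeasurableSpace Ω} {μ : Measure Ω} [IsProbabilityMeasure μ]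
    {f : Ω → ℝ} (hf : Measurable f) {C : ℝ} (hC : ∀ ω, |f ω| ≤ C) : Integrable f μ :=
  ⟨hf.aestronglyMeasurable, HasFiniteIntegral.of_bounded (C := C)
    (Filter.Eventually.of_forall (fun ω => by simpa [Real.norm_eq_abs] using hC ω))⟩

private lemma aux_condexp_sq {Ω : Type*} {m0 : MeasurableSpace Ω} {μ : Measure Ω}
    [IsProbabilityMeasure μ] {m mB : MeasurableSpace Ω} (hm : m ≤ m0) (hmB : mB ≤ m0)
    (hInd : ProbabilityTheory.Indep mB m μ)
    {A B : Ω → ℝ} (hA : Measurable[m] A) (hB : Measurable[mB] B)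
    {CA CB : ℝ} (hCA : ∀ ω, |A ω| ≤ CA) (hCB : ∀ ω, |B ω| ≤ CB) :
    (μ[(fun ω => (A ω + B ω)^2) | m] =ᵐ[μ]
      fun ω => (A ω)^2 + 2 * (A ω) * (∫ ω', B ω' ∂μ) + (∫ ω', (B ω')^2 ∂μ))
    ∧ (∫ ω, A ω * B ω ∂μ = (∫ ω, A ω ∂μ) * (∫ ω, B ω ∂μ))
    ∧ (∫ ω, (A ω + B ω)^2 ∂μ =
        (∫ ω, (A ω)^2 ∂μ) + 2 * (∫ ω, A ω ∂μ) * (∫ ω, B ω ∂μ) + (∫ ω, (B ω)^2 ∂μ)) := by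
  have hA0 : Measurable[m0] A := hA.mono hm le_rfl
  have hB0 : Measurable[m0] B := hB.mono hmB le_rfl
  have intA : Integrable A μ := aux_int hA0 hCA
  have intB : Integrable B μ := aux_int hB0 hCB
  have intA2 : Integrable (fun ω => (A ω)^2) μ :=
    aux_int (hA0.pow_const 2) (C := CA^2) (fun ω => by
      rw [abs_pow]; exact pow_le_pow_left₀ (abs_nonneg _) (hCA ω) 2)
  have intB2 : Integrable (fun ω => (B ω)^2) μ :=
    aux_int (hB0.pow_const 2) (C := CB^2) (fun ω => by
      rw [abs_pow]; exact pow_le_pow_left₀ (abs_nonneg _) (hCB ω) 2)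
  have intAB : Integrable (fun ω => A ω * B ω) μ :=
    aux_int (hA0.mul hB0) (C := CA * CB) (fun ω => by
      rw [abs_mul]
      exact mul_le_mul (hCA ω) (hCB ω) (abs_nonneg _) (le_trans (abs_nonneg _) (hCA ω)))
  have intS : Integrable (fun ω => (A ω + B ω)^2) μ :=
    aux_int ((hA0.add hB0).pow_const 2) (C := (CA + CB)^2) (fun ω => by
      rw [abs_pow]
      exact pow_le_pow_left₀ (abs_nonneg _)
        ((abs_add_le _ _).trans (add_le_add (hCA ω) (hCB ω))) 2)
  have h2AB : (fun ω => (2 * A ω) * B ω) = fun ω => 2 * (A ω * B ω) := by funext ω; ring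
  have int2AB : Integrable (fun ω => (2 * A ω) * B ω) μ := by
    rw [h2AB]; exact intAB.const_mul 2
  have hBc : μ[B|m] =ᵐ[μ] fun _ => ∫ ω', B ω' ∂μ :=
    condExp_indep_eq hmB hm hB.stronglyMeasurable hInd
  have hB2c : μ[(fun ω => (B ω)^2)|m] =ᵐ[μ] fun _ => ∫ ω', (B ω')^2 ∂μ :=
    condExp_indep_eq hmB hm ((hB.pow_const 2).stronglyMeasurable) hInd
  have hPull : μ[A * B|m] =ᵐ[μ] A * μ[B|m] :=
    condExp_mul_of_stronglyMeasurable_left hA.stronglyMeasurable intAB intB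
  have hPull2 : μ[(fun ω => 2 * A ω) * B|m] =ᵐ[μ] (fun ω => 2 * A ω) * μ[B|m] :=
    condExp_mul_of_stronglyMeasurable_left ((hA.const_mul 2).stronglyMeasurable) int2AB intB
  have hmul : ∫ ω, A ω * B ω ∂μ = (∫ ω, A ω ∂μ) * (∫ ω, B ω ∂μ) := by
    calc ∫ ω, A ω * B ω ∂μ = ∫ ω, (μ[A * B|m]) ω ∂μ :=
          (integral_condExp (f := A * B) hm).symm
      _ = ∫ ω, A ω * (∫ ω', B ω' ∂μ) ∂μ := by
          refine integral_congr_ae ?_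
          filter_upwards [hPull, hBc] with ω h1 h2
          rw [h1, Pi.mul_apply, h2]
      _ = (∫ ω, A ω ∂μ) * (∫ ω', B ω' ∂μ) := integral_mul_const _ _
  have hdec : (fun ω => (A ω + B ω)^2)
      = ((fun ω => (A ω)^2) + (fun ω => 2 * A ω) * B) + (fun ω => (B ω)^2) := by
    funext ω; simp only [Pi.add_apply, Pi.mul_apply]; ring
  have hce : μ[(fun ω => (A ω + B ω)^2) | m] =ᵐ[μ]
      fun ω => (A ω)^2 + 2 * (A ω) * (∫ ω', B ω' ∂μ) + (∫ ω', (B ω')^2 ∂μ) := by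
    rw [hdec]
    have int2AB' : Integrable ((fun ω => 2 * A ω) * B) μ := int2AB
    have h1 := condExp_add (μ := μ) (m := m)
      (f := (fun ω => (A ω)^2) + (fun ω => 2 * A ω) * B) (g := fun ω => (B ω)^2)
      (intA2.add int2AB') intB2
    have h2 := condExp_add (μ := μ) (m := m)
      (f := fun ω => (A ω)^2) (g := (fun ω => 2 * A ω) * B) intA2 int2AB'
    have h3 : μ[(fun ω => (A ω)^2)|m] = fun ω => (A ω)^2 :=
      condExp_of_stronglyMeasurable hm ((hA.pow_const 2).stronglyMeasurable) intA2
    filter_upwards [h1, h2, hPull2, hBc, hB2c] with ω e1 e2 e3 e4 e5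
    simp only [Pi.add_apply] at e1 e2 ⊢
    rw [e1, e2, e3, h3, e5]
    simp only [Pi.mul_apply, e4]
  refine ⟨hce, hmul, ?_⟩
  calc ∫ ω, (A ω + B ω)^2 ∂μ = ∫ ω, (μ[(fun ω' => (A ω' + B ω')^2)|m]) ω ∂μ :=
        (integral_condExp (f := fun ω' => (A ω' + B ω')^2) hm).symm
    _ = ∫ ω, ((A ω)^2 + 2 * (A ω) * (∫ ω', B ω' ∂μ) + (∫ ω', (B ω')^2 ∂μ)) ∂μ :=
        integral_congr_ae hce
    _ = (∫ ω, (A ω)^2 ∂μ) + 2 * (∫ ω, A ω ∂μ) * (∫ ω, B ω ∂μ) + (∫ ω, (B ω)^2 ∂μ) := by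
        have heq : (fun ω => 2 * A ω * (∫ ω', B ω' ∂μ))
            = fun ω => (2 * (∫ ω', B ω' ∂μ)) * A ω := funext fun ω => by ring
        have intAc : Integrable (fun ω => 2 * A ω * (∫ ω', B ω' ∂μ)) μ := by
          rw [heq]; exact intA.const_mul _
        have intf : Integrable (fun ω => A ω ^ 2 + 2 * A ω * (∫ ω', B ω' ∂μ)) μ :=
          intA2.add intAc
        rw [integral_add intf (integrable_const _),
          integral_add intA2 intAc, heq, integral_const_mul, integral_const]
        simp only [measure_univ, ENNReal.toReal_one, probReal_univ, smul_eq_mul, one_mul]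
        ring

private lemma aux_key {Ω : Type*} {m0 : MeasurableSpace Ω} {μ : Measure Ω}
    [IsProbabilityMeasure μ] {n : ℕ}
    (S : Fin n → Ω → ℝ) (Δ : Fin n → ℝ)
    {m' mB : MeasurableSpace Ω} (hm' : m' ≤ m0) (hmB : mB ≤ m0)
    (hInd : ProbabilityTheory.Indep mB m' μ)
    (A : Fin n → Ω → ℝ)
    (hAmeas : ∀ r, Measurable[m'] (A r))
    (hBmeas : ∀ r, Measurable[mB] (fun ω => S r ω - A r ω))
    (CA CB : Fin n → ℝ) (hCA : ∀ r ω, |A r ω| ≤ CA r) (hCB : ∀ r ω, |S r ω - A r ω| ≤ CB r)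
    (hA0 : ∀ r, ∫ ω, A r ω ∂μ = 0)
    (hSA : ∀ r, ∫ ω, (S r ω - A r ω) ∂μ = Δ r)
    (W : Ω → ℝ)
    (hW : W = fun ω => (1 / (n : ℝ)) * ∑ r, (S r ω) ^ 2) :
    μ[W | m'] =ᵐ[μ] fun ω => (1 / (n : ℝ)) * ∑ r,
      ((A r ω)^2 - (∫ ω', (A r ω')^2 ∂μ) + 2 * A r ω * Δ r + (∫ ω', (S r ω')^2 ∂μ)) := by
  have hSmeas : ∀ r, Measurable[m0] (S r) := by
    intro r
    have : S r = fun ω => A r ω + (S r ω - A r ω) := funext fun ω => by ring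
    rw [this]
    exact ((hAmeas r).mono hm' le_rfl).add ((hBmeas r).mono hmB le_rfl)
  have hSbd : ∀ r ω, |S r ω| ≤ CA r + CB r := by
    intro r ω
    have : S r ω = A r ω + (S r ω - A r ω) := by ring
    rw [this]
    exact (abs_add_le _ _).trans (add_le_add (hCA r ω) (hCB r ω))
  have intS2 : ∀ r, Integrable (fun ω => (S r ω)^2) μ := by
    intro r
    refine aux_int ((hSmeas r).pow_const 2) (C := (CA r + CB r)^2) (fun ω => ?_)
    rw [abs_pow]
    exact pow_le_pow_left₀ (abs_nonneg _) (hSbd r ω) 2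
  -- per-row conditional expectation
  have hrow : ∀ r : Fin n, μ[(fun ω => (S r ω)^2)|m'] =ᵐ[μ]
      fun ω => (A r ω)^2 - (∫ ω', (A r ω')^2 ∂μ) + 2 * A r ω * Δ r
        + (∫ ω', (S r ω')^2 ∂μ) := by
    intro r
    obtain ⟨hce, -, hint⟩ := aux_condexp_sq hm' hmB hInd (hAmeas r) (hBmeas r)
      (hCA r) (hCB r)
    have hps : (fun ω => (A r ω + (S r ω - A r ω))^2) = fun ω => (S r ω)^2 :=
      funext fun ω => by ring
    rw [hps] at hce hint
    have hB2 : ∫ ω', (S r ω' - A r ω')^2 ∂μ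
        = (∫ ω', (S r ω')^2 ∂μ) - (∫ ω', (A r ω')^2 ∂μ) := by
      rw [hint, hA0 r]; ring
    filter_upwards [hce] with ω h
    rw [h, hSA r, hB2]
    ring
  have hrow' : ∀ᵐ ω ∂μ, ∀ r : Fin n, (μ[(fun ω' => (S r ω')^2)|m']) ω =
      (A r ω)^2 - (∫ ω', (A r ω')^2 ∂μ) + 2 * A r ω * Δ r + (∫ ω', (S r ω')^2 ∂μ) :=
    ae_all_iff.2 hrow
  have hWs : W = (1 / (n : ℝ)) • (fun ω => ∑ r, (S r ω)^2) := by
    funext ω; rw [hW]; simp [smul_eq_mul]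
  have hF : (fun ω => ∑ r, (S r ω)^2) = ∑ r, (fun ω => (S r ω)^2) := by
    funext ω; rw [Finset.sum_apply]
  have hsmul : μ[W|m'] =ᵐ[μ] (1 / (n : ℝ)) • μ[(fun ω => ∑ r, (S r ω)^2)|m'] := by
    rw [hWs]; exact condExp_smul _ _ _
  have hsum : μ[(fun ω => ∑ r, (S r ω)^2)|m']
      =ᵐ[μ] ∑ r, μ[(fun ω => (S r ω)^2)|m'] := by
    rw [hF]; exact condExp_finsetSum (fun r _ => intS2 r) _
  filter_upwards [hsmul, hsum, hrow'] with ω e1 e2 e3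
  rw [e1, Pi.smul_apply, e2, smul_eq_mul, Finset.sum_apply]
  congr 1
  exact Finset.sum_congr rfl fun r _ => e3 r

private lemma aux_comap_pair {Ω : Type*} (f g : Ω → ℝ) :
    MeasurableSpace.comap (fun ω => (f ω, g ω)) inferInstance
      = MeasurableSpace.comap f inferInstance ⊔ MeasurableSpace.comap g inferInstance := by
  have h : (inferInstance : MeasurableSpace (ℝ × ℝ))
      = MeasurableSpace.comap Prod.fst inferInstance
        ⊔ MeasurableSpace.comap Prod.snd inferInstance := rfl
  rw [h, MeasurableSpace.comap_sup, MeasurableSpace.comap_comp, MeasurableSpace.comap_comp]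
  rfl

/-- Hoeffding projections of the degree mean square statistic under HER(p). -/
theorem her_hoeffding_projections
    {Ω : Type*} [MeasurableSpace Ω] (μ : Measure Ω) [IsProbabilityMeasure μ]
    (n : ℕ) (Y : Fin n → Fin n → Ω → ℝ) (p p0 : Fin n → Fin n → ℝ)
    (hYsym : ∀ i j, Y i j = Y j i) (hYdiag : ∀ i, Y i i = 0)
    (hpsym : ∀ i j, p i j = p j i) (hpdiag : ∀ i, p i i = 0)
    (hp0sym : ∀ i j, p0 i j = p0 j i) (hp0diag : ∀ i, p0 i i = 0)
    (hmeas : ∀ i j, Measurable (Y i j))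
    (h01 : ∀ i j ω, Y i j ω = 0 ∨ Y i j ω = 1)
    (hmean : ∀ i j, i ≠ j → ∫ ω, Y i j ω ∂μ = p i j)
    (hindep : iIndepFun
      (fun e : {e : Fin n × Fin n // e.1 < e.2} => Y e.1.1 e.1.2) μ)
    (W : Ω → ℝ)
    (hW : W = fun ω => (1 / (n : ℝ)) * ∑ i,
        ((∑ j ∈ univ.filter (fun j => j ≠ i), Y i j ω)
          - ∑ j ∈ univ.filter (fun j => j ≠ i), p0 i j) ^ 2) :
    (∀ i j : Fin n, i < j →
      (fun ω => (μ[W | MeasurableSpace.comap (Y i j) inferInstance]) ω - ∫ ω', W ω' ∂μ)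
        =ᵐ[μ] fun ω => (2 / (n : ℝ)) * (Y i j ω - p i j) *
          (1 - 2 * p i j + (∑ k ∈ univ.filter (fun k => k ≠ i), (p i k - p0 i k))
            + (∑ k ∈ univ.filter (fun k => k ≠ j), (p j k - p0 j k))))
    ∧ (∀ i j k : Fin n, i < j → j < k →
      (fun ω => (μ[W | MeasurableSpace.comap (fun ω' => (Y i j ω', Y i k ω')) inferInstance]) ω
          - (μ[W | MeasurableSpace.comap (Y i j) inferInstance]) ω
          - (μ[W | MeasurableSpace.comap (Y i k) inferInstance]) ω
          + ∫ ω', W ω' ∂μ)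
        =ᵐ[μ] fun ω => (2 / (n : ℝ)) * (Y i j ω - p i j) * (Y i k ω - p i k)) := by
  classical
  have hWS : W = fun ω => (1 / (n : ℝ)) * ∑ r, (auxS n Y p0 r ω) ^ 2 := hW
  -- basic bounds and integrals
  have hY1 : ∀ a b ω, |Y a b ω| ≤ 1 := by
    intro a b ω; rcases h01 a b ω with h | h <;> rw [h] <;> norm_num
  have hYint : ∀ a b, Integrable (Y a b) μ := fun a b => aux_int (hmeas a b) (hY1 a b)
  have hYtbd : ∀ a b ω, |Y a b ω - p a b| ≤ 1 + |p a b| := by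
    intro a b ω
    calc |Y a b ω - p a b| = |Y a b ω + -(p a b)| := by rw [sub_eq_add_neg]
      _ ≤ |Y a b ω| + |-(p a b)| := abs_add_le _ _
      _ ≤ 1 + |p a b| := by rw [abs_neg]; exact add_le_add (hY1 a b ω) le_rfl
  have hYt0 : ∀ a b, a ≠ b → ∫ ω, (Y a b ω - p a b) ∂μ = 0 := by
    intro a b hab
    rw [integral_sub (hYint a b) (integrable_const _), hmean a b hab, integral_const]
    simp [measure_univ]
  have hYtsq : ∀ a b, a ≠ b → ∫ ω, (Y a b ω - p a b)^2 ∂μ = p a b - (p a b)^2 := by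
    intro a b hab
    have hpt : ∀ ω, (Y a b ω - p a b)^2 = (1 - 2 * p a b) * Y a b ω + (p a b)^2 := by
      intro ω; rcases h01 a b ω with h | h <;> rw [h] <;> ring
    simp_rw [hpt]
    rw [integral_add ((hYint a b).const_mul _) (integrable_const _), integral_const_mul,
      hmean a b hab, integral_const]
    simp [measure_univ]
    ring
  have hSbd : ∀ r ω, |auxS n Y p0 r ω|
      ≤ (n : ℝ) + |∑ l ∈ univ.filter (fun l => l ≠ r), p0 r l| := by
    intro r ω
    have h1 : |∑ l ∈ univ.filter (fun l => l ≠ r), Y r l ω| ≤ (n : ℝ) := by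
      calc |∑ l ∈ univ.filter (fun l => l ≠ r), Y r l ω|
          ≤ ∑ l ∈ univ.filter (fun l => l ≠ r), |Y r l ω| := Finset.abs_sum_le_sum_abs _ _
        _ ≤ ∑ l ∈ univ.filter (fun l => l ≠ r), 1 :=
            Finset.sum_le_sum fun l _ => hY1 r l ω
        _ = ((univ.filter (fun l => l ≠ r)).card : ℝ) := by simp
        _ ≤ (n : ℝ) := by
            have := Finset.card_filter_le (univ : Finset (Fin n)) (fun l => l ≠ r)
            exact_mod_cast le_trans this (by simp)
    calc |auxS n Y p0 r ω|
        = |(∑ l ∈ univ.filter (fun l => l ≠ r), Y r l ω)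
            + -(∑ l ∈ univ.filter (fun l => l ≠ r), p0 r l)| := by
          rw [auxS, sub_eq_add_neg]
      _ ≤ |∑ l ∈ univ.filter (fun l => l ≠ r), Y r l ω|
            + |-(∑ l ∈ univ.filter (fun l => l ≠ r), p0 r l)| := abs_add_le _ _
      _ ≤ (n : ℝ) + |∑ l ∈ univ.filter (fun l => l ≠ r), p0 r l| := by
          rw [abs_neg]; exact add_le_add h1 le_rfl
  have hSmeas : ∀ r, Measurable (auxS n Y p0 r) := by
    intro r
    exact (Finset.measurable_sum _ (fun l _ => hmeas r l)).sub_const _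
  have hSint : ∀ r, Integrable (auxS n Y p0 r) μ := fun r => aux_int (hSmeas r) (hSbd r)
  have hintS : ∀ r, ∫ ω, auxS n Y p0 r ω ∂μ = auxD n p p0 r := by
    intro r
    simp only [auxS, auxD]
    rw [integral_sub (integrable_finset_sum _ (fun l _ => hYint r l)) (integrable_const _),
      integral_finset_sum _ (fun l _ => hYint r l), integral_const]
    simp only [measure_univ, ENNReal.toReal_one, probReal_univ, one_smul]
    rw [Finset.sum_sub_distrib]
    congr 1
    refine Finset.sum_congr rfl fun l hl => ?_
    exact hmean r l (Ne.symm (by simpa using hl))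
  have intS2 : ∀ r, Integrable (fun ω => (auxS n Y p0 r ω)^2) μ := by
    intro r
    refine aux_int ((hSmeas r).pow_const 2)
      (C := ((n : ℝ) + |∑ l ∈ univ.filter (fun l => l ≠ r), p0 r l|)^2) (fun ω => ?_)
    rw [abs_pow]
    exact pow_le_pow_left₀ (abs_nonneg _) (hSbd r ω) 2
  have hEW : ∫ ω', W ω' ∂μ = (1 / (n : ℝ)) * ∑ r, (∫ ω', (auxS n Y p0 r ω')^2 ∂μ) := by
    rw [hWS]
    rw [integral_const_mul, integral_finset_sum _ (fun r _ => intS2 r)]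
  -- edge σ-algebra infrastructure
  have h_le : ∀ e : {e : Fin n × Fin n // e.1 < e.2},
      MeasurableSpace.comap (Y e.1.1 e.1.2) inferInstance ≤ ‹MeasurableSpace Ω› :=
    fun e => (hmeas _ _).comap_le
  have hiI : iIndep (fun e : {e : Fin n × Fin n // e.1 < e.2} =>
      MeasurableSpace.comap (Y e.1.1 e.1.2) inferInstance) μ := hindep.iIndep
  have hedge_meas : ∀ (t : Set {e : Fin n × Fin n // e.1 < e.2}) (a b : Fin n), a ≠ b →
      (∀ h : a < b, (⟨(a,b),h⟩ : {e : Fin n × Fin n // e.1 < e.2}) ∉ t) →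
      (∀ h : b < a, (⟨(b,a),h⟩ : {e : Fin n × Fin n // e.1 < e.2}) ∉ t) →
      Measurable[⨆ e ∈ tᶜ, MeasurableSpace.comap (Y (e : {e : Fin n × Fin n // e.1 < e.2}).1.1 e.1.2) inferInstance]
        (Y a b) := by
    intro t a b hab h1 h2
    rcases lt_or_gt_of_ne hab with h | h
    · exact Measurable.mono (measurable_iff_comap_le.2 le_rfl)
        (le_biSup (i := (⟨(a,b),h⟩ : {e : Fin n × Fin n // e.1 < e.2}))
          (fun e : {e : Fin n × Fin n // e.1 < e.2} =>
          MeasurableSpace.comap (Y e.1.1 e.1.2) inferInstance) (h1 h)) le_rfl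
    · rw [hYsym a b]
      exact Measurable.mono (measurable_iff_comap_le.2 le_rfl)
        (le_biSup (i := (⟨(b,a),h⟩ : {e : Fin n × Fin n // e.1 < e.2}))
          (fun e : {e : Fin n × Fin n // e.1 < e.2} =>
          MeasurableSpace.comap (Y e.1.1 e.1.2) inferInstance) (h2 h)) le_rfl
  have habs_sub : ∀ x y : ℝ, |x - y| ≤ |x| + |y| := by
    intro x y
    rw [sub_eq_add_neg]
    exact (abs_add_le _ _).trans (by rw [abs_neg])
  have hsum_meas : ∀ (t : Set {e : Fin n × Fin n // e.1 < e.2}) (r : Fin n) (s : Finset (Fin n)),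
      (∀ l ∈ s, l ≠ r ∧ (∀ h : r < l, (⟨(r,l),h⟩ : {e : Fin n × Fin n // e.1 < e.2}) ∉ t)
        ∧ (∀ h : l < r, (⟨(l,r),h⟩ : {e : Fin n × Fin n // e.1 < e.2}) ∉ t)) →
      Measurable[⨆ e ∈ tᶜ, MeasurableSpace.comap
          (Y (e : {e : Fin n × Fin n // e.1 < e.2}).1.1 e.1.2) inferInstance]
        (fun ω => ∑ l ∈ s, Y r l ω) := by
    intro t r s hs
    exact Finset.measurable_sum s fun l hl =>
      hedge_meas t r l (Ne.symm (hs l hl).1) (hs l hl).2.1 (hs l hl).2.2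
  have hcond : ∀ a b : Fin n, a < b →
      μ[W|MeasurableSpace.comap (Y a b) inferInstance] =ᵐ[μ]
      fun ω => (1 / (n : ℝ)) * ∑ r, ((if r = a ∨ r = b then
          ((Y a b ω - p a b)^2 - (p a b - (p a b)^2)
            + 2 * (Y a b ω - p a b) * auxD n p p0 r) else 0)
        + (∫ ω', (auxS n Y p0 r ω')^2 ∂μ)) := by
    intro a b hab
    set A : Fin n → Ω → ℝ := fun r ω => if r = a ∨ r = b then Y a b ω - p a b else 0 with hA
    have hApos : ∀ r, (r = a ∨ r = b) → A r = fun ω => Y a b ω - p a b :=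
      fun r h => funext fun ω => if_pos h
    have hAneg : ∀ r, ¬(r = a ∨ r = b) → A r = fun _ => (0:ℝ) :=
      fun r h => funext fun ω => if_neg h
    set t : Set {e : Fin n × Fin n // e.1 < e.2} := {⟨(a,b),hab⟩} with ht
    have hm' : MeasurableSpace.comap (Y a b) inferInstance ≤ ‹MeasurableSpace Ω› :=
      (hmeas a b).comap_le
    have hmB : (⨆ e ∈ tᶜ, MeasurableSpace.comap
        (Y (e : {e : Fin n × Fin n // e.1 < e.2}).1.1 e.1.2) inferInstance)
        ≤ ‹MeasurableSpace Ω› := iSup₂_le fun e _ => h_le e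
    have hInd : ProbabilityTheory.Indep
        (⨆ e ∈ tᶜ, MeasurableSpace.comap
          (Y (e : {e : Fin n × Fin n // e.1 < e.2}).1.1 e.1.2) inferInstance)
        (MeasurableSpace.comap (Y a b) inferInstance) μ := by
      refine ProbabilityTheory.indep_of_indep_of_le_right
        (ProbabilityTheory.indep_biSup_compl h_le hiI t).symm ?_
      exact le_biSup (i := (⟨(a,b),hab⟩ : {e : Fin n × Fin n // e.1 < e.2}))
        (fun e : {e : Fin n × Fin n // e.1 < e.2} =>
          MeasurableSpace.comap (Y e.1.1 e.1.2) inferInstance) rfl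
    have hAmeas : ∀ r, Measurable[MeasurableSpace.comap (Y a b) inferInstance] (A r) := by
      intro r
      by_cases h : r = a ∨ r = b
      · rw [hApos r h]
        exact (measurable_iff_comap_le.2 le_rfl).sub measurable_const
      · rw [hAneg r h]
        exact measurable_const
    have hCA : ∀ r ω, |A r ω| ≤ 1 + |p a b| := by
      intro r ω
      by_cases h : r = a ∨ r = b
      · simp only [hApos r h]
        exact hYtbd a b ω
      · simp only [hAneg r h, abs_zero]
        positivity
    have hBmeas : ∀ r, Measurable[⨆ e ∈ tᶜ, MeasurableSpace.comap
        (Y (e : {e : Fin n × Fin n // e.1 < e.2}).1.1 e.1.2) inferInstance]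
        (fun ω => auxS n Y p0 r ω - A r ω) := by
      intro r
      by_cases hra : r = a
      · subst hra
        have hbmem : b ∈ univ.filter (fun l => l ≠ r) := by
          simp [ne_of_gt hab]
        have hsplit : (fun ω => auxS n Y p0 r ω - A r ω) = fun ω =>
            (∑ l ∈ (univ.filter (fun l => l ≠ r)).erase b, Y r l ω)
              + (p r b - ∑ l ∈ univ.filter (fun l => l ≠ r), p0 r l) := by
          funext ω
          simp only [hApos r (Or.inl rfl), auxS]
          rw [← Finset.add_sum_erase _ (fun l => Y r l ω) hbmem]
          ring
        rw [hsplit]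
        refine Measurable.add_const (hsum_meas t r _ (fun l hl => ?_)) _
        have hlb : l ≠ b := Finset.ne_of_mem_erase hl
        have hla : l ≠ r := by
          have := Finset.mem_of_mem_erase hl
          simpa using this
        refine ⟨hla, fun h hmem => ?_, fun h hmem => ?_⟩
        · rw [ht, Set.mem_singleton_iff, Subtype.mk.injEq, Prod.mk.injEq] at hmem
          exact hlb hmem.2
        · rw [ht, Set.mem_singleton_iff, Subtype.mk.injEq, Prod.mk.injEq] at hmem
          exact (ne_of_lt hab) hmem.2
      · by_cases hrb : r = b
        · subst hrb
          have hamem : a ∈ univ.filter (fun l => l ≠ r) := by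
            simp [ne_of_lt hab]
          have hsplit : (fun ω => auxS n Y p0 r ω - A r ω) = fun ω =>
              (∑ l ∈ (univ.filter (fun l => l ≠ r)).erase a, Y r l ω)
                + (p a r - ∑ l ∈ univ.filter (fun l => l ≠ r), p0 r l) := by
            funext ω
            simp only [hApos r (Or.inr rfl), auxS]
            rw [← Finset.add_sum_erase _ (fun l => Y r l ω) hamem, hYsym r a]
            ring
          rw [hsplit]
          refine Measurable.add_const (hsum_meas t r _ (fun l hl => ?_)) _
          have hla : l ≠ a := Finset.ne_of_mem_erase hl
          have hlr : l ≠ r := by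
            have := Finset.mem_of_mem_erase hl
            simpa using this
          refine ⟨hlr, fun h hmem => ?_, fun h hmem => ?_⟩
          · rw [ht, Set.mem_singleton_iff, Subtype.mk.injEq, Prod.mk.injEq] at hmem
            exact (ne_of_gt hab) hmem.1
          · rw [ht, Set.mem_singleton_iff, Subtype.mk.injEq, Prod.mk.injEq] at hmem
            exact hla hmem.1
        · have hsplit : (fun ω => auxS n Y p0 r ω - A r ω) = fun ω =>
              (∑ l ∈ univ.filter (fun l => l ≠ r), Y r l ω)
                + (0 - ∑ l ∈ univ.filter (fun l => l ≠ r), p0 r l) := by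
            funext ω
            simp only [hAneg r (not_or.2 ⟨hra, hrb⟩), auxS]
            ring
          rw [hsplit]
          refine Measurable.add_const (hsum_meas t r _ (fun l hl => ?_)) _
          have hlr : l ≠ r := by simpa using hl
          refine ⟨hlr, fun h hmem => ?_, fun h hmem => ?_⟩
          · rw [ht, Set.mem_singleton_iff, Subtype.mk.injEq, Prod.mk.injEq] at hmem
            exact hra hmem.1
          · rw [ht, Set.mem_singleton_iff, Subtype.mk.injEq, Prod.mk.injEq] at hmem
            exact hrb hmem.2
    have hCB : ∀ r ω, |auxS n Y p0 r ω - A r ω|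
        ≤ ((n : ℝ) + |∑ l ∈ univ.filter (fun l => l ≠ r), p0 r l|) + (1 + |p a b|) := by
      intro r ω
      exact (habs_sub _ _).trans (add_le_add (hSbd r ω) (hCA r ω))
    have hintA : ∀ r, Integrable (A r) μ := by
      intro r
      by_cases h : r = a ∨ r = b
      · rw [hApos r h]
        exact (hYint a b).sub (integrable_const _)
      · rw [hAneg r h]
        exact integrable_const 0
    have hA0 : ∀ r, ∫ ω, A r ω ∂μ = 0 := by
      intro r
      by_cases h : r = a ∨ r = b
      · simp only [hApos r h]
        exact hYt0 a b (ne_of_lt hab)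
      · simp only [hAneg r h]
        exact integral_zero _ _
    have hSA : ∀ r, ∫ ω, (auxS n Y p0 r ω - A r ω) ∂μ = auxD n p p0 r := by
      intro r
      rw [integral_sub (hSint r) (hintA r), hintS r, hA0 r, sub_zero]
    have hk := aux_key (μ := μ) (auxS n Y p0) (auxD n p p0) hm' hmB hInd A hAmeas hBmeas
      (fun _ => 1 + |p a b|)
      (fun r => ((n : ℝ) + |∑ l ∈ univ.filter (fun l => l ≠ r), p0 r l|) + (1 + |p a b|))
      hCA hCB hA0 hSA W hWS
    refine hk.trans (Filter.EventuallyEq.of_eq ?_)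
    funext ω
    congr 1
    refine Finset.sum_congr rfl fun r _ => ?_
    by_cases h : r = a ∨ r = b
    · simp only [hApos r h, if_pos h]
      rw [hYtsq a b (ne_of_lt hab)]
    · simp only [hAneg r h, if_neg h]
      simp
  have hsum_ite : ∀ (a b : Fin n), a < b → ∀ (F : Fin n → ℝ),
      (∑ r, if r = a ∨ r = b then F r else 0) = F a + F b := by
    intro a b hab F
    rw [Finset.sum_ite, Finset.sum_const_zero, add_zero]
    have : univ.filter (fun r => r = a ∨ r = b) = {a, b} := by ext r; simp
    rw [this, Finset.sum_pair (ne_of_lt hab)]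
  refine ⟨?_, ?_⟩
  · -- Part 1
    intro i j hij
    filter_upwards [hcond i j hij] with ω hω
    simp only [hω, hEW]
    have hYsq : Y i j ω ^ 2 = Y i j ω := by
      rcases h01 i j ω with h | h <;> rw [h] <;> ring
    rw [Finset.sum_add_distrib, hsum_ite i j hij]
    simp only [auxD]
    linear_combination (2 / (n : ℝ)) * hYsq
  · -- Part 2
    intro i j k hij hjk
    have hik : i < k := lt_trans hij hjk
    -- cross-integral fact
    have hcross : ∫ ω, ((Y i j ω - p i j) + (Y i k ω - p i k))^2 ∂μ
        = (p i j - (p i j)^2) + (p i k - (p i k)^2) := by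
      set t1 : Set {e : Fin n × Fin n // e.1 < e.2} := {⟨(i,j),hij⟩} with ht1
      have hm'1 : MeasurableSpace.comap (Y i j) inferInstance ≤ ‹MeasurableSpace Ω› :=
        (hmeas i j).comap_le
      have hmB1 : (⨆ e ∈ t1ᶜ, MeasurableSpace.comap
          (Y (e : {e : Fin n × Fin n // e.1 < e.2}).1.1 e.1.2) inferInstance)
          ≤ ‹MeasurableSpace Ω› := iSup₂_le fun e _ => h_le e
      have hInd1 : ProbabilityTheory.Indep
          (⨆ e ∈ t1ᶜ, MeasurableSpace.comap
            (Y (e : {e : Fin n × Fin n // e.1 < e.2}).1.1 e.1.2) inferInstance)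
          (MeasurableSpace.comap (Y i j) inferInstance) μ := by
        refine ProbabilityTheory.indep_of_indep_of_le_right
          (ProbabilityTheory.indep_biSup_compl h_le hiI t1).symm ?_
        exact le_biSup (i := (⟨(i,j),hij⟩ : {e : Fin n × Fin n // e.1 < e.2}))
          (fun e : {e : Fin n × Fin n // e.1 < e.2} =>
            MeasurableSpace.comap (Y e.1.1 e.1.2) inferInstance) rfl
      have hBik : Measurable[⨆ e ∈ t1ᶜ, MeasurableSpace.comap
          (Y (e : {e : Fin n × Fin n // e.1 < e.2}).1.1 e.1.2) inferInstance]
          (fun ω => Y i k ω - p i k) := by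
        refine Measurable.sub ?_ measurable_const
        refine hedge_meas t1 i k (ne_of_lt hik) (fun h hmem => ?_) (fun h hmem => ?_)
        · rw [ht1, Set.mem_singleton_iff, Subtype.mk.injEq, Prod.mk.injEq] at hmem
          exact (ne_of_gt hjk) hmem.2
        · exact absurd h (not_lt.2 (le_of_lt hik))
      obtain ⟨-, -, h3⟩ := aux_condexp_sq hm'1 hmB1 hInd1
        ((measurable_iff_comap_le.2 le_rfl).sub measurable_const) hBik
        (hYtbd i j) (hYtbd i k)
      simp only [Pi.sub_apply] at h3
      rw [h3, hYtsq i j (ne_of_lt hij), hYtsq i k (ne_of_lt hik), hYt0 i j (ne_of_lt hij)]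
      ring
    -- conditional expectation given the pair
    have hcond2 : μ[W|MeasurableSpace.comap (fun ω' => (Y i j ω', Y i k ω')) inferInstance]
        =ᵐ[μ] fun ω => (1 / (n : ℝ)) * ∑ r,
          ((if r = i then
              (((Y i j ω - p i j) + (Y i k ω - p i k))^2
                - ((p i j - (p i j)^2) + (p i k - (p i k)^2))
                + 2 * ((Y i j ω - p i j) + (Y i k ω - p i k)) * auxD n p p0 r)
            else if r = j then
              ((Y i j ω - p i j)^2 - (p i j - (p i j)^2)
                + 2 * (Y i j ω - p i j) * auxD n p p0 r)
            else if r = k then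
              ((Y i k ω - p i k)^2 - (p i k - (p i k)^2)
                + 2 * (Y i k ω - p i k) * auxD n p p0 r)
            else 0)
          + (∫ ω', (auxS n Y p0 r ω')^2 ∂μ)) := by
      set A2 : Fin n → Ω → ℝ := fun r ω =>
        if r = i then (Y i j ω - p i j) + (Y i k ω - p i k)
        else if r = j then Y i j ω - p i j
        else if r = k then Y i k ω - p i k
        else 0 with hA2
      have hA2i : A2 i = fun ω => (Y i j ω - p i j) + (Y i k ω - p i k) :=
        funext fun ω => if_pos rfl
      have hA2j : A2 j = fun ω => Y i j ω - p i j :=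
        funext fun ω => by rw [hA2]; simp [ne_of_gt hij]
      have hA2k : A2 k = fun ω => Y i k ω - p i k :=
        funext fun ω => by rw [hA2]; simp [ne_of_gt hik, ne_of_gt hjk]
      have hA2o : ∀ r, r ≠ i → r ≠ j → r ≠ k → A2 r = fun _ => (0:ℝ) :=
        fun r h1 h2 h3 => funext fun ω => by rw [hA2]; simp [h1, h2, h3]
      set t2 : Set {e : Fin n × Fin n // e.1 < e.2} := {⟨(i,j),hij⟩, ⟨(i,k),hik⟩} with ht2
      have ht2mem : ∀ (x : {e : Fin n × Fin n // e.1 < e.2}), x ∈ t2 →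
          x.1 = (i,j) ∨ x.1 = (i,k) := by
        intro x hx
        rw [ht2] at hx
        rcases hx with hx | hx
        · left; rw [hx]
        · right; rw [Set.mem_singleton_iff] at hx; rw [hx]
      have hm2 : MeasurableSpace.comap (fun ω' => (Y i j ω', Y i k ω')) inferInstance
          ≤ ‹MeasurableSpace Ω› := ((hmeas i j).prodMk (hmeas i k)).comap_le
      have hmB2 : (⨆ e ∈ t2ᶜ, MeasurableSpace.comap
          (Y (e : {e : Fin n × Fin n // e.1 < e.2}).1.1 e.1.2) inferInstance)
          ≤ ‹MeasurableSpace Ω› := iSup₂_le fun e _ => h_le e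
      have hm2le : MeasurableSpace.comap (fun ω' => (Y i j ω', Y i k ω')) inferInstance
          ≤ ⨆ e ∈ t2, MeasurableSpace.comap
            (Y (e : {e : Fin n × Fin n // e.1 < e.2}).1.1 e.1.2) inferInstance := by
        rw [aux_comap_pair]
        refine sup_le ?_ ?_
        · exact le_biSup (i := (⟨(i,j),hij⟩ : {e : Fin n × Fin n // e.1 < e.2}))
            (fun e : {e : Fin n × Fin n // e.1 < e.2} =>
              MeasurableSpace.comap (Y e.1.1 e.1.2) inferInstance) (Set.mem_insert _ _)
        · exact le_biSup (i := (⟨(i,k),hik⟩ : {e : Fin n × Fin n // e.1 < e.2}))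
            (fun e : {e : Fin n × Fin n // e.1 < e.2} =>
              MeasurableSpace.comap (Y e.1.1 e.1.2) inferInstance)
            (Set.mem_insert_of_mem _ rfl)
      have hInd2 : ProbabilityTheory.Indep
          (⨆ e ∈ t2ᶜ, MeasurableSpace.comap
            (Y (e : {e : Fin n × Fin n // e.1 < e.2}).1.1 e.1.2) inferInstance)
          (MeasurableSpace.comap (fun ω' => (Y i j ω', Y i k ω')) inferInstance) μ :=
        ProbabilityTheory.indep_of_indep_of_le_right
          (ProbabilityTheory.indep_biSup_compl h_le hiI t2).symm hm2le
      have hYijm2 : Measurable[MeasurableSpace.comap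
          (fun ω' => (Y i j ω', Y i k ω')) inferInstance] (Y i j) :=
        measurable_iff_comap_le.2 (by rw [aux_comap_pair]; exact le_sup_left)
      have hYikm2 : Measurable[MeasurableSpace.comap
          (fun ω' => (Y i j ω', Y i k ω')) inferInstance] (Y i k) :=
        measurable_iff_comap_le.2 (by rw [aux_comap_pair]; exact le_sup_right)
      have hA2meas : ∀ r, Measurable[MeasurableSpace.comap
          (fun ω' => (Y i j ω', Y i k ω')) inferInstance] (A2 r) := by
        intro r
        by_cases h1 : r = i
        · subst h1; rw [hA2i]
          exact (hYijm2.sub measurable_const).add (hYikm2.sub measurable_const)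
        · by_cases h2 : r = j
          · subst h2; rw [hA2j]; exact hYijm2.sub measurable_const
          · by_cases h3 : r = k
            · subst h3; rw [hA2k]; exact hYikm2.sub measurable_const
            · rw [hA2o r h1 h2 h3]; exact measurable_const
      have hCA2 : ∀ r ω, |A2 r ω| ≤ (1 + |p i j|) + (1 + |p i k|) := by
        intro r ω
        by_cases h1 : r = i
        · simp only [h1, hA2i]
          exact (abs_add_le _ _).trans (add_le_add (hYtbd i j ω) (hYtbd i k ω))
        · by_cases h2 : r = j
          · simp only [h2, hA2j]
            exact le_add_of_le_of_nonneg (hYtbd i j ω) (by positivity)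
          · by_cases h3 : r = k
            · simp only [h3, hA2k]
              exact le_add_of_nonneg_of_le (by positivity) (hYtbd i k ω)
            · simp only [hA2o r h1 h2 h3, abs_zero]; positivity
      have hB2meas : ∀ r, Measurable[⨆ e ∈ t2ᶜ, MeasurableSpace.comap
          (Y (e : {e : Fin n × Fin n // e.1 < e.2}).1.1 e.1.2) inferInstance]
          (fun ω => auxS n Y p0 r ω - A2 r ω) := by
        intro r
        by_cases h1 : r = i
        · subst h1
          have hjm : j ∈ univ.filter (fun l => l ≠ r) := by simp [ne_of_gt hij]
          have hkm : k ∈ (univ.filter (fun l => l ≠ r)).erase j := by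
            simp [ne_of_gt hjk, ne_of_gt hik]
          have hsplit : (fun ω => auxS n Y p0 r ω - A2 r ω) = fun ω =>
              (∑ l ∈ ((univ.filter (fun l => l ≠ r)).erase j).erase k, Y r l ω)
                + ((p r j + p r k) - ∑ l ∈ univ.filter (fun l => l ≠ r), p0 r l) := by
            funext ω
            simp only [hA2i, auxS]
            rw [← Finset.add_sum_erase _ (fun l => Y r l ω) hjm,
              ← Finset.add_sum_erase _ (fun l => Y r l ω) hkm]
            ring
          rw [hsplit]
          refine Measurable.add_const (hsum_meas t2 r _ (fun l hl => ?_)) _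
          have hlk : l ≠ k := Finset.ne_of_mem_erase hl
          have hlj : l ≠ j := Finset.ne_of_mem_erase (Finset.mem_of_mem_erase hl)
          have hlr : l ≠ r := by
            have := Finset.mem_of_mem_erase (Finset.mem_of_mem_erase hl)
            simpa using this
          refine ⟨hlr, fun h hmem => ?_, fun h hmem => ?_⟩
          · rcases ht2mem _ hmem with he | he <;> rw [Prod.mk.injEq] at he
            · exact hlj he.2
            · exact hlk he.2
          · rcases ht2mem _ hmem with he | he <;> rw [Prod.mk.injEq] at he
            · exact (ne_of_lt hij) he.2
            · exact (ne_of_lt hik) he.2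
        · by_cases h2 : r = j
          · subst h2
            have him : i ∈ univ.filter (fun l => l ≠ r) := by simp [ne_of_lt hij]
            have hsplit : (fun ω => auxS n Y p0 r ω - A2 r ω) = fun ω =>
                (∑ l ∈ (univ.filter (fun l => l ≠ r)).erase i, Y r l ω)
                  + (p i r - ∑ l ∈ univ.filter (fun l => l ≠ r), p0 r l) := by
              funext ω
              simp only [hA2j, auxS]
              rw [← Finset.add_sum_erase _ (fun l => Y r l ω) him, hYsym r i]
              ring
            rw [hsplit]
            refine Measurable.add_const (hsum_meas t2 r _ (fun l hl => ?_)) _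
            have hli : l ≠ i := Finset.ne_of_mem_erase hl
            have hlr : l ≠ r := by
              have := Finset.mem_of_mem_erase hl
              simpa using this
            refine ⟨hlr, fun h hmem => ?_, fun h hmem => ?_⟩
            · rcases ht2mem _ hmem with he | he <;> rw [Prod.mk.injEq] at he
              · exact (ne_of_gt hij) he.1
              · exact (ne_of_gt hij) he.1
            · rcases ht2mem _ hmem with he | he <;> rw [Prod.mk.injEq] at he
              · exact hli he.1
              · exact (ne_of_lt hjk) he.2
          · by_cases h3 : r = k
            · subst h3
              have him : i ∈ univ.filter (fun l => l ≠ r) := by simp [ne_of_lt hik]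
              have hsplit : (fun ω => auxS n Y p0 r ω - A2 r ω) = fun ω =>
                  (∑ l ∈ (univ.filter (fun l => l ≠ r)).erase i, Y r l ω)
                    + (p i r - ∑ l ∈ univ.filter (fun l => l ≠ r), p0 r l) := by
                funext ω
                simp only [hA2k, auxS]
                rw [← Finset.add_sum_erase _ (fun l => Y r l ω) him, hYsym r i]
                ring
              rw [hsplit]
              refine Measurable.add_const (hsum_meas t2 r _ (fun l hl => ?_)) _
              have hli : l ≠ i := Finset.ne_of_mem_erase hl
              have hlr : l ≠ r := by
                have := Finset.mem_of_mem_erase hl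
                simpa using this
              refine ⟨hlr, fun h hmem => ?_, fun h hmem => ?_⟩
              · rcases ht2mem _ hmem with he | he <;> rw [Prod.mk.injEq] at he
                · exact (ne_of_gt hik) he.1
                · exact (ne_of_gt hik) he.1
              · rcases ht2mem _ hmem with he | he <;> rw [Prod.mk.injEq] at he
                · exact (ne_of_gt hjk) he.2
                · exact hli he.1
            · have hsplit : (fun ω => auxS n Y p0 r ω - A2 r ω) = fun ω =>
                  (∑ l ∈ univ.filter (fun l => l ≠ r), Y r l ω)
                    + (0 - ∑ l ∈ univ.filter (fun l => l ≠ r), p0 r l) := by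
                funext ω
                simp only [hA2o r h1 h2 h3, auxS]
                ring
              rw [hsplit]
              refine Measurable.add_const (hsum_meas t2 r _ (fun l hl => ?_)) _
              have hlr : l ≠ r := by simpa using hl
              refine ⟨hlr, fun h hmem => ?_, fun h hmem => ?_⟩
              · rcases ht2mem _ hmem with he | he <;> rw [Prod.mk.injEq] at he
                · exact h1 he.1
                · exact h1 he.1
              · rcases ht2mem _ hmem with he | he <;> rw [Prod.mk.injEq] at he
                · exact h2 he.2
                · exact h3 he.2
      have hCB2 : ∀ r ω, |auxS n Y p0 r ω - A2 r ω|
          ≤ ((n : ℝ) + |∑ l ∈ univ.filter (fun l => l ≠ r), p0 r l|)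
            + ((1 + |p i j|) + (1 + |p i k|)) := by
        intro r ω
        exact (habs_sub _ _).trans (add_le_add (hSbd r ω) (hCA2 r ω))
      have hintA2 : ∀ r, Integrable (A2 r) μ := by
        intro r
        by_cases h1 : r = i
        · rw [h1, hA2i]
          exact ((hYint i j).sub (integrable_const _)).add
            ((hYint i k).sub (integrable_const _))
        · by_cases h2 : r = j
          · rw [h2, hA2j]; exact (hYint i j).sub (integrable_const _)
          · by_cases h3 : r = k
            · rw [h3, hA2k]; exact (hYint i k).sub (integrable_const _)
            · rw [hA2o r h1 h2 h3]; exact integrable_const 0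
      have hA20 : ∀ r, ∫ ω, A2 r ω ∂μ = 0 := by
        intro r
        by_cases h1 : r = i
        · simp only [h1, hA2i]
          have int1 : Integrable (fun ω => Y i j ω - p i j) μ :=
            (hYint i j).sub (integrable_const _)
          have int2 : Integrable (fun ω => Y i k ω - p i k) μ :=
            (hYint i k).sub (integrable_const _)
          rw [integral_add int1 int2, hYt0 i j (ne_of_lt hij), hYt0 i k (ne_of_lt hik)]
          ring
        · by_cases h2 : r = j
          · simp only [h2, hA2j]; exact hYt0 i j (ne_of_lt hij)
          · by_cases h3 : r = k
            · simp only [h3, hA2k]; exact hYt0 i k (ne_of_lt hik)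
            · simp only [hA2o r h1 h2 h3]; exact integral_zero _ _
      have hSA2 : ∀ r, ∫ ω, (auxS n Y p0 r ω - A2 r ω) ∂μ = auxD n p p0 r := by
        intro r
        rw [integral_sub (hSint r) (hintA2 r), hintS r, hA20 r, sub_zero]
      have hk2 := aux_key (μ := μ) (auxS n Y p0) (auxD n p p0) hm2 hmB2 hInd2 A2
        hA2meas hB2meas
        (fun _ => (1 + |p i j|) + (1 + |p i k|))
        (fun r => ((n : ℝ) + |∑ l ∈ univ.filter (fun l => l ≠ r), p0 r l|)
          + ((1 + |p i j|) + (1 + |p i k|)))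
        hCA2 hCB2 hA20 hSA2 W hWS
      refine hk2.trans (Filter.EventuallyEq.of_eq ?_)
      funext ω
      congr 1
      refine Finset.sum_congr rfl fun r _ => ?_
      by_cases h1 : r = i
      · simp only [h1, hA2i]
        simp only [if_true]
        rw [hcross]
      · by_cases h2 : r = j
        · simp only [h2, hA2j]
          rw [if_neg (ne_of_gt hij)]
          simp only [if_true]
          rw [hYtsq i j (ne_of_lt hij)]
        · by_cases h3 : r = k
          · simp only [h3, hA2k]
            rw [if_neg (ne_of_gt hik), if_neg (ne_of_gt hjk)]
            simp only [if_true]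
            rw [hYtsq i k (ne_of_lt hik)]
          · simp only [hA2o r h1 h2 h3, if_neg h1, if_neg h2, if_neg h3]
            simp
    -- combine everything
    have hsum_ite3 : ∀ (F G H : Fin n → ℝ),
        (∑ r, if r = i then F r else if r = j then G r else if r = k then H r else 0)
          = F i + G j + H k := by
      intro F G H
      have hstep : ∀ r : Fin n,
          (if r = i then F r else if r = j then G r else if r = k then H r else 0)
            = (if r = i then F r else 0) + ((if r = j then G r else 0)
              + (if r = k then H r else 0)) := by
        intro r
        by_cases h1 : r = i
        · simp [h1, ne_of_lt hij, ne_of_lt hik]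
        · by_cases h2 : r = j
          · simp [h1, h2, ne_of_gt hij, ne_of_lt hjk]
          · by_cases h3 : r = k
            · simp [h1, h2, h3, ne_of_gt hik, ne_of_gt hjk]
            · simp [h1, h2, h3]
      rw [Finset.sum_congr rfl (fun r _ => hstep r), Finset.sum_add_distrib,
        Finset.sum_add_distrib, Finset.sum_ite_eq' univ i F, Finset.sum_ite_eq' univ j G,
        Finset.sum_ite_eq' univ k H]
      simp [add_assoc]
    filter_upwards [hcond2, hcond i j hij, hcond i k hik] with ω h2 hb hc
    simp only [h2, hb, hc, hEW]
    rw [Finset.sum_add_distrib, Finset.sum_add_distrib, Finset.sum_add_distrib,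
      hsum_ite3, hsum_ite i j hij, hsum_ite i k hik]
    ring
end

section
/- In the W-graph model with graphon Φ, letting M₁ = Σ_{i<j} Y_{ij} and M₂ = Σ_{i<j<k}(Y_{ij}Y_{ik} + Y_{ij}Y_{jk} + Y_{ik}Y_{jk}), one has E[M₁M₂] = (n₂/2)(2φ₂ + φ₃) + (n₃/2)(φ₅ + 2φ₆) + (n₄/4) φ₁φ₂, where φ_j = P(R_j) is the occurrence probability of pattern R_j (R₃ = triangle, R₅ = three-star, R₆ = path with 3 edges) and n_i = n(n−1)⋯(n−i). -/
open MeasureTheory ProbabilityTheory Finset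

section counting

variable {n : ℕ}

lemma pair_sorted_inj {a b c d : Fin n} (hab : a < b) (hcd : c < d)
    (h : ({a, b} : Finset (Fin n)) = {c, d}) : a = c ∧ b = d := by
  have ha : a ∈ ({c, d} : Finset (Fin n)) := h ▸ (by simp)
  have hb : b ∈ ({c, d} : Finset (Fin n)) := h ▸ (by simp)
  have hc : c ∈ ({a, b} : Finset (Fin n)) := h.symm ▸ (by simp)
  simp only [mem_insert, mem_singleton] at ha hb hc
  rcases ha with rfl | rfl
  · rcases hb with rfl | rfl
    · exact absurd hab (lt_irrefl _)
    · exact ⟨rfl, rfl⟩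
  · rcases hc with rfl | rfl
    · exact absurd hcd (lt_irrefl _)
    · exact absurd (hab.trans hcd) (lt_irrefl _)

lemma pairs_card (s : Finset (Fin n)) :
    ((univ : Finset (Fin n × Fin n)).filter
      (fun p => (p.1 ∈ s ∧ p.2 ∈ s) ∧ p.1 < p.2)).card = s.card.choose 2 := by
  rw [← Finset.card_powersetCard 2 s]
  apply Finset.card_bij (fun p _ => ({p.1, p.2} : Finset (Fin n)))
  · intro p hp
    simp only [mem_filter] at hp
    rw [Finset.mem_powersetCard]
    constructor
    · intro x hx
      simp only [mem_insert, mem_singleton] at hx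
      rcases hx with rfl | rfl
      · exact hp.2.1.1
      · exact hp.2.1.2
    · rw [Finset.card_insert_of_notMem (by simp [hp.2.2.ne]), Finset.card_singleton]
  · intro p hp q hq hpq
    simp only [mem_filter] at hp hq
    obtain ⟨h1, h2⟩ := pair_sorted_inj hp.2.2 hq.2.2 hpq
    exact Prod.ext h1 h2
  · intro t ht
    rw [Finset.mem_powersetCard] at ht
    obtain ⟨x, y, hxy, rfl⟩ := Finset.card_eq_two.mp ht.2
    have hxs : x ∈ s := ht.1 (by simp)
    have hys : y ∈ s := ht.1 (by simp)
    rcases hxy.lt_or_gt with h | h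
    · exact ⟨(x, y), by simp [mem_filter, hxs, hys, h], rfl⟩
    · exact ⟨(y, x), by simp [mem_filter, hxs, hys, h], by rw [Finset.pair_comm]⟩

lemma trip_sorted_inj {a b c d e f : Fin n} (h1 : a < b) (h2 : b < c) (h3 : d < e) (h4 : e < f)
    (h : ({a, b, c} : Finset (Fin n)) = {d, e, f}) : a = d ∧ b = e ∧ c = f := by
  have had : a = d := by
    have hda : d ≤ a := by
      have ha : a ∈ ({d, e, f} : Finset (Fin n)) := h ▸ (by simp)
      simp only [mem_insert, mem_singleton] at ha
      rcases ha with rfl | rfl | rfl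
      · exact le_refl _
      · exact h3.le
      · exact (h3.trans h4).le
    have had' : a ≤ d := by
      have hd : d ∈ ({a, b, c} : Finset (Fin n)) := h.symm ▸ (by simp)
      simp only [mem_insert, mem_singleton] at hd
      rcases hd with rfl | rfl | rfl
      · exact le_refl _
      · exact h1.le
      · exact (h1.trans h2).le
    exact le_antisymm had' hda
  subst had
  have hbc : ({b, c} : Finset (Fin n)) = {e, f} := by
    have e1 : (insert a ({b, c} : Finset (Fin n))).erase a = {b, c} :=
      Finset.erase_insert (by simp [h1.ne, (h1.trans h2).ne])
    have e2 : (insert a ({e, f} : Finset (Fin n))).erase a = {e, f} :=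
      Finset.erase_insert (by simp [h3.ne, (h3.trans h4).ne])
    rw [← e1, ← e2, h]
  obtain ⟨hbe, hcf⟩ := pair_sorted_inj h2 h4 hbc
  exact ⟨rfl, hbe, hcf⟩

lemma exists_sorted3 {x y z : Fin n} (hxy : x ≠ y) (hxz : x ≠ z) (hyz : y ≠ z) :
    ∃ a b c : Fin n, a < b ∧ b < c ∧ ({x, y, z} : Finset (Fin n)) = {a, b, c} := by
  rcases hxy.lt_or_gt with h1 | h1 <;> rcases hxz.lt_or_gt with h2 | h2 <;>
    rcases hyz.lt_or_gt with h3 | h3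
  · exact ⟨x, y, z, h1, h3, rfl⟩
  · exact ⟨x, z, y, h2, h3, by ext t; simp; tauto⟩
  · exact absurd ((h2.trans h1).trans h3) (lt_irrefl _)
  · exact ⟨z, x, y, h2, h1, by ext t; simp; tauto⟩
  · exact ⟨y, x, z, h1, h2, by ext t; simp; tauto⟩
  · exact absurd ((h2.trans h3).trans h1) (lt_irrefl _)
  · exact ⟨y, z, x, h3, h2, by ext t; simp; tauto⟩
  · exact ⟨z, y, x, h3, h1, by ext t; simp; tauto⟩

lemma trips_card :
    ((univ : Finset (Fin n × Fin n × Fin n)).filter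
      (fun t => t.1 < t.2.1 ∧ t.2.1 < t.2.2)).card = n.choose 3 := by
  rw [show n.choose 3 = ((univ : Finset (Fin n)).card.choose 3) by rw [Finset.card_fin],
    ← Finset.card_powersetCard 3 (univ : Finset (Fin n))]
  apply Finset.card_bij (fun t _ => ({t.1, t.2.1, t.2.2} : Finset (Fin n)))
  · intro t ht
    simp only [mem_filter] at ht
    rw [Finset.mem_powersetCard]
    refine ⟨fun x _ => mem_univ x, ?_⟩
    rw [Finset.card_insert_of_notMem, Finset.card_insert_of_notMem, Finset.card_singleton]
    · simp [ht.2.2.ne]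
    · simp [ht.2.1.ne, (ht.2.1.trans ht.2.2).ne]
  · intro t ht u hu htu
    simp only [mem_filter] at ht hu
    obtain ⟨e1, e2, e3⟩ := trip_sorted_inj ht.2.1 ht.2.2 hu.2.1 hu.2.2 htu
    exact Prod.ext e1 (Prod.ext e2 e3)
  · intro t ht
    rw [Finset.mem_powersetCard] at ht
    obtain ⟨x, y, z, hxy, hxz, hyz, rfl⟩ := Finset.card_eq_three.mp ht.2
    obtain ⟨a, b, c, hab, hbc, heq⟩ := exists_sorted3 hxy hxz hyz
    exact ⟨(a, b, c), by simp [mem_filter, hab, hbc], heq.symm⟩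

end counting

section analytic

variable {Ω : Type*} [MeasurableSpace Ω] {μ : Measure Ω} [IsProbabilityMeasure μ]
  {n : ℕ} {Φ : ℝ → ℝ → ℝ} {U : Fin n → Ω → ℝ}


instance probIcc : IsProbabilityMeasure ((volume : Measure ℝ).restrict (Set.Icc (0:ℝ) 1)) :=
  ⟨by simp [Real.volume_Icc]⟩

lemma law2 (hUmeas : ∀ i, Measurable (U i))
    (hUindep : iIndepFun U μ)
    (hUlaw : ∀ i, μ.map (U i) = ((volume : Measure ℝ).restrict (Set.Icc (0:ℝ) 1))) (a b : Fin n) (hab : a ≠ b) :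
    μ.map (fun ω => (U a ω, U b ω)) = Measure.prod ((volume : Measure ℝ).restrict (Set.Icc (0:ℝ) 1)) ((volume : Measure ℝ).restrict (Set.Icc (0:ℝ) 1)) := by
  have h := hUindep.indepFun hab
  rw [indepFun_iff_map_prod_eq_prod_map_map (hUmeas a).aemeasurable (hUmeas b).aemeasurable] at h
  rw [h, hUlaw, hUlaw]

lemma law3 (hUmeas : ∀ i, Measurable (U i))
    (hUindep : iIndepFun U μ)
    (hUlaw : ∀ i, μ.map (U i) = ((volume : Measure ℝ).restrict (Set.Icc (0:ℝ) 1))) (a b c : Fin n)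
    (hab : a ≠ b) (hac : a ≠ c) (hbc : b ≠ c) :
    μ.map (fun ω => (U a ω, U b ω, U c ω)) = Measure.prod ((volume : Measure ℝ).restrict (Set.Icc (0:ℝ) 1)) (Measure.prod ((volume : Measure ℝ).restrict (Set.Icc (0:ℝ) 1)) ((volume : Measure ℝ).restrict (Set.Icc (0:ℝ) 1))) := by
  have h : IndepFun (U a) (fun ω => (U b ω, U c ω)) μ :=
    (hUindep.indepFun_prodMk hUmeas b c a hab.symm hac.symm).symm
  rw [indepFun_iff_map_prod_eq_prod_map_map (hUmeas a).aemeasurable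
    ((hUmeas b).prodMk (hUmeas c)).aemeasurable] at h
  rw [h, hUlaw, law2 hUmeas hUindep hUlaw b c hbc]

lemma law4 (hUmeas : ∀ i, Measurable (U i))
    (hUindep : iIndepFun U μ)
    (hUlaw : ∀ i, μ.map (U i) = ((volume : Measure ℝ).restrict (Set.Icc (0:ℝ) 1))) (a b c d : Fin n)
    (hab : a ≠ b) (hac : a ≠ c) (had : a ≠ d) (hbc : b ≠ c) (hbd : b ≠ d) (hcd : c ≠ d) :
    μ.map (fun ω => (U a ω, U b ω, U c ω, U d ω))
      = Measure.prod ((volume : Measure ℝ).restrict (Set.Icc (0:ℝ) 1)) (Measure.prod ((volume : Measure ℝ).restrict (Set.Icc (0:ℝ) 1)) (Measure.prod ((volume : Measure ℝ).restrict (Set.Icc (0:ℝ) 1)) ((volume : Measure ℝ).restrict (Set.Icc (0:ℝ) 1)))) := by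
  have hdisj : Disjoint ({a} : Finset (Fin n)) ({b, c, d} : Finset (Fin n)) := by
    simp [Finset.disjoint_left, hab, hac, had]
  have h0 := hUindep.indepFun_finset {a} {b, c, d} hdisj hUmeas
  have hφ : Measurable (fun v : ({a} : Finset (Fin n)) → ℝ => v ⟨a, by simp⟩) :=
    measurable_pi_apply _
  have hψ : Measurable (fun v : ({b, c, d} : Finset (Fin n)) → ℝ =>
      (v ⟨b, by simp⟩, v ⟨c, by simp⟩, v ⟨d, by simp⟩)) :=
    (measurable_pi_apply _).prodMk ((measurable_pi_apply _).prodMk (measurable_pi_apply _))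
  have h : IndepFun (U a) (fun ω => (U b ω, U c ω, U d ω)) μ := h0.comp hφ hψ
  rw [indepFun_iff_map_prod_eq_prod_map_map (hUmeas a).aemeasurable
    ((hUmeas b).prodMk ((hUmeas c).prodMk (hUmeas d))).aemeasurable] at h
  rw [h, hUlaw, law3 hUmeas hUindep hUlaw b c d hbc hbd hcd]

lemma law5 (hUmeas : ∀ i, Measurable (U i))
    (hUindep : iIndepFun U μ)
    (hUlaw : ∀ i, μ.map (U i) = ((volume : Measure ℝ).restrict (Set.Icc (0:ℝ) 1))) (a b c d e : Fin n)
    (hab : a ≠ b) (hac : a ≠ c) (had : a ≠ d) (hae : a ≠ e)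
    (hbc : b ≠ c) (hbd : b ≠ d) (hbe : b ≠ e) (hcd : c ≠ d) (hce : c ≠ e) (hde : d ≠ e) :
    μ.map (fun ω => (U a ω, U b ω, U c ω, U d ω, U e ω))
      = Measure.prod ((volume : Measure ℝ).restrict (Set.Icc (0:ℝ) 1)) (Measure.prod ((volume : Measure ℝ).restrict (Set.Icc (0:ℝ) 1)) (Measure.prod ((volume : Measure ℝ).restrict (Set.Icc (0:ℝ) 1)) (Measure.prod ((volume : Measure ℝ).restrict (Set.Icc (0:ℝ) 1)) ((volume : Measure ℝ).restrict (Set.Icc (0:ℝ) 1))))) := by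
  have hdisj : Disjoint ({a} : Finset (Fin n)) ({b, c, d, e} : Finset (Fin n)) := by
    simp [Finset.disjoint_left, hab, hac, had, hae]
  have h0 := hUindep.indepFun_finset {a} {b, c, d, e} hdisj hUmeas
  have hφ : Measurable (fun v : ({a} : Finset (Fin n)) → ℝ => v ⟨a, by simp⟩) :=
    measurable_pi_apply _
  have hψ : Measurable (fun v : ({b, c, d, e} : Finset (Fin n)) → ℝ =>
      (v ⟨b, by simp⟩, v ⟨c, by simp⟩, v ⟨d, by simp⟩, v ⟨e, by simp⟩)) :=
    (measurable_pi_apply _).prodMk ((measurable_pi_apply _).prodMk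
      ((measurable_pi_apply _).prodMk (measurable_pi_apply _)))
  have h : IndepFun (U a) (fun ω => (U b ω, U c ω, U d ω, U e ω)) μ := h0.comp hφ hψ
  rw [indepFun_iff_map_prod_eq_prod_map_map (hUmeas a).aemeasurable
    ((hUmeas b).prodMk ((hUmeas c).prodMk ((hUmeas d).prodMk (hUmeas e)))).aemeasurable] at h
  rw [h, hUlaw, law4 hUmeas hUindep hUlaw b c d e hbc hbd hbe hcd hce hde]

lemma bdd_integrable_s15 {α : Type*} [MeasurableSpace α] {ν : Measure α} [IsProbabilityMeasure ν]
    {F : α → ℝ} (hF : Measurable F) (hFb : ∀ p, |F p| ≤ 1) : Integrable F ν := by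
  refine Integrable.mono' (integrable_const 1) hF.aestronglyMeasurable ?_
  exact Filter.Eventually.of_forall fun p => by simpa [Real.norm_eq_abs] using hFb p

lemma int3 (hUmeas : ∀ i, Measurable (U i))
    (hUindep : iIndepFun U μ)
    (hUlaw : ∀ i, μ.map (U i) = ((volume : Measure ℝ).restrict (Set.Icc (0:ℝ) 1)))
    (F : ℝ × ℝ × ℝ → ℝ) (hF : Measurable F) (hFb : ∀ p, |F p| ≤ 1)
    (a b c : Fin n) (hab : a ≠ b) (hac : a ≠ c) (hbc : b ≠ c) :
    ∫ ω, F (U a ω, U b ω, U c ω) ∂μ = ∫ x, ∫ y, ∫ z, F (x, y, z) ∂((volume : Measure ℝ).restrict (Set.Icc (0:ℝ) 1)) ∂((volume : Measure ℝ).restrict (Set.Icc (0:ℝ) 1)) ∂((volume : Measure ℝ).restrict (Set.Icc (0:ℝ) 1)) := by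
  have hTm : Measurable (fun ω => (U a ω, U b ω, U c ω)) :=
    (hUmeas a).prodMk ((hUmeas b).prodMk (hUmeas c))
  have h1 : ∫ ω, F (U a ω, U b ω, U c ω) ∂μ
      = ∫ p, F p ∂(μ.map (fun ω => (U a ω, U b ω, U c ω))) :=
    (integral_map hTm.aemeasurable hF.aestronglyMeasurable).symm
  rw [h1, law3 hUmeas hUindep hUlaw a b c hab hac hbc,
    MeasureTheory.integral_prod _ (bdd_integrable_s15 hF hFb)]
  refine integral_congr_ae (Filter.Eventually.of_forall fun x => ?_)
  exact MeasureTheory.integral_prod (fun q => F (x, q))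
    (bdd_integrable_s15 (F := fun q => F (x, q)) (hF.comp measurable_prodMk_left)
      (fun p => hFb (x, p)))

lemma int4 (hUmeas : ∀ i, Measurable (U i))
    (hUindep : iIndepFun U μ)
    (hUlaw : ∀ i, μ.map (U i) = ((volume : Measure ℝ).restrict (Set.Icc (0:ℝ) 1)))
    (F : ℝ × ℝ × ℝ × ℝ → ℝ) (hF : Measurable F) (hFb : ∀ p, |F p| ≤ 1)
    (a b c d : Fin n)
    (hab : a ≠ b) (hac : a ≠ c) (had : a ≠ d) (hbc : b ≠ c) (hbd : b ≠ d) (hcd : c ≠ d) :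
    ∫ ω, F (U a ω, U b ω, U c ω, U d ω) ∂μ
      = ∫ x, ∫ y, ∫ z, ∫ w, F (x, y, z, w) ∂((volume : Measure ℝ).restrict (Set.Icc (0:ℝ) 1)) ∂((volume : Measure ℝ).restrict (Set.Icc (0:ℝ) 1)) ∂((volume : Measure ℝ).restrict (Set.Icc (0:ℝ) 1)) ∂((volume : Measure ℝ).restrict (Set.Icc (0:ℝ) 1)) := by
  have hTm : Measurable (fun ω => (U a ω, U b ω, U c ω, U d ω)) :=
    (hUmeas a).prodMk ((hUmeas b).prodMk ((hUmeas c).prodMk (hUmeas d)))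
  have h1 : ∫ ω, F (U a ω, U b ω, U c ω, U d ω) ∂μ
      = ∫ p, F p ∂(μ.map (fun ω => (U a ω, U b ω, U c ω, U d ω))) :=
    (integral_map hTm.aemeasurable hF.aestronglyMeasurable).symm
  rw [h1, law4 hUmeas hUindep hUlaw a b c d hab hac had hbc hbd hcd,
    MeasureTheory.integral_prod _ (bdd_integrable_s15 hF hFb)]
  refine integral_congr_ae (Filter.Eventually.of_forall fun x => ?_)
  show ∫ q, F (x, q) ∂(Measure.prod ((volume : Measure ℝ).restrict (Set.Icc (0:ℝ) 1)) (Measure.prod ((volume : Measure ℝ).restrict (Set.Icc (0:ℝ) 1)) ((volume : Measure ℝ).restrict (Set.Icc (0:ℝ) 1)))) = _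
  rw [MeasureTheory.integral_prod (fun q => F (x, q))
    (bdd_integrable_s15 (F := fun q => F (x, q)) (hF.comp measurable_prodMk_left)
      (fun p => hFb (x, p)))]
  refine integral_congr_ae (Filter.Eventually.of_forall fun y => ?_)
  exact MeasureTheory.integral_prod (fun q => F (x, y, q))
    (bdd_integrable_s15 (F := fun q => F (x, y, q))
      ((hF.comp measurable_prodMk_left).comp measurable_prodMk_left)
      (fun p => hFb (x, y, p)))

lemma int5 (hUmeas : ∀ i, Measurable (U i))
    (hUindep : iIndepFun U μ)
    (hUlaw : ∀ i, μ.map (U i) = ((volume : Measure ℝ).restrict (Set.Icc (0:ℝ) 1)))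
    (F : ℝ × ℝ × ℝ × ℝ × ℝ → ℝ) (hF : Measurable F) (hFb : ∀ p, |F p| ≤ 1)
    (a b c d e : Fin n)
    (hab : a ≠ b) (hac : a ≠ c) (had : a ≠ d) (hae : a ≠ e)
    (hbc : b ≠ c) (hbd : b ≠ d) (hbe : b ≠ e) (hcd : c ≠ d) (hce : c ≠ e) (hde : d ≠ e) :
    ∫ ω, F (U a ω, U b ω, U c ω, U d ω, U e ω) ∂μ
      = ∫ x, ∫ y, ∫ z, ∫ w, ∫ v, F (x, y, z, w, v) ∂((volume : Measure ℝ).restrict (Set.Icc (0:ℝ) 1)) ∂((volume : Measure ℝ).restrict (Set.Icc (0:ℝ) 1)) ∂((volume : Measure ℝ).restrict (Set.Icc (0:ℝ) 1)) ∂((volume : Measure ℝ).restrict (Set.Icc (0:ℝ) 1)) ∂((volume : Measure ℝ).restrict (Set.Icc (0:ℝ) 1)) := by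
  have hTm : Measurable (fun ω => (U a ω, U b ω, U c ω, U d ω, U e ω)) :=
    (hUmeas a).prodMk ((hUmeas b).prodMk ((hUmeas c).prodMk ((hUmeas d).prodMk (hUmeas e))))
  have h1 : ∫ ω, F (U a ω, U b ω, U c ω, U d ω, U e ω) ∂μ
      = ∫ p, F p ∂(μ.map (fun ω => (U a ω, U b ω, U c ω, U d ω, U e ω))) :=
    (integral_map hTm.aemeasurable hF.aestronglyMeasurable).symm
  rw [h1, law5 hUmeas hUindep hUlaw a b c d e hab hac had hae hbc hbd hbe hcd hce hde,
    MeasureTheory.integral_prod _ (bdd_integrable_s15 hF hFb)]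
  refine integral_congr_ae (Filter.Eventually.of_forall fun x => ?_)
  show ∫ q, F (x, q) ∂(Measure.prod ((volume : Measure ℝ).restrict (Set.Icc (0:ℝ) 1)) (Measure.prod ((volume : Measure ℝ).restrict (Set.Icc (0:ℝ) 1)) (Measure.prod ((volume : Measure ℝ).restrict (Set.Icc (0:ℝ) 1)) ((volume : Measure ℝ).restrict (Set.Icc (0:ℝ) 1))))) = _
  rw [MeasureTheory.integral_prod (fun q => F (x, q))
    (bdd_integrable_s15 (F := fun q => F (x, q)) (hF.comp measurable_prodMk_left)
      (fun p => hFb (x, p)))]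
  refine integral_congr_ae (Filter.Eventually.of_forall fun y => ?_)
  show ∫ q, F (x, y, q) ∂(Measure.prod ((volume : Measure ℝ).restrict (Set.Icc (0:ℝ) 1)) (Measure.prod ((volume : Measure ℝ).restrict (Set.Icc (0:ℝ) 1)) ((volume : Measure ℝ).restrict (Set.Icc (0:ℝ) 1)))) = _
  rw [MeasureTheory.integral_prod (fun q => F (x, y, q))
    (bdd_integrable_s15 (F := fun q => F (x, y, q))
      ((hF.comp measurable_prodMk_left).comp measurable_prodMk_left)
      (fun p => hFb (x, y, p)))]
  refine integral_congr_ae (Filter.Eventually.of_forall fun z => ?_)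
  exact MeasureTheory.integral_prod (fun q => F (x, y, z, q))
    (bdd_integrable_s15 (F := fun q => F (x, y, z, q))
      (((hF.comp measurable_prodMk_left).comp measurable_prodMk_left).comp
        measurable_prodMk_left)
      (fun p => hFb (x, y, z, p)))

end analytic

section evals

variable {Ω : Type*} [MeasurableSpace Ω] {μ : Measure Ω} [IsProbabilityMeasure μ]
  {n : ℕ} {Φ : ℝ → ℝ → ℝ} {U : Fin n → Ω → ℝ}

lemma absPhi (hΦ01 : ∀ u v, 0 ≤ Φ u v ∧ Φ u v ≤ 1) (u v : ℝ) : |Φ u v| ≤ 1 :=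
  abs_le.mpr ⟨by linarith [(hΦ01 u v).1], (hΦ01 u v).2⟩

lemma abs_mul_le_one' {a b : ℝ} (ha : |a| ≤ 1) (hb : |b| ≤ 1) : |a * b| ≤ 1 := by
  rw [abs_mul]; exact mul_le_one₀ ha (abs_nonneg _) hb

lemma mPhi {α : Type*} [MeasurableSpace α] (hΦmeas : Measurable fun q : ℝ × ℝ => Φ q.1 q.2)
    {f g : α → ℝ} (hf : Measurable f) (hg : Measurable g) :
    Measurable fun p => Φ (f p) (g p) := hΦmeas.comp (hf.prodMk hg)

lemma E2star (hΦmeas : Measurable fun q : ℝ × ℝ => Φ q.1 q.2)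
    (hΦ01 : ∀ u v, 0 ≤ Φ u v ∧ Φ u v ≤ 1)
    (hUmeas : ∀ i, Measurable (U i))
    (hUindep : iIndepFun U μ)
    (hUlaw : ∀ i, μ.map (U i) = (volume : Measure ℝ).restrict (Set.Icc (0:ℝ) 1))
    (a b c : Fin n) (hab : a ≠ b) (hac : a ≠ c) (hbc : b ≠ c) :
    ∫ ω, Φ (U a ω) (U b ω) * Φ (U a ω) (U c ω) ∂μ
      = ∫ u in Set.Icc (0:ℝ) 1, ∫ v in Set.Icc (0:ℝ) 1, ∫ w in Set.Icc (0:ℝ) 1,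
          Φ u v * Φ u w :=
  int3 hUmeas hUindep hUlaw (fun p => Φ p.1 p.2.1 * Φ p.1 p.2.2)
    ((mPhi hΦmeas measurable_fst (measurable_fst.comp measurable_snd)).mul
      (mPhi hΦmeas measurable_fst (measurable_snd.comp measurable_snd)))
    (fun p => abs_mul_le_one' (absPhi hΦ01 _ _) (absPhi hΦ01 _ _)) a b c hab hac hbc

lemma Etri (hΦmeas : Measurable fun q : ℝ × ℝ => Φ q.1 q.2)
    (hΦ01 : ∀ u v, 0 ≤ Φ u v ∧ Φ u v ≤ 1)
    (hUmeas : ∀ i, Measurable (U i))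
    (hUindep : iIndepFun U μ)
    (hUlaw : ∀ i, μ.map (U i) = (volume : Measure ℝ).restrict (Set.Icc (0:ℝ) 1))
    (a b c : Fin n) (hab : a ≠ b) (hac : a ≠ c) (hbc : b ≠ c) :
    ∫ ω, Φ (U a ω) (U b ω) * Φ (U b ω) (U c ω) * Φ (U a ω) (U c ω) ∂μ
      = ∫ u in Set.Icc (0:ℝ) 1, ∫ v in Set.Icc (0:ℝ) 1, ∫ w in Set.Icc (0:ℝ) 1,
          Φ u v * Φ v w * Φ u w :=
  int3 hUmeas hUindep hUlaw (fun p => Φ p.1 p.2.1 * Φ p.2.1 p.2.2 * Φ p.1 p.2.2)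
    (((mPhi hΦmeas measurable_fst (measurable_fst.comp measurable_snd)).mul
      (mPhi hΦmeas (measurable_fst.comp measurable_snd) (measurable_snd.comp measurable_snd))).mul
      (mPhi hΦmeas measurable_fst (measurable_snd.comp measurable_snd)))
    (fun p => abs_mul_le_one' (abs_mul_le_one' (absPhi hΦ01 _ _) (absPhi hΦ01 _ _))
      (absPhi hΦ01 _ _)) a b c hab hac hbc

lemma E3star (hΦmeas : Measurable fun q : ℝ × ℝ => Φ q.1 q.2)
    (hΦ01 : ∀ u v, 0 ≤ Φ u v ∧ Φ u v ≤ 1)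
    (hUmeas : ∀ i, Measurable (U i))
    (hUindep : iIndepFun U μ)
    (hUlaw : ∀ i, μ.map (U i) = (volume : Measure ℝ).restrict (Set.Icc (0:ℝ) 1))
    (a b c d : Fin n)
    (hab : a ≠ b) (hac : a ≠ c) (had : a ≠ d) (hbc : b ≠ c) (hbd : b ≠ d) (hcd : c ≠ d) :
    ∫ ω, Φ (U a ω) (U b ω) * Φ (U a ω) (U c ω) * Φ (U a ω) (U d ω) ∂μ
      = ∫ u in Set.Icc (0:ℝ) 1, ∫ v in Set.Icc (0:ℝ) 1, ∫ w in Set.Icc (0:ℝ) 1,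
          ∫ x in Set.Icc (0:ℝ) 1, Φ u v * Φ u w * Φ u x :=
  int4 hUmeas hUindep hUlaw
    (fun p => Φ p.1 p.2.1 * Φ p.1 p.2.2.1 * Φ p.1 p.2.2.2)
    (((mPhi hΦmeas measurable_fst (measurable_fst.comp measurable_snd)).mul
      (mPhi hΦmeas measurable_fst ((measurable_fst.comp measurable_snd).comp measurable_snd))).mul
      (mPhi hΦmeas measurable_fst ((measurable_snd.comp measurable_snd).comp measurable_snd)))
    (fun p => abs_mul_le_one' (abs_mul_le_one' (absPhi hΦ01 _ _) (absPhi hΦ01 _ _))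
      (absPhi hΦ01 _ _)) a b c d hab hac had hbc hbd hcd

lemma Epath (hΦmeas : Measurable fun q : ℝ × ℝ => Φ q.1 q.2)
    (hΦ01 : ∀ u v, 0 ≤ Φ u v ∧ Φ u v ≤ 1)
    (hUmeas : ∀ i, Measurable (U i))
    (hUindep : iIndepFun U μ)
    (hUlaw : ∀ i, μ.map (U i) = (volume : Measure ℝ).restrict (Set.Icc (0:ℝ) 1))
    (a b c d : Fin n)
    (hab : a ≠ b) (hac : a ≠ c) (had : a ≠ d) (hbc : b ≠ c) (hbd : b ≠ d) (hcd : c ≠ d) :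
    ∫ ω, Φ (U a ω) (U b ω) * Φ (U b ω) (U c ω) * Φ (U c ω) (U d ω) ∂μ
      = ∫ u in Set.Icc (0:ℝ) 1, ∫ v in Set.Icc (0:ℝ) 1, ∫ w in Set.Icc (0:ℝ) 1,
          ∫ x in Set.Icc (0:ℝ) 1, Φ u v * Φ v w * Φ w x :=
  int4 hUmeas hUindep hUlaw
    (fun p => Φ p.1 p.2.1 * Φ p.2.1 p.2.2.1 * Φ p.2.2.1 p.2.2.2)
    (((mPhi hΦmeas measurable_fst (measurable_fst.comp measurable_snd)).mul
      (mPhi hΦmeas (measurable_fst.comp measurable_snd)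
        ((measurable_fst.comp measurable_snd).comp measurable_snd))).mul
      (mPhi hΦmeas ((measurable_fst.comp measurable_snd).comp measurable_snd)
        ((measurable_snd.comp measurable_snd).comp measurable_snd)))
    (fun p => abs_mul_le_one' (abs_mul_le_one' (absPhi hΦ01 _ _) (absPhi hΦ01 _ _))
      (absPhi hΦ01 _ _)) a b c d hab hac had hbc hbd hcd

lemma Edisj (hΦmeas : Measurable fun q : ℝ × ℝ => Φ q.1 q.2)
    (hΦ01 : ∀ u v, 0 ≤ Φ u v ∧ Φ u v ≤ 1)
    (hUmeas : ∀ i, Measurable (U i))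
    (hUindep : iIndepFun U μ)
    (hUlaw : ∀ i, μ.map (U i) = (volume : Measure ℝ).restrict (Set.Icc (0:ℝ) 1))
    (a b c d e : Fin n)
    (hab : a ≠ b) (hac : a ≠ c) (had : a ≠ d) (hae : a ≠ e)
    (hbc : b ≠ c) (hbd : b ≠ d) (hbe : b ≠ e) (hcd : c ≠ d) (hce : c ≠ e) (hde : d ≠ e) :
    ∫ ω, Φ (U a ω) (U b ω) * Φ (U c ω) (U d ω) * Φ (U c ω) (U e ω) ∂μ
      = (∫ u in Set.Icc (0:ℝ) 1, ∫ v in Set.Icc (0:ℝ) 1, Φ u v)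
        * (∫ u in Set.Icc (0:ℝ) 1, ∫ v in Set.Icc (0:ℝ) 1, ∫ w in Set.Icc (0:ℝ) 1,
            Φ u v * Φ u w) := by
  have h5 := int5 hUmeas hUindep hUlaw
    (fun p => Φ p.1 p.2.1 * Φ p.2.2.1 p.2.2.2.1 * Φ p.2.2.1 p.2.2.2.2)
    (((mPhi hΦmeas measurable_fst (measurable_fst.comp measurable_snd)).mul
      (mPhi hΦmeas ((measurable_fst.comp measurable_snd).comp measurable_snd)
        (((measurable_fst.comp measurable_snd).comp measurable_snd).comp measurable_snd))).mul
      (mPhi hΦmeas ((measurable_fst.comp measurable_snd).comp measurable_snd)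
        (((measurable_snd.comp measurable_snd).comp measurable_snd).comp measurable_snd)))
    (fun p => abs_mul_le_one' (abs_mul_le_one' (absPhi hΦ01 _ _) (absPhi hΦ01 _ _))
      (absPhi hΦ01 _ _)) a b c d e hab hac had hae hbc hbd hbe hcd hce hde
  refine h5.trans ?_
  have hA : ∀ X Z : ℝ, (∫ v, X * Φ Z v ∂((volume : Measure ℝ).restrict (Set.Icc (0:ℝ) 1)))
      = X * ∫ v, Φ Z v ∂((volume : Measure ℝ).restrict (Set.Icc (0:ℝ) 1)) :=
    fun X Z => integral_const_mul X _
  have hB : ∀ X Z : ℝ,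
      (∫ w, X * Φ Z w * (∫ v, Φ Z v ∂((volume : Measure ℝ).restrict (Set.Icc (0:ℝ) 1)))
          ∂((volume : Measure ℝ).restrict (Set.Icc (0:ℝ) 1)))
      = X * ((∫ v, Φ Z v ∂((volume : Measure ℝ).restrict (Set.Icc (0:ℝ) 1)))
          * (∫ v, Φ Z v ∂((volume : Measure ℝ).restrict (Set.Icc (0:ℝ) 1)))) := by
    intro X Z
    rw [show (fun w => X * Φ Z w
        * (∫ v, Φ Z v ∂((volume : Measure ℝ).restrict (Set.Icc (0:ℝ) 1))))
      = fun w => (X * (∫ v, Φ Z v ∂((volume : Measure ℝ).restrict (Set.Icc (0:ℝ) 1)))) * Φ Z w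
      from funext fun w => by ring, integral_const_mul]
    ring
  have hC : ∀ X : ℝ,
      (∫ z, X * ((∫ v, Φ z v ∂((volume : Measure ℝ).restrict (Set.Icc (0:ℝ) 1)))
          * (∫ v, Φ z v ∂((volume : Measure ℝ).restrict (Set.Icc (0:ℝ) 1))))
        ∂((volume : Measure ℝ).restrict (Set.Icc (0:ℝ) 1)))
      = X * ∫ z, (∫ v, Φ z v ∂((volume : Measure ℝ).restrict (Set.Icc (0:ℝ) 1)))
          * (∫ v, Φ z v ∂((volume : Measure ℝ).restrict (Set.Icc (0:ℝ) 1)))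
        ∂((volume : Measure ℝ).restrict (Set.Icc (0:ℝ) 1)) :=
    fun X => integral_const_mul X _
  have hD : ∀ X : ℝ, ∀ J : ℝ,
      (∫ y, Φ X y * J ∂((volume : Measure ℝ).restrict (Set.Icc (0:ℝ) 1)))
      = (∫ y, Φ X y ∂((volume : Measure ℝ).restrict (Set.Icc (0:ℝ) 1))) * J :=
    fun X J => integral_mul_const J _
  have hE : ∀ J : ℝ,
      (∫ x, (∫ v, Φ x v ∂((volume : Measure ℝ).restrict (Set.Icc (0:ℝ) 1))) * J
          ∂((volume : Measure ℝ).restrict (Set.Icc (0:ℝ) 1)))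
      = (∫ x, (∫ v, Φ x v ∂((volume : Measure ℝ).restrict (Set.Icc (0:ℝ) 1)))
          ∂((volume : Measure ℝ).restrict (Set.Icc (0:ℝ) 1))) * J :=
    fun J => integral_mul_const J _
  simp only [hA, hB, hC, hD, hE]

end evals

section bridge

variable {Ω : Type*} [MeasurableSpace Ω] {μ : Measure Ω} [IsProbabilityMeasure μ]
  {n : ℕ} {Φ : ℝ → ℝ → ℝ} {U : Fin n → Ω → ℝ} {Y : Fin n → Fin n → Ω → ℝ}

def sp {n : ℕ} (p q : Fin n) : Fin n × Fin n := if p < q then (p, q) else (q, p)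

lemma sp_lt {p q : Fin n} (h : p ≠ q) : (sp p q).1 < (sp p q).2 := by
  unfold sp; split_ifs with h'
  · exact h'
  · exact h.lt_or_gt.resolve_left h'

lemma sp_pair (p q : Fin n) : ({(sp p q).1, (sp p q).2} : Finset (Fin n)) = {p, q} := by
  unfold sp; split_ifs
  · rfl
  · exact Finset.pair_comm q p

lemma sp_ne {p q r s : Fin n} (h : ({p, q} : Finset (Fin n)) ≠ {r, s}) : sp p q ≠ sp r s := by
  intro e
  exact h (by rw [← sp_pair p q, ← sp_pair r s, e])

lemma pair_ne_left {p q r s : Fin n} (h1 : p ≠ r) (h2 : p ≠ s) :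
    ({p, q} : Finset (Fin n)) ≠ {r, s} := by
  intro h
  have hp : p ∈ ({r, s} : Finset (Fin n)) := h ▸ (by simp)
  simp only [mem_insert, mem_singleton] at hp
  tauto

lemma pair_ne_right {p q r s : Fin n} (h1 : q ≠ r) (h2 : q ≠ s) :
    ({p, q} : Finset (Fin n)) ≠ {r, s} := by
  intro h
  have hq : q ∈ ({r, s} : Finset (Fin n)) := h ▸ (by simp)
  simp only [mem_insert, mem_singleton] at hq
  tauto

lemma Y_sp (hYsym : ∀ i j, Y i j = Y j i) (p q : Fin n) :
    Y (sp p q).1 (sp p q).2 = Y p q := by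
  unfold sp; split_ifs
  · rfl
  · exact hYsym q p

lemma Phi_sp (hΦsym : ∀ u v, Φ u v = Φ v u) (p q : Fin n) (ω : Ω) :
    Φ (U (sp p q).1 ω) (U (sp p q).2 ω) = Φ (U p ω) (U q ω) := by
  unfold sp; split_ifs
  · rfl
  · exact hΦsym _ _

lemma B2 (hYsym : ∀ i j, Y i j = Y j i) (hΦsym : ∀ u v, Φ u v = Φ v u)
    (hmom : ∀ S : Finset (Fin n × Fin n), (∀ e ∈ S, e.1 < e.2) →
      ∫ ω, ∏ e ∈ S, Y e.1 e.2 ω ∂μ = ∫ ω, ∏ e ∈ S, Φ (U e.1 ω) (U e.2 ω) ∂μ)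
    (p₁ q₁ p₂ q₂ : Fin n) (h1 : p₁ ≠ q₁) (h2 : p₂ ≠ q₂)
    (hd : ({p₁, q₁} : Finset (Fin n)) ≠ {p₂, q₂}) :
    ∫ ω, Y p₁ q₁ ω * Y p₂ q₂ ω ∂μ
      = ∫ ω, Φ (U p₁ ω) (U q₁ ω) * Φ (U p₂ ω) (U q₂ ω) ∂μ := by
  have hne := sp_ne hd
  have hmm := hmom {sp p₁ q₁, sp p₂ q₂} (by
    intro e he
    simp only [mem_insert, mem_singleton] at he
    rcases he with rfl | rfl
    · exact sp_lt h1
    · exact sp_lt h2)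
  have e1 : (fun ω => ∏ e ∈ ({sp p₁ q₁, sp p₂ q₂} : Finset (Fin n × Fin n)), Y e.1 e.2 ω)
      = fun ω => Y p₁ q₁ ω * Y p₂ q₂ ω := by
    funext ω
    rw [Finset.prod_insert (by simp [hne]), Finset.prod_singleton, Y_sp hYsym, Y_sp hYsym]
  have e2 : (fun ω => ∏ e ∈ ({sp p₁ q₁, sp p₂ q₂} : Finset (Fin n × Fin n)),
        Φ (U e.1 ω) (U e.2 ω))
      = fun ω => Φ (U p₁ ω) (U q₁ ω) * Φ (U p₂ ω) (U q₂ ω) := by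
    funext ω
    rw [Finset.prod_insert (by simp [hne]), Finset.prod_singleton, Phi_sp hΦsym,
      Phi_sp hΦsym]
  rw [← e1, ← e2]; exact hmm

lemma B3 (hYsym : ∀ i j, Y i j = Y j i) (hΦsym : ∀ u v, Φ u v = Φ v u)
    (hmom : ∀ S : Finset (Fin n × Fin n), (∀ e ∈ S, e.1 < e.2) →
      ∫ ω, ∏ e ∈ S, Y e.1 e.2 ω ∂μ = ∫ ω, ∏ e ∈ S, Φ (U e.1 ω) (U e.2 ω) ∂μ)
    (p₁ q₁ p₂ q₂ p₃ q₃ : Fin n) (h1 : p₁ ≠ q₁) (h2 : p₂ ≠ q₂) (h3 : p₃ ≠ q₃)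
    (hd12 : ({p₁, q₁} : Finset (Fin n)) ≠ {p₂, q₂})
    (hd13 : ({p₁, q₁} : Finset (Fin n)) ≠ {p₃, q₃})
    (hd23 : ({p₂, q₂} : Finset (Fin n)) ≠ {p₃, q₃}) :
    ∫ ω, Y p₁ q₁ ω * Y p₂ q₂ ω * Y p₃ q₃ ω ∂μ
      = ∫ ω, Φ (U p₁ ω) (U q₁ ω) * Φ (U p₂ ω) (U q₂ ω) * Φ (U p₃ ω) (U q₃ ω) ∂μ := by
  have hne12 := sp_ne hd12
  have hne13 := sp_ne hd13
  have hne23 := sp_ne hd23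
  have hmm := hmom {sp p₁ q₁, sp p₂ q₂, sp p₃ q₃} (by
    intro e he
    simp only [mem_insert, mem_singleton] at he
    rcases he with rfl | rfl | rfl
    · exact sp_lt h1
    · exact sp_lt h2
    · exact sp_lt h3)
  have e1 : (fun ω => ∏ e ∈ ({sp p₁ q₁, sp p₂ q₂, sp p₃ q₃} : Finset (Fin n × Fin n)),
        Y e.1 e.2 ω)
      = fun ω => Y p₁ q₁ ω * Y p₂ q₂ ω * Y p₃ q₃ ω := by
    funext ω
    rw [Finset.prod_insert (by simp [hne12, hne13]), Finset.prod_insert (by simp [hne23]),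
      Finset.prod_singleton, Y_sp hYsym, Y_sp hYsym, Y_sp hYsym]
    ring
  have e2 : (fun ω => ∏ e ∈ ({sp p₁ q₁, sp p₂ q₂, sp p₃ q₃} : Finset (Fin n × Fin n)),
        Φ (U e.1 ω) (U e.2 ω))
      = fun ω => Φ (U p₁ ω) (U q₁ ω) * Φ (U p₂ ω) (U q₂ ω) * Φ (U p₃ ω) (U q₃ ω) := by
    funext ω
    rw [Finset.prod_insert (by simp [hne12, hne13]), Finset.prod_insert (by simp [hne23]),
      Finset.prod_singleton, Phi_sp hΦsym, Phi_sp hΦsym, Phi_sp hΦsym]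
    ring
  rw [← e1, ← e2]; exact hmm

end bridge

section values

variable {Ω : Type*} [MeasurableSpace Ω] {μ : Measure Ω} [IsProbabilityMeasure μ]
  {n : ℕ} {Φ : ℝ → ℝ → ℝ} {U : Fin n → Ω → ℝ} {Y : Fin n → Fin n → Ω → ℝ}

lemma Vstar2 (hΦmeas : Measurable fun q : ℝ × ℝ => Φ q.1 q.2)
    (hΦsym : ∀ u v, Φ u v = Φ v u)
    (hΦ01 : ∀ u v, 0 ≤ Φ u v ∧ Φ u v ≤ 1)
    (hUmeas : ∀ i, Measurable (U i))
    (hUindep : iIndepFun U μ)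
    (hUlaw : ∀ i, μ.map (U i) = (volume : Measure ℝ).restrict (Set.Icc (0:ℝ) 1))
    (hYsym : ∀ i j, Y i j = Y j i)
    (hmom : ∀ S : Finset (Fin n × Fin n), (∀ e ∈ S, e.1 < e.2) →
      ∫ ω, ∏ e ∈ S, Y e.1 e.2 ω ∂μ = ∫ ω, ∏ e ∈ S, Φ (U e.1 ω) (U e.2 ω) ∂μ)
    (x y z : Fin n) (hxy : x ≠ y) (hxz : x ≠ z) (hyz : y ≠ z) :
    ∫ ω, Y x y ω * Y x z ω ∂μ
      = ∫ u in Set.Icc (0:ℝ) 1, ∫ v in Set.Icc (0:ℝ) 1, ∫ w in Set.Icc (0:ℝ) 1,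
          Φ u v * Φ u w :=
  (B2 hYsym hΦsym hmom x y x z hxy hxz (pair_ne_right hxy.symm hyz)).trans
    (E2star hΦmeas hΦ01 hUmeas hUindep hUlaw x y z hxy hxz hyz)

lemma Vtri (hΦmeas : Measurable fun q : ℝ × ℝ => Φ q.1 q.2)
    (hΦsym : ∀ u v, Φ u v = Φ v u)
    (hΦ01 : ∀ u v, 0 ≤ Φ u v ∧ Φ u v ≤ 1)
    (hUmeas : ∀ i, Measurable (U i))
    (hUindep : iIndepFun U μ)
    (hUlaw : ∀ i, μ.map (U i) = (volume : Measure ℝ).restrict (Set.Icc (0:ℝ) 1))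
    (hYsym : ∀ i j, Y i j = Y j i)
    (hmom : ∀ S : Finset (Fin n × Fin n), (∀ e ∈ S, e.1 < e.2) →
      ∫ ω, ∏ e ∈ S, Y e.1 e.2 ω ∂μ = ∫ ω, ∏ e ∈ S, Φ (U e.1 ω) (U e.2 ω) ∂μ)
    (x y z : Fin n) (hxy : x ≠ y) (hxz : x ≠ z) (hyz : y ≠ z) :
    ∫ ω, Y x y ω * Y y z ω * Y x z ω ∂μ
      = ∫ u in Set.Icc (0:ℝ) 1, ∫ v in Set.Icc (0:ℝ) 1, ∫ w in Set.Icc (0:ℝ) 1,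
          Φ u v * Φ v w * Φ u w :=
  (B3 hYsym hΦsym hmom x y y z x z hxy hyz hxz
      (pair_ne_left hxy hxz) (pair_ne_right hxy.symm hyz) (pair_ne_left hxy.symm hyz)).trans
    (Etri hΦmeas hΦ01 hUmeas hUindep hUlaw x y z hxy hxz hyz)

lemma Vstar3 (hΦmeas : Measurable fun q : ℝ × ℝ => Φ q.1 q.2)
    (hΦsym : ∀ u v, Φ u v = Φ v u)
    (hΦ01 : ∀ u v, 0 ≤ Φ u v ∧ Φ u v ≤ 1)
    (hUmeas : ∀ i, Measurable (U i))
    (hUindep : iIndepFun U μ)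
    (hUlaw : ∀ i, μ.map (U i) = (volume : Measure ℝ).restrict (Set.Icc (0:ℝ) 1))
    (hYsym : ∀ i j, Y i j = Y j i)
    (hmom : ∀ S : Finset (Fin n × Fin n), (∀ e ∈ S, e.1 < e.2) →
      ∫ ω, ∏ e ∈ S, Y e.1 e.2 ω ∂μ = ∫ ω, ∏ e ∈ S, Φ (U e.1 ω) (U e.2 ω) ∂μ)
    (c l₁ l₂ l₃ : Fin n) (h1 : c ≠ l₁) (h2 : c ≠ l₂) (h3 : c ≠ l₃)
    (h12 : l₁ ≠ l₂) (h13 : l₁ ≠ l₃) (h23 : l₂ ≠ l₃) :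
    ∫ ω, Y c l₁ ω * Y c l₂ ω * Y c l₃ ω ∂μ
      = ∫ u in Set.Icc (0:ℝ) 1, ∫ v in Set.Icc (0:ℝ) 1, ∫ w in Set.Icc (0:ℝ) 1,
          ∫ x in Set.Icc (0:ℝ) 1, Φ u v * Φ u w * Φ u x :=
  (B3 hYsym hΦsym hmom c l₁ c l₂ c l₃ h1 h2 h3
      (pair_ne_right h1.symm h12) (pair_ne_right h1.symm h13) (pair_ne_right h2.symm h23)).trans
    (E3star hΦmeas hΦ01 hUmeas hUindep hUlaw c l₁ l₂ l₃ h1 h2 h3 h12 h13 h23)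

lemma Vpath (hΦmeas : Measurable fun q : ℝ × ℝ => Φ q.1 q.2)
    (hΦsym : ∀ u v, Φ u v = Φ v u)
    (hΦ01 : ∀ u v, 0 ≤ Φ u v ∧ Φ u v ≤ 1)
    (hUmeas : ∀ i, Measurable (U i))
    (hUindep : iIndepFun U μ)
    (hUlaw : ∀ i, μ.map (U i) = (volume : Measure ℝ).restrict (Set.Icc (0:ℝ) 1))
    (hYsym : ∀ i j, Y i j = Y j i)
    (hmom : ∀ S : Finset (Fin n × Fin n), (∀ e ∈ S, e.1 < e.2) →
      ∫ ω, ∏ e ∈ S, Y e.1 e.2 ω ∂μ = ∫ ω, ∏ e ∈ S, Φ (U e.1 ω) (U e.2 ω) ∂μ)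
    (p q r s : Fin n) (hpq : p ≠ q) (hpr : p ≠ r) (hps : p ≠ s)
    (hqr : q ≠ r) (hqs : q ≠ s) (hrs : r ≠ s) :
    ∫ ω, Y p q ω * Y q r ω * Y r s ω ∂μ
      = ∫ u in Set.Icc (0:ℝ) 1, ∫ v in Set.Icc (0:ℝ) 1, ∫ w in Set.Icc (0:ℝ) 1,
          ∫ x in Set.Icc (0:ℝ) 1, Φ u v * Φ v w * Φ w x :=
  (B3 hYsym hΦsym hmom p q q r r s hpq hqr hrs
      (pair_ne_left hpq hpr) (pair_ne_left hpr hps) (pair_ne_left hqr hqs)).trans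
    (Epath hΦmeas hΦ01 hUmeas hUindep hUlaw p q r s hpq hpr hps hqr hqs hrs)

lemma Vdisj (hΦmeas : Measurable fun q : ℝ × ℝ => Φ q.1 q.2)
    (hΦsym : ∀ u v, Φ u v = Φ v u)
    (hΦ01 : ∀ u v, 0 ≤ Φ u v ∧ Φ u v ≤ 1)
    (hUmeas : ∀ i, Measurable (U i))
    (hUindep : iIndepFun U μ)
    (hUlaw : ∀ i, μ.map (U i) = (volume : Measure ℝ).restrict (Set.Icc (0:ℝ) 1))
    (hYsym : ∀ i j, Y i j = Y j i)
    (hmom : ∀ S : Finset (Fin n × Fin n), (∀ e ∈ S, e.1 < e.2) →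
      ∫ ω, ∏ e ∈ S, Y e.1 e.2 ω ∂μ = ∫ ω, ∏ e ∈ S, Φ (U e.1 ω) (U e.2 ω) ∂μ)
    (a b c l₁ l₂ : Fin n)
    (hab : a ≠ b) (hac : a ≠ c) (hal1 : a ≠ l₁) (hal2 : a ≠ l₂)
    (hbc : b ≠ c) (hbl1 : b ≠ l₁) (hbl2 : b ≠ l₂)
    (hcl1 : c ≠ l₁) (hcl2 : c ≠ l₂) (hl12 : l₁ ≠ l₂) :
    ∫ ω, Y a b ω * Y c l₁ ω * Y c l₂ ω ∂μ
      = (∫ u in Set.Icc (0:ℝ) 1, ∫ v in Set.Icc (0:ℝ) 1, Φ u v)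
        * (∫ u in Set.Icc (0:ℝ) 1, ∫ v in Set.Icc (0:ℝ) 1, ∫ w in Set.Icc (0:ℝ) 1,
            Φ u v * Φ u w) :=
  (B3 hYsym hΦsym hmom a b c l₁ c l₂ hab hcl1 hcl2
      (pair_ne_left hac hal1) (pair_ne_left hac hal2) (pair_ne_right hcl1.symm hl12)).trans
    (Edisj hΦmeas hΦ01 hUmeas hUindep hUlaw a b c l₁ l₂
      hab hac hal1 hal2 hbc hbl1 hbl2 hcl1 hcl2 hl12)

end values

section comb

lemma cast_choose_three (N : ℕ) :
    ((N.choose 3 : ℕ) : ℝ) = N * (N - 1) * (N - 2) / 6 := by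
  induction N with
  | zero => simp
  | succ m ih =>
    have h : (m + 1).choose 3 = m.choose 2 + m.choose 3 := Nat.choose_succ_succ m 2
    rw [h, Nat.cast_add, Nat.cast_choose_two, ih]
    push_cast
    ring

variable {n : ℕ}

lemma sum_pairs_eq (f : Fin n → Fin n → ℝ) :
    (∑ a, ∑ b ∈ univ.filter (fun b => a < b), f a b)
      = ∑ p ∈ (univ : Finset (Fin n × Fin n)).filter (fun p => p.1 < p.2), f p.1 p.2 := by
  rw [Finset.sum_filter, Fintype.sum_prod_type]
  exact Finset.sum_congr rfl fun a _ => (Finset.sum_filter _ _)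

lemma sum_trips_eq (f : Fin n → Fin n → Fin n → ℝ) :
    (∑ i, ∑ j ∈ univ.filter (fun j => i < j), ∑ k ∈ univ.filter (fun k => j < k), f i j k)
      = ∑ t ∈ (univ : Finset (Fin n × Fin n × Fin n)).filter
          (fun t => t.1 < t.2.1 ∧ t.2.1 < t.2.2), f t.1 t.2.1 t.2.2 := by
  rw [Finset.sum_filter, Fintype.sum_prod_type]
  refine Finset.sum_congr rfl fun i _ => ?_
  rw [Fintype.sum_prod_type, Finset.sum_filter]
  refine Finset.sum_congr rfl fun j _ => ?_
  by_cases hij : i < j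
  · simp only [hij, if_true, true_and]
    exact Finset.sum_filter _ _
  · simp [hij]

lemma main_comb (g : Fin n → Fin n → Fin n → Fin n → Fin n → ℝ) (A B C : ℝ)
    (hg : ∀ a b i j k, a < b → i < j → j < k →
      g a b i j k = if a ∈ ({i, j, k} : Finset (Fin n))
        then (if b ∈ ({i, j, k} : Finset (Fin n)) then A else B)
        else (if b ∈ ({i, j, k} : Finset (Fin n)) then B else C)) :
    (∑ i, ∑ j ∈ univ.filter (fun j => i < j), ∑ k ∈ univ.filter (fun k => j < k),
        ∑ a, ∑ b ∈ univ.filter (fun b => a < b), g a b i j k)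
      = (n.choose 3 : ℝ) * (3 * A
          + ((n.choose 2 : ℝ) - 3 - ((n - 3).choose 2 : ℝ)) * B
          + ((n - 3).choose 2 : ℝ) * C) := by
  classical
  set P := (univ : Finset (Fin n × Fin n)).filter (fun p => p.1 < p.2) with hPdef
  set T := (univ : Finset (Fin n × Fin n × Fin n)).filter
      (fun t => t.1 < t.2.1 ∧ t.2.1 < t.2.2) with hTdef
  have step1 : (∑ i, ∑ j ∈ univ.filter (fun j => i < j), ∑ k ∈ univ.filter (fun k => j < k),
        ∑ a, ∑ b ∈ univ.filter (fun b => a < b), g a b i j k)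
      = ∑ t ∈ T, ∑ p ∈ P, g p.1 p.2 t.1 t.2.1 t.2.2 := by
    rw [sum_trips_eq (f := fun i j k => ∑ a, ∑ b ∈ univ.filter (fun b => a < b), g a b i j k)]
    exact Finset.sum_congr rfl fun t _ => sum_pairs_eq _
  rw [step1]
  have key : ∀ t ∈ T, (∑ p ∈ P, g p.1 p.2 t.1 t.2.1 t.2.2)
      = 3 * A + ((n.choose 2 : ℝ) - 3 - ((n - 3).choose 2 : ℝ)) * B
          + ((n - 3).choose 2 : ℝ) * C := by
    rintro ⟨i, j, k⟩ ht
    simp only [hTdef, mem_filter] at ht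
    obtain ⟨-, hij, hjk⟩ := ht
    have hik : i < k := hij.trans hjk
    set D : Finset (Fin n) := {i, j, k} with hDdef
    have hDcard : D.card = 3 := by
      rw [hDdef, Finset.card_insert_of_notMem (by simp [hij.ne, hik.ne]),
        Finset.card_insert_of_notMem (by simp [hjk.ne]), Finset.card_singleton]
    have hstep : ∑ p ∈ P, g p.1 p.2 i j k
        = ∑ p ∈ P, (if p.1 ∈ D then (if p.2 ∈ D then A else B)
            else (if p.2 ∈ D then B else C)) := by
      refine Finset.sum_congr rfl fun p hp => ?_
      simp only [hPdef, mem_filter] at hp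
      exact hg p.1 p.2 i j k hp.2 hij hjk
    rw [hstep, Finset.sum_ite, Finset.sum_ite, Finset.sum_ite]
    simp only [Finset.sum_const, nsmul_eq_mul]
    -- cards
    have hc11 : ((P.filter (fun p => p.1 ∈ D)).filter (fun p => p.2 ∈ D))
        = ({(i, j), (i, k), (j, k)} : Finset (Fin n × Fin n)) := by
      ext ⟨a, b⟩
      simp only [hPdef, hDdef, mem_filter, mem_univ, true_and, mem_insert, mem_singleton,
        Prod.mk.injEq]
      constructor
      · rintro ⟨⟨hab, ha | ha | ha⟩, hb | hb | hb⟩ <;> subst ha <;> subst hb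
        · exact absurd hab (lt_irrefl _)
        · exact Or.inl ⟨rfl, rfl⟩
        · exact Or.inr (Or.inl ⟨rfl, rfl⟩)
        · exact absurd (hab.trans hij) (lt_irrefl _)
        · exact absurd hab (lt_irrefl _)
        · exact Or.inr (Or.inr ⟨rfl, rfl⟩)
        · exact absurd (hab.trans hik) (lt_irrefl _)
        · exact absurd (hab.trans hjk) (lt_irrefl _)
        · exact absurd hab (lt_irrefl _)
      · rintro (⟨rfl, rfl⟩ | ⟨rfl, rfl⟩ | ⟨rfl, rfl⟩)
        · exact ⟨⟨hij, Or.inl rfl⟩, Or.inr (Or.inl rfl)⟩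
        · exact ⟨⟨hik, Or.inl rfl⟩, Or.inr (Or.inr rfl)⟩
        · exact ⟨⟨hjk, Or.inr (Or.inl rfl)⟩, Or.inr (Or.inr rfl)⟩
    have hc11card : ((P.filter (fun p => p.1 ∈ D)).filter (fun p => p.2 ∈ D)).card = 3 := by
      rw [hc11, Finset.card_insert_of_notMem (by simp [Prod.ext_iff, hjk.ne, hij.ne]),
        Finset.card_insert_of_notMem (by simp [Prod.ext_iff, hij.ne]), Finset.card_singleton]
    have hc00card : ((P.filter (fun p => ¬p.1 ∈ D)).filter (fun p => ¬p.2 ∈ D)).card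
        = (n - 3).choose 2 := by
      have heq : ((P.filter (fun p => ¬p.1 ∈ D)).filter (fun p => ¬p.2 ∈ D))
          = (univ : Finset (Fin n × Fin n)).filter
              (fun p => (p.1 ∈ Dᶜ ∧ p.2 ∈ Dᶜ) ∧ p.1 < p.2) := by
        ext p
        simp only [hPdef, mem_filter, mem_univ, true_and, Finset.mem_compl]
        tauto
      rw [heq, pairs_card, Finset.card_compl, hDcard, Fintype.card_fin]
    have hPcard : P.card = n.choose 2 := by
      have heq : P = (univ : Finset (Fin n × Fin n)).filter
          (fun p => (p.1 ∈ (univ : Finset (Fin n)) ∧ p.2 ∈ univ) ∧ p.1 < p.2) := by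
        ext p; simp [hPdef]
      rw [heq, pairs_card, Finset.card_univ, Fintype.card_fin]
    have hsplit0 : (P.filter (fun p => p.1 ∈ D)).card
          + (P.filter (fun p => ¬p.1 ∈ D)).card = P.card :=
      Finset.card_filter_add_card_filter_not _
    have hsplit1 : ((P.filter (fun p => p.1 ∈ D)).filter (fun p => p.2 ∈ D)).card
          + ((P.filter (fun p => p.1 ∈ D)).filter (fun p => ¬p.2 ∈ D)).card
        = (P.filter (fun p => p.1 ∈ D)).card :=
      Finset.card_filter_add_card_filter_not _
    have hsplit2 : ((P.filter (fun p => ¬p.1 ∈ D)).filter (fun p => p.2 ∈ D)).card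
          + ((P.filter (fun p => ¬p.1 ∈ D)).filter (fun p => ¬p.2 ∈ D)).card
        = (P.filter (fun p => ¬p.1 ∈ D)).card :=
      Finset.card_filter_add_card_filter_not _
    have hmix : (((P.filter (fun p => p.1 ∈ D)).filter (fun p => ¬p.2 ∈ D)).card : ℝ)
          + (((P.filter (fun p => ¬p.1 ∈ D)).filter (fun p => p.2 ∈ D)).card : ℝ)
        = (n.choose 2 : ℝ) - 3 - ((n - 3).choose 2 : ℝ) := by
      have : ((P.filter (fun p => p.1 ∈ D)).filter (fun p => p.2 ∈ D)).card
            + ((P.filter (fun p => p.1 ∈ D)).filter (fun p => ¬p.2 ∈ D)).card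
            + (((P.filter (fun p => ¬p.1 ∈ D)).filter (fun p => p.2 ∈ D)).card
            + ((P.filter (fun p => ¬p.1 ∈ D)).filter (fun p => ¬p.2 ∈ D)).card)
          = P.card := by rw [hsplit1, hsplit2]; exact hsplit0
      rw [hc11card, hc00card, hPcard] at this
      have := congrArg (fun x : ℕ => (x : ℝ)) this
      push_cast at this
      linarith
    rw [hc11card, hc00card]
    push_cast
    linear_combination B * hmix
  rw [Finset.sum_congr rfl key, Finset.sum_const, nsmul_eq_mul]
  rw [hTdef]
  rw [trips_card]

end comb

section gvalsec

variable {Ω : Type*} [MeasurableSpace Ω] {μ : Measure Ω} [IsProbabilityMeasure μ]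
  {n : ℕ} {Φ : ℝ → ℝ → ℝ} {U : Fin n → Ω → ℝ} {Y : Fin n → Fin n → Ω → ℝ}

lemma gval (hΦmeas : Measurable fun q : ℝ × ℝ => Φ q.1 q.2)
    (hΦsym : ∀ u v, Φ u v = Φ v u)
    (hΦ01 : ∀ u v, 0 ≤ Φ u v ∧ Φ u v ≤ 1)
    (hUmeas : ∀ i, Measurable (U i))
    (hUindep : iIndepFun U μ)
    (hUlaw : ∀ i, μ.map (U i) = (volume : Measure ℝ).restrict (Set.Icc 0 1))
    (hYsym : ∀ i j, Y i j = Y j i)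
    (hYmeas : ∀ i j, Measurable (Y i j))
    (h01 : ∀ i j ω, Y i j ω = 0 ∨ Y i j ω = 1)
    (hmom : ∀ S : Finset (Fin n × Fin n), (∀ e ∈ S, e.1 < e.2) →
      ∫ ω, ∏ e ∈ S, Y e.1 e.2 ω ∂μ = ∫ ω, ∏ e ∈ S, Φ (U e.1 ω) (U e.2 ω) ∂μ)
    (φ₁ φ₂ φ₃ φ₅ φ₆ : ℝ)
    (hφ₁ : φ₁ = ∫ u in Set.Icc (0 : ℝ) 1, ∫ v in Set.Icc (0 : ℝ) 1, Φ u v)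
    (hφ₂ : φ₂ = ∫ u in Set.Icc (0 : ℝ) 1, ∫ v in Set.Icc (0 : ℝ) 1,
        ∫ w in Set.Icc (0 : ℝ) 1, Φ u v * Φ u w)
    (hφ₃ : φ₃ = ∫ u in Set.Icc (0 : ℝ) 1, ∫ v in Set.Icc (0 : ℝ) 1,
        ∫ w in Set.Icc (0 : ℝ) 1, Φ u v * Φ v w * Φ u w)
    (hφ₅ : φ₅ = ∫ u in Set.Icc (0 : ℝ) 1, ∫ v in Set.Icc (0 : ℝ) 1,
        ∫ w in Set.Icc (0 : ℝ) 1, ∫ x in Set.Icc (0 : ℝ) 1, Φ u v * Φ u w * Φ u x)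
    (hφ₆ : φ₆ = ∫ u in Set.Icc (0 : ℝ) 1, ∫ v in Set.Icc (0 : ℝ) 1,
        ∫ w in Set.Icc (0 : ℝ) 1, ∫ x in Set.Icc (0 : ℝ) 1, Φ u v * Φ v w * Φ w x) :
    ∀ a b i j k : Fin n, a < b → i < j → j < k →
      (∫ ω, Y a b ω * (Y i j ω * Y i k ω + Y i j ω * Y j k ω + Y i k ω * Y j k ω) ∂μ)
        = if a ∈ ({i, j, k} : Finset (Fin n))
            then (if b ∈ ({i, j, k} : Finset (Fin n)) then 2 * φ₂ + φ₃ else φ₅ + 2 * φ₆)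
            else (if b ∈ ({i, j, k} : Finset (Fin n)) then φ₅ + 2 * φ₆
              else 3 * (φ₁ * φ₂)) := by
  intro a b i j k hab hij hjk
  have hik : i < k := hij.trans hjk
  have hYabs : ∀ p q ω, |Y p q ω| ≤ 1 := fun p q ω => by
    rcases h01 p q ω with h | h <;> simp [h]
  have intY3 : ∀ p q r s t u' : Fin n,
      Integrable (fun ω => Y p q ω * (Y r s ω * Y t u' ω)) μ := by
    intro p q r s t u'
    refine Integrable.mono' (integrable_const (1 : ℝ))
      (((hYmeas p q).mul ((hYmeas r s).mul (hYmeas t u'))).aestronglyMeasurable)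
      (Filter.Eventually.of_forall fun ω => ?_)
    rw [Real.norm_eq_abs]
    exact abs_mul_le_one' (hYabs _ _ _) (abs_mul_le_one' (hYabs _ _ _) (hYabs _ _ _))
  have gsplit : (∫ ω, Y a b ω * (Y i j ω * Y i k ω + Y i j ω * Y j k ω
        + Y i k ω * Y j k ω) ∂μ)
      = (∫ ω, Y a b ω * (Y i j ω * Y i k ω) ∂μ)
        + (∫ ω, Y a b ω * (Y i j ω * Y j k ω) ∂μ)
        + (∫ ω, Y a b ω * (Y i k ω * Y j k ω) ∂μ) := by
    rw [show (fun ω => Y a b ω * (Y i j ω * Y i k ω + Y i j ω * Y j k ω + Y i k ω * Y j k ω))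
        = fun ω => Y a b ω * (Y i j ω * Y i k ω) + (Y a b ω * (Y i j ω * Y j k ω)
          + Y a b ω * (Y i k ω * Y j k ω)) from funext fun ω => by ring]
    have h23 : Integrable (fun ω => Y a b ω * (Y i j ω * Y j k ω)
        + Y a b ω * (Y i k ω * Y j k ω)) μ :=
      (intY3 a b i j j k).add (intY3 a b i k j k)
    rw [integral_add (intY3 a b i j i k) h23,
      integral_add (intY3 a b i j j k) (intY3 a b i k j k)]
    ring
  have W2 : ∀ x y z : Fin n, x ≠ y → x ≠ z → y ≠ z →
      (∫ ω, Y x y ω * Y x z ω ∂μ) = φ₂ := fun x y z h1 h2 h3 =>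
    (Vstar2 hΦmeas hΦsym hΦ01 hUmeas hUindep hUlaw hYsym hmom x y z h1 h2 h3).trans hφ₂.symm
  have W3 : ∀ x y z : Fin n, x ≠ y → x ≠ z → y ≠ z →
      (∫ ω, Y x y ω * Y y z ω * Y x z ω ∂μ) = φ₃ := fun x y z h1 h2 h3 =>
    (Vtri hΦmeas hΦsym hΦ01 hUmeas hUindep hUlaw hYsym hmom x y z h1 h2 h3).trans hφ₃.symm
  have W5 : ∀ c l₁ l₂ l₃ : Fin n, c ≠ l₁ → c ≠ l₂ → c ≠ l₃ → l₁ ≠ l₂ → l₁ ≠ l₃ → l₂ ≠ l₃ →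
      (∫ ω, Y c l₁ ω * Y c l₂ ω * Y c l₃ ω ∂μ) = φ₅ := fun c l₁ l₂ l₃ h1 h2 h3 h4 h5 h6 =>
    (Vstar3 hΦmeas hΦsym hΦ01 hUmeas hUindep hUlaw hYsym hmom c l₁ l₂ l₃
      h1 h2 h3 h4 h5 h6).trans hφ₅.symm
  have W6 : ∀ p q r s : Fin n, p ≠ q → p ≠ r → p ≠ s → q ≠ r → q ≠ s → r ≠ s →
      (∫ ω, Y p q ω * Y q r ω * Y r s ω ∂μ) = φ₆ := fun p q r s h1 h2 h3 h4 h5 h6 =>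
    (Vpath hΦmeas hΦsym hΦ01 hUmeas hUindep hUlaw hYsym hmom p q r s
      h1 h2 h3 h4 h5 h6).trans hφ₆.symm
  have WD : ∀ x y c l₁ l₂ : Fin n, x ≠ y → x ≠ c → x ≠ l₁ → x ≠ l₂ → y ≠ c → y ≠ l₁ →
      y ≠ l₂ → c ≠ l₁ → c ≠ l₂ → l₁ ≠ l₂ →
      (∫ ω, Y x y ω * Y c l₁ ω * Y c l₂ ω ∂μ) = φ₁ * φ₂ :=
    fun x y c l₁ l₂ h1 h2 h3 h4 h5 h6 h7 h8 h9 h10 =>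
    (Vdisj hΦmeas hΦsym hΦ01 hUmeas hUindep hUlaw hYsym hmom x y c l₁ l₂
      h1 h2 h3 h4 h5 h6 h7 h8 h9 h10).trans (by rw [hφ₁, hφ₂])
  by_cases ha : a ∈ ({i, j, k} : Finset (Fin n)) <;>
    by_cases hb : b ∈ ({i, j, k} : Finset (Fin n)) <;>
      simp only [ha, hb, if_true, if_false]
  · simp only [mem_insert, mem_singleton] at ha hb
    rcases ha with rfl | rfl | rfl <;> rcases hb with rfl | rfl | rfl
    · exact absurd hab (lt_irrefl _)
    · rw [gsplit]
      rw [show (fun ω => Y a b ω * (Y a b ω * Y a k ω)) = fun ω => Y a b ω * Y a k ω from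
        funext fun ω => by rcases h01 a b ω with h | h <;> rw [h] <;> ring]
      rw [show (fun ω => Y a b ω * (Y a b ω * Y b k ω)) = fun ω => Y b a ω * Y b k ω from
        funext fun ω => by rw [hYsym b a]; rcases h01 a b ω with h | h <;> rw [h] <;> ring]
      rw [show (fun ω => Y a b ω * (Y a k ω * Y b k ω)) = fun ω => Y a b ω * Y b k ω * Y a k ω
        from funext fun ω => by ring]
      rw [W2 a b k hij.ne hik.ne hjk.ne, W2 b a k hij.ne' hjk.ne hik.ne,
        W3 a b k hij.ne hik.ne hjk.ne]
      ring
    · rw [gsplit]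
      rw [show (fun ω => Y a b ω * (Y a j ω * Y a b ω)) = fun ω => Y a j ω * Y a b ω from
        funext fun ω => by rcases h01 a b ω with h | h <;> rw [h] <;> ring]
      rw [show (fun ω => Y a b ω * (Y a j ω * Y j b ω)) = fun ω => Y a j ω * Y j b ω * Y a b ω
        from funext fun ω => by ring]
      rw [show (fun ω => Y a b ω * (Y a b ω * Y j b ω)) = fun ω => Y b a ω * Y b j ω from
        funext fun ω => by rw [hYsym b a, hYsym b j]; rcases h01 a b ω with h | h <;>
          rw [h] <;> ring]
      rw [W2 a j b hij.ne hik.ne hjk.ne, W3 a j b hij.ne hik.ne hjk.ne,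
        W2 b a j hik.ne' hjk.ne' hij.ne]
      ring
    · exact absurd (hab.trans hij) (lt_irrefl _)
    · exact absurd hab (lt_irrefl _)
    · rw [gsplit]
      rw [show (fun ω => Y a b ω * (Y i a ω * Y i b ω)) = fun ω => Y i a ω * Y a b ω * Y i b ω
        from funext fun ω => by ring]
      rw [show (fun ω => Y a b ω * (Y i a ω * Y a b ω)) = fun ω => Y a i ω * Y a b ω from
        funext fun ω => by rw [hYsym a i]; rcases h01 a b ω with h | h <;> rw [h] <;> ring]
      rw [show (fun ω => Y a b ω * (Y i b ω * Y a b ω)) = fun ω => Y b i ω * Y b a ω from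
        funext fun ω => by rw [hYsym b i, hYsym b a]; rcases h01 a b ω with h | h <;>
          rw [h] <;> ring]
      rw [W3 i a b hij.ne hik.ne hjk.ne, W2 a i b hij.ne' hjk.ne hik.ne,
        W2 b i a hik.ne' hjk.ne' hij.ne]
      ring
    · exact absurd (hab.trans hik) (lt_irrefl _)
    · exact absurd (hab.trans hjk) (lt_irrefl _)
    · exact absurd hab (lt_irrefl _)
  · simp only [mem_insert, mem_singleton, not_or] at hb
    obtain ⟨hbi, hbj, hbk⟩ := hb
    simp only [mem_insert, mem_singleton] at ha
    rcases ha with rfl | rfl | rfl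
    · rw [gsplit]
      rw [show (fun ω => Y a b ω * (Y a j ω * Y a k ω)) = fun ω => Y a b ω * Y a j ω * Y a k ω
        from funext fun ω => by ring]
      rw [show (fun ω => Y a b ω * (Y a j ω * Y j k ω)) = fun ω => Y b a ω * Y a j ω * Y j k ω
        from funext fun ω => by rw [hYsym b a]; ring]
      rw [show (fun ω => Y a b ω * (Y a k ω * Y j k ω)) = fun ω => Y b a ω * Y a k ω * Y k j ω
        from funext fun ω => by rw [hYsym b a, hYsym k j]; ring]
      rw [W5 a b j k hab.ne hij.ne hik.ne hbj hbk hjk.ne,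
        W6 b a j k hbi hbj hbk hij.ne hik.ne hjk.ne,
        W6 b a k j hbi hbk hbj hik.ne hij.ne hjk.ne']
      ring
    · rw [gsplit]
      rw [show (fun ω => Y a b ω * (Y i a ω * Y i k ω)) = fun ω => Y b a ω * Y a i ω * Y i k ω
        from funext fun ω => by rw [hYsym b a, hYsym a i]; ring]
      rw [show (fun ω => Y a b ω * (Y i a ω * Y a k ω)) = fun ω => Y a b ω * Y a i ω * Y a k ω
        from funext fun ω => by rw [hYsym a i]; ring]
      rw [show (fun ω => Y a b ω * (Y i k ω * Y a k ω)) = fun ω => Y b a ω * Y a k ω * Y k i ω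
        from funext fun ω => by rw [hYsym b a, hYsym k i]; ring]
      rw [W6 b a i k hbj hbi hbk hij.ne' hjk.ne hik.ne,
        W5 a b i k hab.ne hij.ne' hjk.ne hbi hbk hik.ne,
        W6 b a k i hbj hbk hbi hjk.ne hij.ne' hik.ne']
      ring
    · rw [gsplit]
      rw [show (fun ω => Y a b ω * (Y i j ω * Y i a ω)) = fun ω => Y b a ω * Y a i ω * Y i j ω
        from funext fun ω => by rw [hYsym b a, hYsym a i]; ring]
      rw [show (fun ω => Y a b ω * (Y i j ω * Y j a ω)) = fun ω => Y b a ω * Y a j ω * Y j i ω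
        from funext fun ω => by rw [hYsym b a, hYsym a j, hYsym j i]; ring]
      rw [show (fun ω => Y a b ω * (Y i a ω * Y j a ω)) = fun ω => Y a b ω * Y a i ω * Y a j ω
        from funext fun ω => by rw [hYsym a i, hYsym a j]; ring]
      rw [W6 b a i j hbk hbi hbj hik.ne' hjk.ne' hij.ne,
        W6 b a j i hbk hbj hbi hjk.ne' hik.ne' hij.ne',
        W5 a b i j hab.ne hik.ne' hjk.ne' hbi hbj hij.ne]
      ring
  · simp only [mem_insert, mem_singleton, not_or] at ha
    obtain ⟨hai, haj, hak⟩ := ha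
    simp only [mem_insert, mem_singleton] at hb
    rcases hb with rfl | rfl | rfl
    · rw [gsplit]
      rw [show (fun ω => Y a b ω * (Y b j ω * Y b k ω)) = fun ω => Y b a ω * Y b j ω * Y b k ω
        from funext fun ω => by rw [hYsym b a]; ring]
      rw [show (fun ω => Y a b ω * (Y b j ω * Y j k ω)) = fun ω => Y a b ω * Y b j ω * Y j k ω
        from funext fun ω => by ring]
      rw [show (fun ω => Y a b ω * (Y b k ω * Y j k ω)) = fun ω => Y a b ω * Y b k ω * Y k j ω
        from funext fun ω => by rw [hYsym k j]; ring]
      rw [W5 b a j k hab.ne' hij.ne hik.ne haj hak hjk.ne,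
        W6 a b j k hab.ne haj hak hij.ne hik.ne hjk.ne,
        W6 a b k j hab.ne hak haj hik.ne hij.ne hjk.ne']
      ring
    · rw [gsplit]
      rw [show (fun ω => Y a b ω * (Y i b ω * Y i k ω)) = fun ω => Y a b ω * Y b i ω * Y i k ω
        from funext fun ω => by rw [hYsym b i]; ring]
      rw [show (fun ω => Y a b ω * (Y i b ω * Y b k ω)) = fun ω => Y b a ω * Y b i ω * Y b k ω
        from funext fun ω => by rw [hYsym b a, hYsym b i]; ring]
      rw [show (fun ω => Y a b ω * (Y i k ω * Y b k ω)) = fun ω => Y a b ω * Y b k ω * Y k i ω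
        from funext fun ω => by rw [hYsym k i]; ring]
      rw [W6 a b i k hab.ne hai hak hij.ne' hjk.ne hik.ne,
        W5 b a i k hab.ne' hij.ne' hjk.ne hai hak hik.ne,
        W6 a b k i hab.ne hak hai hjk.ne hij.ne' hik.ne']
      ring
    · rw [gsplit]
      rw [show (fun ω => Y a b ω * (Y i j ω * Y i b ω)) = fun ω => Y a b ω * Y b i ω * Y i j ω
        from funext fun ω => by rw [hYsym b i]; ring]
      rw [show (fun ω => Y a b ω * (Y i j ω * Y j b ω)) = fun ω => Y a b ω * Y b j ω * Y j i ω
        from funext fun ω => by rw [hYsym b j, hYsym j i]; ring]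
      rw [show (fun ω => Y a b ω * (Y i b ω * Y j b ω)) = fun ω => Y b a ω * Y b i ω * Y b j ω
        from funext fun ω => by rw [hYsym b a, hYsym b i, hYsym b j]; ring]
      rw [W6 a b i j hab.ne hai haj hik.ne' hjk.ne' hij.ne,
        W6 a b j i hab.ne haj hai hjk.ne' hik.ne' hij.ne',
        W5 b a i j hab.ne' hik.ne' hjk.ne' hai haj hij.ne]
      ring
  · simp only [mem_insert, mem_singleton, not_or] at ha hb
    obtain ⟨hai, haj, hak⟩ := ha
    obtain ⟨hbi, hbj, hbk⟩ := hb
    rw [gsplit]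
    rw [show (fun ω => Y a b ω * (Y i j ω * Y i k ω)) = fun ω => Y a b ω * Y i j ω * Y i k ω
      from funext fun ω => by ring]
    rw [show (fun ω => Y a b ω * (Y i j ω * Y j k ω)) = fun ω => Y a b ω * Y j i ω * Y j k ω
      from funext fun ω => by rw [hYsym j i]; ring]
    rw [show (fun ω => Y a b ω * (Y i k ω * Y j k ω)) = fun ω => Y a b ω * Y k i ω * Y k j ω
      from funext fun ω => by rw [hYsym k i, hYsym k j]; ring]
    rw [WD a b i j k hab.ne hai haj hak hbi hbj hbk hij.ne hik.ne hjk.ne,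
      WD a b j i k hab.ne haj hai hak hbj hbi hbk hij.ne' hjk.ne hik.ne,
      WD a b k i j hab.ne hak hai haj hbk hbi hbj hik.ne' hjk.ne' hij.ne]
    ring

end gvalsec

/-- Cross moment `E[M₁ M₂]` in the W-graph model EG(Φ). -/
theorem wgraph_cross_moment
    {Ω : Type*} [MeasurableSpace Ω] (μ : Measure Ω) [IsProbabilityMeasure μ]
    (n : ℕ) (Φ : ℝ → ℝ → ℝ)
    (hΦmeas : Measurable fun q : ℝ × ℝ => Φ q.1 q.2)
    (hΦsym : ∀ u v, Φ u v = Φ v u)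
    (hΦ01 : ∀ u v, 0 ≤ Φ u v ∧ Φ u v ≤ 1)
    (U : Fin n → Ω → ℝ) (hUmeas : ∀ i, Measurable (U i))
    (hUindep : iIndepFun U μ)
    (hUlaw : ∀ i, μ.map (U i) = (volume : Measure ℝ).restrict (Set.Icc 0 1))
    (Y : Fin n → Fin n → Ω → ℝ)
    (hYsym : ∀ i j, Y i j = Y j i) (hYdiag : ∀ i, Y i i = 0)
    (hYmeas : ∀ i j, Measurable (Y i j))
    (h01 : ∀ i j ω, Y i j ω = 0 ∨ Y i j ω = 1)
    (hmom : ∀ S : Finset (Fin n × Fin n), (∀ e ∈ S, e.1 < e.2) →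
      ∫ ω, ∏ e ∈ S, Y e.1 e.2 ω ∂μ = ∫ ω, ∏ e ∈ S, Φ (U e.1 ω) (U e.2 ω) ∂μ)
    (φ₁ φ₂ φ₃ φ₅ φ₆ : ℝ)
    (hφ₁ : φ₁ = ∫ u in Set.Icc (0 : ℝ) 1, ∫ v in Set.Icc (0 : ℝ) 1, Φ u v)
    (hφ₂ : φ₂ = ∫ u in Set.Icc (0 : ℝ) 1, ∫ v in Set.Icc (0 : ℝ) 1,
        ∫ w in Set.Icc (0 : ℝ) 1, Φ u v * Φ u w)
    (hφ₃ : φ₃ = ∫ u in Set.Icc (0 : ℝ) 1, ∫ v in Set.Icc (0 : ℝ) 1,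
        ∫ w in Set.Icc (0 : ℝ) 1, Φ u v * Φ v w * Φ u w)
    (hφ₅ : φ₅ = ∫ u in Set.Icc (0 : ℝ) 1, ∫ v in Set.Icc (0 : ℝ) 1,
        ∫ w in Set.Icc (0 : ℝ) 1, ∫ x in Set.Icc (0 : ℝ) 1, Φ u v * Φ u w * Φ u x)
    (hφ₆ : φ₆ = ∫ u in Set.Icc (0 : ℝ) 1, ∫ v in Set.Icc (0 : ℝ) 1,
        ∫ w in Set.Icc (0 : ℝ) 1, ∫ x in Set.Icc (0 : ℝ) 1, Φ u v * Φ v w * Φ w x) :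
    ∫ ω, (∑ i, ∑ j ∈ univ.filter (fun j => i < j), Y i j ω)
        * (∑ i, ∑ j ∈ univ.filter (fun j => i < j), ∑ k ∈ univ.filter (fun k => j < k),
            (Y i j ω * Y i k ω + Y i j ω * Y j k ω + Y i k ω * Y j k ω)) ∂μ
      = ((n : ℝ) * ((n : ℝ) - 1) * ((n : ℝ) - 2) / 2) * (2 * φ₂ + φ₃)
        + ((n : ℝ) * ((n : ℝ) - 1) * ((n : ℝ) - 2) * ((n : ℝ) - 3) / 2) * (φ₅ + 2 * φ₆)
        + ((n : ℝ) * ((n : ℝ) - 1) * ((n : ℝ) - 2) * ((n : ℝ) - 3) * ((n : ℝ) - 4) / 4)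
          * (φ₁ * φ₂) := by
  classical
  have hYabs : ∀ p q ω, |Y p q ω| ≤ 1 := fun p q ω => by
    rcases h01 p q ω with h | h <;> simp [h]
  have intElem : ∀ a b i j k : Fin n, Integrable (fun ω => Y a b ω *
      (Y i j ω * Y i k ω + Y i j ω * Y j k ω + Y i k ω * Y j k ω)) μ := by
    intro a b i j k
    refine Integrable.mono' (integrable_const (3 : ℝ))
      (((hYmeas a b).mul ((((hYmeas i j).mul (hYmeas i k)).add
        ((hYmeas i j).mul (hYmeas j k))).add
        ((hYmeas i k).mul (hYmeas j k)))).aestronglyMeasurable)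
      (Filter.Eventually.of_forall fun ω => ?_)
    rw [Real.norm_eq_abs, abs_mul]
    have h1 := abs_mul_le_one' (hYabs i j ω) (hYabs i k ω)
    have h2 := abs_mul_le_one' (hYabs i j ω) (hYabs j k ω)
    have h3 := abs_mul_le_one' (hYabs i k ω) (hYabs j k ω)
    have h4 := hYabs a b ω
    have h5 := abs_add_three (Y i j ω * Y i k ω) (Y i j ω * Y j k ω) (Y i k ω * Y j k ω)
    have h6 := abs_nonneg (Y a b ω)
    have h7 := abs_nonneg (Y i j ω * Y i k ω + Y i j ω * Y j k ω + Y i k ω * Y j k ω)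
    nlinarith
  simp only [Finset.sum_mul, Finset.mul_sum]
  have hpull : (∫ ω, ∑ i, ∑ j ∈ univ.filter (fun j => i < j),
        ∑ k ∈ univ.filter (fun k => j < k), ∑ a, ∑ b ∈ univ.filter (fun b => a < b),
        Y a b ω * (Y i j ω * Y i k ω + Y i j ω * Y j k ω + Y i k ω * Y j k ω) ∂μ)
      = ∑ i, ∑ j ∈ univ.filter (fun j => i < j), ∑ k ∈ univ.filter (fun k => j < k),
        ∑ a, ∑ b ∈ univ.filter (fun b => a < b),
        ∫ ω, Y a b ω * (Y i j ω * Y i k ω + Y i j ω * Y j k ω + Y i k ω * Y j k ω) ∂μ := by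
    rw [integral_finset_sum _ (fun i _ => integrable_finset_sum _ fun j _ =>
      integrable_finset_sum _ fun k _ => integrable_finset_sum _ fun a _ =>
      integrable_finset_sum _ fun b _ => intElem a b i j k)]
    refine Finset.sum_congr rfl fun i _ => ?_
    rw [integral_finset_sum _ (fun j _ => integrable_finset_sum _ fun k _ =>
      integrable_finset_sum _ fun a _ => integrable_finset_sum _ fun b _ => intElem a b i j k)]
    refine Finset.sum_congr rfl fun j _ => ?_
    rw [integral_finset_sum _ (fun k _ => integrable_finset_sum _ fun a _ =>
      integrable_finset_sum _ fun b _ => intElem a b i j k)]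
    refine Finset.sum_congr rfl fun k _ => ?_
    rw [integral_finset_sum _ (fun a _ => integrable_finset_sum _ fun b _ => intElem a b i j k)]
    refine Finset.sum_congr rfl fun a _ => ?_
    rw [integral_finset_sum _ (fun b _ => intElem a b i j k)]
  rw [hpull]
  refine Eq.trans (main_comb
    (fun a b i j k => ∫ ω, Y a b ω * (Y i j ω * Y i k ω + Y i j ω * Y j k ω
      + Y i k ω * Y j k ω) ∂μ)
    (2 * φ₂ + φ₃) (φ₅ + 2 * φ₆) (3 * (φ₁ * φ₂))
    (gval hΦmeas hΦsym hΦ01 hUmeas hUindep hUlaw hYsym hYmeas h01 hmom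
      φ₁ φ₂ φ₃ φ₅ φ₆ hφ₁ hφ₂ hφ₃ hφ₅ hφ₆)) ?_
  by_cases hn : 3 ≤ n
  · rw [cast_choose_three, Nat.cast_choose_two, Nat.cast_choose_two, Nat.cast_sub hn]
    push_cast
    ring
  · have h0 : n.choose 3 = 0 := Nat.choose_eq_zero_of_lt (by omega)
    rw [h0]
    have hn' : n < 3 := by omega
    interval_cases n <;> norm_num
end

section
/- In the W-graph model EG(Φ), the statistic W = (1/n) Σ_i (D_i − (n−1)φ⁰₁)² has expectation E[W] = n^{−1}[ n(n−1)²(φ⁰₁)² + (1 − 2(n−1)φ⁰₁) n₁ φ₁ + n₂ φ₂ ], where n₁ = n(n−1), n₂ = n(n−1)(n−2), φ₁ = ∫∫ Φ, φ₂ = ∫∫∫ Φ(u,v)Φ(u,w), and φ⁰₁ = ∫∫ Φ⁰ for a reference graphon Φ⁰. -/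
open MeasureTheory ProbabilityTheory Finset

noncomputable def nu : Measure ℝ := (volume : Measure ℝ).restrict (Set.Icc 0 1)

lemma nu_prob : IsProbabilityMeasure nu := by
  constructor
  rw [nu, Measure.restrict_apply_univ, Real.volume_Icc]
  norm_num

lemma bdd_int {α : Type*} [MeasurableSpace α] (m : Measure α) [IsFiniteMeasure m]
    {f : α → ℝ} (hf : AEStronglyMeasurable f m) (C : ℝ) (h : ∀ x, |f x| ≤ C) :
    Integrable f m :=
  (integrable_const C).mono' hf (Filter.Eventually.of_forall h)

lemma pair_integral {Ω : Type*} [MeasurableSpace Ω] (μ : Measure Ω) [IsProbabilityMeasure μ]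
    (Φ : ℝ → ℝ → ℝ) (hΦmeas : Measurable fun q : ℝ × ℝ => Φ q.1 q.2)
    (hΦ01 : ∀ u v, 0 ≤ Φ u v ∧ Φ u v ≤ 1)
    (A B : Ω → ℝ) (hA : Measurable A) (hB : Measurable B)
    (hind : IndepFun A B μ) (hAlaw : μ.map A = nu) (hBlaw : μ.map B = nu) :
    ∫ ω, Φ (A ω) (B ω) ∂μ = ∫ u in Set.Icc (0:ℝ) 1, ∫ v in Set.Icc (0:ℝ) 1, Φ u v := by
  haveI := nu_prob
  have hΦbd : ∀ q : ℝ × ℝ, |Φ q.1 q.2| ≤ 1 := fun q =>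
    abs_le.mpr ⟨by linarith [(hΦ01 q.1 q.2).1], (hΦ01 q.1 q.2).2⟩
  have hmap : μ.map (fun ω => (A ω, B ω)) = nu.prod nu := by
    have h := (indepFun_iff_map_prod_eq_prod_map_map hA.aemeasurable hB.aemeasurable).mp hind
    rw [hAlaw, hBlaw] at h
    exact h
  calc ∫ ω, Φ (A ω) (B ω) ∂μ
      = ∫ p : ℝ × ℝ, Φ p.1 p.2 ∂(μ.map (fun ω => (A ω, B ω))) :=
        (integral_map (hA.prodMk hB).aemeasurable hΦmeas.aestronglyMeasurable).symm
    _ = ∫ p : ℝ × ℝ, Φ p.1 p.2 ∂(nu.prod nu) := by rw [hmap]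
    _ = ∫ u in Set.Icc (0:ℝ) 1, ∫ v in Set.Icc (0:ℝ) 1, Φ u v := by
        rw [show ((volume : Measure ℝ).restrict (Set.Icc (0:ℝ) 1)) = nu from rfl]
        exact integral_prod _ (bdd_int _ hΦmeas.aestronglyMeasurable 1 hΦbd)

lemma triple_integral {Ω : Type*} [MeasurableSpace Ω] (μ : Measure Ω) [IsProbabilityMeasure μ]
    (Φ : ℝ → ℝ → ℝ) (hΦmeas : Measurable fun q : ℝ × ℝ => Φ q.1 q.2)
    (hΦ01 : ∀ u v, 0 ≤ Φ u v ∧ Φ u v ≤ 1)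
    (A B C : Ω → ℝ) (hA : Measurable A) (hB : Measurable B) (hC : Measurable C)
    (hmapAB : μ.map (fun ω => (A ω, B ω)) = nu.prod nu)
    (hindp : IndepFun (fun ω => (A ω, B ω)) C μ) (hClaw : μ.map C = nu) :
    ∫ ω, Φ (A ω) (B ω) * Φ (A ω) (C ω) ∂μ
      = ∫ u in Set.Icc (0:ℝ) 1, ∫ v in Set.Icc (0:ℝ) 1, ∫ w in Set.Icc (0:ℝ) 1,
          Φ u v * Φ u w := by
  haveI := nu_prob
  have hΦbd : ∀ u v : ℝ, |Φ u v| ≤ 1 := fun u v =>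
    abs_le.mpr ⟨by linarith [(hΦ01 u v).1], (hΦ01 u v).2⟩
  set g : (ℝ × ℝ) × ℝ → ℝ := fun p => Φ p.1.1 p.1.2 * Φ p.1.1 p.2 with hg
  have hgmeas : Measurable g := by
    apply Measurable.mul
    · exact hΦmeas.comp (measurable_fst.fst.prodMk measurable_fst.snd)
    · exact hΦmeas.comp (measurable_fst.fst.prodMk measurable_snd)
  have hgbd : ∀ p, |g p| ≤ 1 := by
    intro p
    rw [abs_mul]
    calc |Φ p.1.1 p.1.2| * |Φ p.1.1 p.2| ≤ 1 * 1 :=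
          mul_le_mul (hΦbd _ _) (hΦbd _ _) (abs_nonneg _) zero_le_one
      _ = 1 := one_mul 1
  have hAB : Measurable (fun ω => (A ω, B ω)) := hA.prodMk hB
  have hmap3 : μ.map (fun ω => ((A ω, B ω), C ω)) = (nu.prod nu).prod nu := by
    have h := (indepFun_iff_map_prod_eq_prod_map_map hAB.aemeasurable hC.aemeasurable).mp hindp
    rw [hmapAB, hClaw] at h
    exact h
  have hginteg : Integrable g ((nu.prod nu).prod nu) :=
    bdd_int _ hgmeas.aestronglyMeasurable 1 hgbd
  calc ∫ ω, Φ (A ω) (B ω) * Φ (A ω) (C ω) ∂μ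
      = ∫ p, g p ∂(μ.map (fun ω => ((A ω, B ω), C ω))) :=
        (integral_map (hAB.prodMk hC).aemeasurable hgmeas.aestronglyMeasurable).symm
    _ = ∫ p, g p ∂((nu.prod nu).prod nu) := by rw [hmap3]
    _ = ∫ q, (∫ w, g (q, w) ∂nu) ∂(nu.prod nu) := integral_prod _ hginteg
    _ = ∫ u in Set.Icc (0:ℝ) 1, ∫ v in Set.Icc (0:ℝ) 1, ∫ w in Set.Icc (0:ℝ) 1,
          Φ u v * Φ u w := by
        have hfm : StronglyMeasurable (fun q : ℝ × ℝ => ∫ w, g (q, w) ∂nu) :=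
          hgmeas.stronglyMeasurable.integral_prod_right'
        have hfbd : ∀ q : ℝ × ℝ, |(fun q : ℝ × ℝ => ∫ w, g (q, w) ∂nu) q| ≤ 1 := by
          intro q
          have := norm_integral_le_of_norm_le_const
            (μ := nu) (f := fun w => g (q, w)) (C := 1)
            (Filter.Eventually.of_forall fun w => hgbd (q, w))
          simpa [measure_univ] using this
        exact integral_prod _ (bdd_int _ hfm.aestronglyMeasurable 1 hfbd)

def sort2 {α : Type*} [LinearOrder α] (i j : α) : α × α := if i < j then (i, j) else (j, i)

lemma sort2_lt {α : Type*} [LinearOrder α] {i j : α} (h : i ≠ j) :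
    (sort2 i j).1 < (sort2 i j).2 := by
  unfold sort2; split
  · assumption
  · exact lt_of_le_of_ne (not_lt.mp (by assumption)) (Ne.symm h)

lemma sort2_cases {α : Type*} [LinearOrder α] (i j : α) :
    sort2 i j = (i, j) ∨ sort2 i j = (j, i) := by
  unfold sort2; split
  · exact Or.inl rfl
  · exact Or.inr rfl

lemma sort2_ne {α : Type*} [LinearOrder α] {i j k : α} (hji : j ≠ i) (hki : k ≠ i)
    (hjk : j ≠ k) : sort2 i j ≠ sort2 i k := by
  rcases sort2_cases i j with h1 | h1 <;> rcases sort2_cases i k with h2 | h2 <;>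
    rw [h1, h2] <;> simp [Prod.ext_iff] <;> intro h <;> simp_all


/-- Expectation of the degree mean square statistic in the W-graph
model EG(Φ), relative to a reference graphon Φ⁰ with edge density φ⁰₁. -/
theorem wgraph_degree_mean_square_expectation
    {Ω : Type*} [MeasurableSpace Ω] (μ : Measure Ω) [IsProbabilityMeasure μ]
    (n : ℕ) (Φ Φ0 : ℝ → ℝ → ℝ)
    (hΦmeas : Measurable fun q : ℝ × ℝ => Φ q.1 q.2)
    (hΦsym : ∀ u v, Φ u v = Φ v u)
    (hΦ01 : ∀ u v, 0 ≤ Φ u v ∧ Φ u v ≤ 1)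
    (hΦ0sym : ∀ u v, Φ0 u v = Φ0 v u)
    (hΦ001 : ∀ u v, 0 ≤ Φ0 u v ∧ Φ0 u v ≤ 1)
    (U : Fin n → Ω → ℝ) (hUmeas : ∀ i, Measurable (U i))
    (hUindep : iIndepFun U μ)
    (hUlaw : ∀ i, μ.map (U i) = (volume : Measure ℝ).restrict (Set.Icc 0 1))
    (Y : Fin n → Fin n → Ω → ℝ)
    (hYsym : ∀ i j, Y i j = Y j i) (hYdiag : ∀ i, Y i i = 0)
    (hYmeas : ∀ i j, Measurable (Y i j))
    (h01 : ∀ i j ω, Y i j ω = 0 ∨ Y i j ω = 1)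
    (hmom : ∀ S : Finset (Fin n × Fin n), (∀ e ∈ S, e.1 < e.2) →
      ∫ ω, ∏ e ∈ S, Y e.1 e.2 ω ∂μ = ∫ ω, ∏ e ∈ S, Φ (U e.1 ω) (U e.2 ω) ∂μ)
    (φ₁ φ₂ φ01 : ℝ)
    (hφ₁ : φ₁ = ∫ u in Set.Icc (0 : ℝ) 1, ∫ v in Set.Icc (0 : ℝ) 1, Φ u v)
    (hφ₂ : φ₂ = ∫ u in Set.Icc (0 : ℝ) 1, ∫ v in Set.Icc (0 : ℝ) 1,
        ∫ w in Set.Icc (0 : ℝ) 1, Φ u v * Φ u w)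
    (hφ01 : φ01 = ∫ u in Set.Icc (0 : ℝ) 1, ∫ v in Set.Icc (0 : ℝ) 1, Φ0 u v) :
    ∫ ω, (1 / (n : ℝ)) * ∑ i,
        ((∑ j ∈ univ.filter (fun j => j ≠ i), Y i j ω) - ((n : ℝ) - 1) * φ01) ^ 2 ∂μ
      = (1 / (n : ℝ)) *
          ((n : ℝ) * ((n : ℝ) - 1) ^ 2 * φ01 ^ 2
            + (1 - 2 * ((n : ℝ) - 1) * φ01) * ((n : ℝ) * ((n : ℝ) - 1)) * φ₁
            + ((n : ℝ) * ((n : ℝ) - 1) * ((n : ℝ) - 2)) * φ₂) := by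
  classical
  haveI := nu_prob
  -- boundedness and integrability of the Y's
  have hYbd : ∀ i j ω, |Y i j ω| ≤ 1 := by
    intro i j ω; rcases h01 i j ω with h | h <;> simp [h]
  have hYint : ∀ i j, Integrable (Y i j) μ := fun i j =>
    bdd_int μ (hYmeas i j).aestronglyMeasurable 1 (hYbd i j)
  have hYYint : ∀ i j k, Integrable (fun ω => Y i j ω * Y i k ω) μ := by
    intro i j k
    refine bdd_int μ ((hYmeas i j).mul (hYmeas i k)).aestronglyMeasurable 1 ?_
    intro ω
    calc |Y i j ω * Y i k ω| = |Y i j ω| * |Y i k ω| := abs_mul _ _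
      _ ≤ 1 * 1 := mul_le_mul (hYbd i j ω) (hYbd i k ω) (abs_nonneg _) zero_le_one
      _ = 1 := one_mul 1
  -- expectation of a single edge
  have hEΦ : ∀ p : Fin n × Fin n, p.1 < p.2 →
      ∫ ω, Φ (U p.1 ω) (U p.2 ω) ∂μ = φ₁ := by
    intro p hp
    rw [hφ₁]
    exact pair_integral μ Φ hΦmeas hΦ01 (U p.1) (U p.2) (hUmeas p.1) (hUmeas p.2)
      (hUindep.indepFun (ne_of_lt hp)) (hUlaw p.1) (hUlaw p.2)
  have hEY : ∀ i j : Fin n, i ≠ j → ∫ ω, Y i j ω ∂μ = φ₁ := by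
    intro i j hij
    have hp := sort2_lt hij
    have hS := hmom {sort2 i j} (by
      intro e he; rw [Finset.mem_singleton] at he; subst he; exact hp)
    simp only [Finset.prod_singleton] at hS
    have hYe : Y (sort2 i j).1 (sort2 i j).2 = Y i j := by
      rcases sort2_cases i j with h | h <;> rw [h]
      exact (hYsym i j).symm
    rw [hYe] at hS
    rw [hS]
    exact hEΦ _ hp
  -- expectation of a product of two adjacent edges
  have hEYY : ∀ i j k : Fin n, i ≠ j → i ≠ k → j ≠ k →
      ∫ ω, Y i j ω * Y i k ω ∂μ = φ₂ := by
    intro i j k hij hik hjk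
    have hpq : sort2 i j ≠ sort2 i k := sort2_ne hij.symm hik.symm hjk
    have hS := hmom {sort2 i j, sort2 i k} (by
      intro e he
      rcases Finset.mem_insert.mp he with h | h
      · subst h; exact sort2_lt hij
      · rw [Finset.mem_singleton] at h; subst h; exact sort2_lt hik)
    simp only [Finset.prod_pair hpq] at hS
    have hL : (fun ω => Y (sort2 i j).1 (sort2 i j).2 ω * Y (sort2 i k).1 (sort2 i k).2 ω)
        = fun ω => Y i j ω * Y i k ω := by
      funext ω
      rcases sort2_cases i j with h1 | h1 <;> rcases sort2_cases i k with h2 | h2 <;>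
        rw [h1, h2] <;> simp only [← hYsym i j, ← hYsym i k]
    have hR : (fun ω => Φ (U (sort2 i j).1 ω) (U (sort2 i j).2 ω)
          * Φ (U (sort2 i k).1 ω) (U (sort2 i k).2 ω))
        = fun ω => Φ (U i ω) (U j ω) * Φ (U i ω) (U k ω) := by
      funext ω
      rcases sort2_cases i j with h1 | h1 <;> rcases sort2_cases i k with h2 | h2 <;>
        rw [h1, h2] <;>
        simp only [hΦsym (U j ω) (U i ω), hΦsym (U k ω) (U i ω)]
    rw [hL, hR] at hS
    rw [hS, hφ₂]
    have hmapAB : μ.map (fun ω => (U i ω, U j ω)) = nu.prod nu := by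
      have h := (indepFun_iff_map_prod_eq_prod_map_map (hUmeas i).aemeasurable
        (hUmeas j).aemeasurable).mp (hUindep.indepFun hij)
      rw [hUlaw i, hUlaw j] at h
      exact h
    exact triple_integral μ Φ hΦmeas hΦ01 (U i) (U j) (U k) (hUmeas i) (hUmeas j) (hUmeas k)
      hmapAB (hUindep.indepFun_prodMk hUmeas i j k hik hjk) (hUlaw k)
  -- cardinality facts
  have hcard : ∀ i : Fin n, (((univ.filter (fun j => j ≠ i)) : Finset (Fin n)).card : ℝ)
      = (n : ℝ) - 1 := by
    intro i
    rw [Finset.filter_ne', Finset.card_erase_of_mem (Finset.mem_univ i), Finset.card_univ,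
      Fintype.card_fin]
    have h1 : 1 ≤ n := i.pos
    rw [Nat.cast_sub h1, Nat.cast_one]
  set c : ℝ := ((n : ℝ) - 1) * φ01 with hc
  -- per-index expectation
  have hint_i : ∀ i : Fin n,
      ∫ ω, ((∑ j ∈ univ.filter (fun j => j ≠ i), Y i j ω) - c) ^ 2 ∂μ
        = ((n:ℝ)-1)*φ₁ + ((n:ℝ)-1)*((n:ℝ)-2)*φ₂ - 2*c*(((n:ℝ)-1)*φ₁) + c^2 := by
    intro i
    set F : Finset (Fin n) := univ.filter (fun j => j ≠ i) with hF
    have hSum_int : Integrable (fun ω => ∑ j ∈ F, ∑ k ∈ F, Y i j ω * Y i k ω) μ :=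
      integrable_finset_sum _ fun j _ => integrable_finset_sum _ fun k _ => hYYint i j k
    have hS_int : Integrable (fun ω => ∑ j ∈ F, Y i j ω) μ :=
      integrable_finset_sum _ fun j _ => hYint i j
    have hpt : ∀ ω, ((∑ j ∈ F, Y i j ω) - c) ^ 2
        = (∑ j ∈ F, ∑ k ∈ F, Y i j ω * Y i k ω) - 2*c*(∑ j ∈ F, Y i j ω) + c^2 := by
      intro ω
      have h2 := Finset.sum_mul_sum F F (fun j => Y i j ω) (fun k => Y i k ω)
      nlinarith [h2]
    calc ∫ ω, ((∑ j ∈ F, Y i j ω) - c) ^ 2 ∂μ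
        = ∫ ω, ((∑ j ∈ F, ∑ k ∈ F, Y i j ω * Y i k ω)
            - 2*c*(∑ j ∈ F, Y i j ω) + c^2) ∂μ :=
          integral_congr_ae (Filter.Eventually.of_forall hpt)
      _ = (∫ ω, ((∑ j ∈ F, ∑ k ∈ F, Y i j ω * Y i k ω)
            - 2*c*(∑ j ∈ F, Y i j ω)) ∂μ) + ∫ _ω, c^2 ∂μ := by
          exact integral_add (hSum_int.sub (hS_int.const_mul (2*c))) (integrable_const _)
      _ = (∫ ω, ∑ j ∈ F, ∑ k ∈ F, Y i j ω * Y i k ω ∂μ)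
            - (∫ ω, 2*c*(∑ j ∈ F, Y i j ω) ∂μ) + c^2 := by
          rw [integral_sub hSum_int (hS_int.const_mul (2*c)), integral_const]
          simp [measure_univ]
      _ = (∑ j ∈ F, ∑ k ∈ F, ∫ ω, Y i j ω * Y i k ω ∂μ)
            - 2*c*(∑ j ∈ F, ∫ ω, Y i j ω ∂μ) + c^2 := by
          rw [integral_finset_sum _ fun j _ => integrable_finset_sum _ fun k _ => hYYint i j k,
            integral_const_mul, integral_finset_sum _ fun j _ => hYint i j]
          congr 1
          congr 1
          exact Finset.sum_congr rfl fun j _ =>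
            integral_finset_sum _ fun k _ => hYYint i j k
      _ = (∑ j ∈ F, ∑ k ∈ F, if j = k then φ₁ else φ₂)
            - 2*c*(∑ j ∈ F, φ₁) + c^2 := by
          congr 1
          congr 1
          · refine Finset.sum_congr rfl fun j hj => Finset.sum_congr rfl fun k hk => ?_
            have hji : j ≠ i := (Finset.mem_filter.mp hj).2
            have hki : k ≠ i := (Finset.mem_filter.mp hk).2
            by_cases hjk : j = k
            · subst hjk
              simp only [if_pos rfl]
              have hYsq : (fun ω => Y i j ω * Y i j ω) = Y i j := by
                funext ω; rcases h01 i j ω with h | h <;> rw [h] <;> ring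
              rw [hYsq]
              exact hEY i j (Ne.symm hji)
            · rw [if_neg hjk]
              exact hEYY i j k (Ne.symm hji) (Ne.symm hki) hjk
          · congr 1
            exact Finset.sum_congr rfl fun j hj => hEY i j (Ne.symm (Finset.mem_filter.mp hj).2)
      _ = ((n:ℝ)-1)*φ₁ + ((n:ℝ)-1)*((n:ℝ)-2)*φ₂ - 2*c*(((n:ℝ)-1)*φ₁) + c^2 := by
          have hFcard : (F.card : ℝ) = (n : ℝ) - 1 := hcard i
          have hinner : ∀ j ∈ F, (∑ k ∈ F, if j = k then φ₁ else φ₂)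
              = φ₁ + ((n:ℝ)-2)*φ₂ := by
            intro j hj
            rw [← Finset.add_sum_erase F _ hj, if_pos rfl]
            congr 1
            rw [Finset.sum_congr rfl (fun k hk =>
              if_neg (Ne.symm (Finset.ne_of_mem_erase hk))), Finset.sum_const,
              Finset.card_erase_of_mem hj, nsmul_eq_mul]
            congr 1
            have h1F : 1 ≤ F.card := Finset.card_pos.mpr ⟨j, hj⟩
            rw [Nat.cast_sub h1F, Nat.cast_one, hFcard]
            ring
          rw [Finset.sum_congr rfl hinner, Finset.sum_const, Finset.sum_const,
            nsmul_eq_mul, nsmul_eq_mul, hFcard]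
          ring
  -- assemble
  have hintSq : ∀ i : Fin n, Integrable
      (fun ω => ((∑ j ∈ univ.filter (fun j => j ≠ i), Y i j ω) - c) ^ 2) μ := by
    intro i
    refine bdd_int μ ?_ (((n:ℝ) + |c|)^2) ?_
    · exact (((Finset.measurable_sum _ fun j _ => hYmeas i j).sub measurable_const).pow_const
        2).aestronglyMeasurable
    · intro ω
      have h1 : |∑ j ∈ univ.filter (fun j => j ≠ i), Y i j ω| ≤ (n : ℝ) := by
        refine (Finset.abs_sum_le_sum_abs _ _).trans ?_
        calc ∑ j ∈ univ.filter (fun j => j ≠ i), |Y i j ω|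
            ≤ ∑ _j ∈ univ.filter (fun j => j ≠ i), (1:ℝ) :=
              Finset.sum_le_sum fun j _ => hYbd i j ω
          _ = ((univ.filter (fun j => j ≠ i)).card : ℝ) := by
              rw [Finset.sum_const, nsmul_eq_mul, mul_one]
          _ ≤ (n : ℝ) := by
              rw [hcard i]; linarith
      have h2 : |(∑ j ∈ univ.filter (fun j => j ≠ i), Y i j ω) - c| ≤ (n:ℝ) + |c| :=
        (abs_sub _ _).trans (by linarith)
      calc |((∑ j ∈ univ.filter (fun j => j ≠ i), Y i j ω) - c) ^ 2|
          = |(∑ j ∈ univ.filter (fun j => j ≠ i), Y i j ω) - c| ^ 2 := by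
            rw [abs_pow]
        _ ≤ ((n:ℝ) + |c|)^2 := by
            exact pow_le_pow_left₀ (abs_nonneg _) h2 2
  calc ∫ ω, (1 / (n : ℝ)) * ∑ i,
        ((∑ j ∈ univ.filter (fun j => j ≠ i), Y i j ω) - c) ^ 2 ∂μ
      = (1 / (n : ℝ)) * ∫ ω, ∑ i,
          ((∑ j ∈ univ.filter (fun j => j ≠ i), Y i j ω) - c) ^ 2 ∂μ :=
        integral_const_mul _ _
    _ = (1 / (n : ℝ)) * ∑ i, ∫ ω,
          ((∑ j ∈ univ.filter (fun j => j ≠ i), Y i j ω) - c) ^ 2 ∂μ := by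
        rw [integral_finset_sum _ fun i _ => hintSq i]
    _ = (1 / (n : ℝ)) * ∑ _i : Fin n,
          (((n:ℝ)-1)*φ₁ + ((n:ℝ)-1)*((n:ℝ)-2)*φ₂ - 2*c*(((n:ℝ)-1)*φ₁) + c^2) := by
        rw [Finset.sum_congr rfl fun i _ => hint_i i]
    _ = (1 / (n : ℝ)) * ((n:ℝ) *
          (((n:ℝ)-1)*φ₁ + ((n:ℝ)-1)*((n:ℝ)-2)*φ₂ - 2*c*(((n:ℝ)-1)*φ₁) + c^2)) := by
        rw [Finset.sum_const, Finset.card_univ, Fintype.card_fin, nsmul_eq_mul]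
    _ = (1 / (n : ℝ)) *
          ((n : ℝ) * ((n : ℝ) - 1) ^ 2 * φ01 ^ 2
            + (1 - 2 * ((n : ℝ) - 1) * φ01) * ((n : ℝ) * ((n : ℝ) - 1)) * φ₁
            + ((n : ℝ) * ((n : ℝ) - 1) * ((n : ℝ) - 2)) * φ₂) := by
        rw [hc]; ring
end
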